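/- arXiv:1903.08030 — 10 statements merged into one kernel-verified Lean document; each statement's English description precedes it below -/
import Mathlib

section
/- The vectors v_1, …, v_{2n+1} ∈ ℝ × ℂⁿ ≅ ℝ^{2n+1} are linearly independent over ℝ. -/
open Matrix Polynomial

lemma aux_disjoint_biSup {ι R V : Type*} [Ring R] [AddCommGroup V] [Module R V]
    [DecidableEq ι] (p : ι → Submodule R V) (h : iSupIndep p) (s t : Finset ι)
    (hst : ∀ i ∈ s, i ∉ t) :
    Disjoint (⨆ i ∈ s, p i) (⨆ i ∈ t, p i) := by
  rw [Submodule.disjoint_def]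
  intro x hxs hxt
  rw [Submodule.mem_iSup_finset_iff_exists_sum] at hxs hxt
  obtain ⟨μ, hμ⟩ := hxs
  obtain ⟨ν, hν⟩ := hxt
  have hkey : ∀ i ∈ s, (μ i : V) = 0 := by
    intro i hi
    have h2 : (μ i : V) ∈ ⨆ (j) (_ : j ≠ i), p j := by
      have heq : (μ i : V) = (∑ j ∈ t, (ν j : V)) - ∑ j ∈ s.erase i, (μ j : V) := by
        rw [hν, ← hμ, ← Finset.add_sum_erase _ _ hi]; abel
      rw [heq]
      refine sub_mem (Submodule.sum_mem _ fun j hj => ?_) (Submodule.sum_mem _ fun j hj => ?_)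
      · exact Submodule.mem_iSup_of_mem j
          (Submodule.mem_iSup_of_mem (fun h' => hst i hi (h' ▸ hj)) (ν j).2)
      · exact Submodule.mem_iSup_of_mem j
          (Submodule.mem_iSup_of_mem (Finset.ne_of_mem_erase hj) (μ j).2)
    exact Submodule.disjoint_def.mp (h i) _ (μ i).2 h2
  rw [← hμ]
  exact Finset.sum_eq_zero hkey


/-- **Lemma A** (Endo–Pajitnov, "On generalized Inoue manifolds").
Let `M ∈ SL(2n+1, ℤ)` whose characteristic polynomial over `ℂ` factors as
`(X - α) ∏ⱼ (X - βⱼ)(X - conj βⱼ)` with `α` real, positive, `≠ 1`, irrational and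
`Im βⱼ > 0`.  Let `a` be a real eigenvector of `M` for `α` and `b₁, …, bₙ` a `ℂ`-basis of
the sum `W` of the generalized eigenspaces of `M` for the `βⱼ`.  Then the vectors
`vᵢ = (a⁽ⁱ⁾, b₁⁽ⁱ⁾, …, bₙ⁽ⁱ⁾) ∈ ℝ × ℂⁿ` (`i = 1, …, 2n+1`) are linearly independent over `ℝ`. -/
theorem inoue_lemmaA
    (n : ℕ) (hn : 1 ≤ n)
    (M : Matrix (Fin (2*n+1)) (Fin (2*n+1)) ℤ) (hdet : M.det = 1)
    (α : ℝ) (hα0 : 0 < α) (hα1 : α ≠ 1) (hαirr : Irrational α)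
    (β : Fin n → ℂ) (hβ : ∀ j, 0 < (β j).im)
    (hchar : (M.map (Int.cast : ℤ → ℂ)).charpoly
      = (X - C (α : ℂ)) * ∏ j, ((X - C (β j)) * (X - C (starRingEnd ℂ (β j)))))
    (a : Fin (2*n+1) → ℝ) (ha0 : a ≠ 0)
    (ha : (M.map (Int.cast : ℤ → ℝ)).mulVec a = α • a)
    (b : Fin n → (Fin (2*n+1) → ℂ))
    (hbmem : ∀ j, b j ∈ ⨆ i, Module.End.maxGenEigenspace
        (Matrix.mulVecLin (M.map (Int.cast : ℤ → ℂ))) (β i))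
    (hbind : LinearIndependent ℂ b)
    (hbspan : Submodule.span ℂ (Set.range b)
      = ⨆ i, Module.End.maxGenEigenspace
        (Matrix.mulVecLin (M.map (Int.cast : ℤ → ℂ))) (β i)) :
    LinearIndependent ℝ
      (fun i : Fin (2*n+1) => ((a i, fun j => b j i) : ℝ × (Fin n → ℂ))) := by
  classical
  rw [Fintype.linearIndependent_iff]
  intro c hc
  set Mc := M.map (Int.cast : ℤ → ℂ) with hMc
  set f := Matrix.mulVecLin Mc with hf
  set t := Module.End.maxGenEigenspace f with ht
  -- conjugation
  set cj : (Fin (2*n+1) → ℂ) → (Fin (2*n+1) → ℂ) := fun x i => (starRingEnd ℂ) (x i) with hcj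
  have hcj_add : ∀ x y, cj (x + y) = cj x + cj y := by
    intro x y; funext i; simp [hcj]
  have hcj_smul : ∀ (z : ℂ) x, cj (z • x) = (starRingEnd ℂ z) • cj x := by
    intro z x; funext i; simp [hcj]
  have hcj_cj : ∀ x, cj (cj x) = x := by
    intro x; funext i; simp [hcj]
  have hcj_zero : cj 0 = 0 := by funext i; simp [hcj]
  have hcj_f : ∀ x, f (cj x) = cj (f x) := by
    intro x; funext i
    simp only [hf, Matrix.mulVecLin_apply, Matrix.mulVec, dotProduct, hcj, map_sum]
    refine Finset.sum_congr rfl fun j _ => ?_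
    simp [hMc, Matrix.map_apply, _root_.map_mul]
  -- conj membership in maxGenEigenspace
  have hcj_pow : ∀ (μ : ℂ) (k : ℕ) (x : Fin (2*n+1) → ℂ),
      ((f - (starRingEnd ℂ μ) • 1) ^ k) (cj x) = cj (((f - μ • 1) ^ k) x) := by
    intro μ k
    induction k with
    | zero => intro x; simp
    | succ k ih =>
      intro x
      rw [pow_succ', pow_succ']
      rw [Module.End.mul_apply, Module.End.mul_apply]
      have h1 : ∀ y, (f - (starRingEnd ℂ μ) • 1) (cj y) = cj ((f - μ • 1) y) := by
        intro y
        simp only [LinearMap.sub_apply, LinearMap.smul_apply, Module.End.one_apply]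
        rw [hcj_f, ← hcj_smul]
        funext i
        simp [hcj]
      rw [ih, h1]
  have hcj_mem : ∀ (μ : ℂ) (x : Fin (2*n+1) → ℂ), x ∈ t μ → cj x ∈ t (starRingEnd ℂ μ) := by
    intro μ x hx
    rw [ht, Module.End.mem_maxGenEigenspace] at hx ⊢
    obtain ⟨k, hk⟩ := hx
    exact ⟨k, by rw [hcj_pow, hk]; funext i; simp [hcj]⟩
  -- the complexified eigenvector
  set aC : Fin (2*n+1) → ℂ := fun i => ((a i : ℝ) : ℂ) with haC
  have haC0 : aC ≠ 0 := by
    intro h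
    apply ha0
    funext i
    have := congrFun h i
    simpa [haC] using this
  have hfaC : f aC = (α : ℂ) • aC := by
    funext i
    have := congrFun ha i
    simp only [Matrix.mulVec, dotProduct, Matrix.map_apply, Pi.smul_apply,
      smul_eq_mul] at this
    simp only [hf, Matrix.mulVecLin_apply, Matrix.mulVec, dotProduct, hMc,
      Matrix.map_apply, haC, Pi.smul_apply, smul_eq_mul]
    exact_mod_cast congrArg (fun r : ℝ => (r : ℂ)) this
  have haCmem : aC ∈ t (α : ℂ) := by
    rw [ht, Module.End.mem_maxGenEigenspace]
    refine ⟨1, ?_⟩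
    simp [hfaC, sub_eq_zero]
  -- distinctness of eigenvalues
  have hαβ : ∀ j, (α : ℂ) ≠ β j := by
    intro j h
    have := hβ j
    rw [← h] at this
    simp at this
  have hαβ' : ∀ j, (α : ℂ) ≠ starRingEnd ℂ (β j) := by
    intro j h
    have h2 := congrArg Complex.im h
    simp at h2
    linarith [hβ j]
  have hββ' : ∀ i j, β i ≠ starRingEnd ℂ (β j) := by
    intro i j h
    have h2 := congrArg Complex.im h
    simp at h2
    linarith [hβ i, hβ j]
  -- classification of eigenvalues
  have hclass : ∀ μ : ℂ, t μ ≠ ⊥ →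
      μ = (α : ℂ) ∨ (∃ j, μ = β j) ∨ (∃ j, μ = starRingEnd ℂ (β j)) := by
    intro μ hμ
    have hev : Module.End.HasEigenvalue f μ := by
      obtain ⟨x, hx, hx0⟩ := Submodule.exists_mem_ne_zero_of_ne_bot hμ
      rw [ht, Module.End.mem_maxGenEigenspace] at hx
      obtain ⟨k, hk⟩ := hx
      have hgen : Module.End.HasGenEigenvalue f μ k :=
        (Submodule.ne_bot_iff _).mpr ⟨x, Module.End.mem_genEigenspace_nat.mpr hk, hx0⟩
      exact Module.End.hasEigenvalue_of_hasGenEigenvalue hgen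
    have hroot : (Mc.charpoly).IsRoot μ := by
      have h1 : (minpoly ℂ f).IsRoot μ := Module.End.isRoot_of_hasEigenvalue hev
      have h2 : minpoly ℂ f = minpoly ℂ Mc := by
        rw [hf, ← Matrix.toLin'_apply', Matrix.minpoly_toLin']
      have h3 : minpoly ℂ Mc ∣ Mc.charpoly :=
        minpoly.dvd ℂ Mc (Matrix.aeval_self_charpoly Mc)
      rw [h2] at h1
      exact h1.dvd h3
    rw [hMc, hchar] at hroot
    simp only [Polynomial.IsRoot, Polynomial.eval_mul, Polynomial.eval_prod,
      Polynomial.eval_sub, Polynomial.eval_X, Polynomial.eval_C, mul_eq_zero,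
      Finset.prod_eq_zero_iff, sub_eq_zero] at hroot
    rcases hroot with h | h
    · exact Or.inl h
    · obtain ⟨j, _, hj⟩ := h
      rcases hj with h | h
      · exact Or.inr (Or.inl ⟨j, h⟩)
      · exact Or.inr (Or.inr ⟨j, h⟩)
  -- the two sums of generalized eigenspaces
  set W : Submodule ℂ (Fin (2*n+1) → ℂ) := ⨆ j, t (β j) with hW
  set W' : Submodule ℂ (Fin (2*n+1) → ℂ) := ⨆ j, t (starRingEnd ℂ (β j)) with hW'
  have hspan : Submodule.span ℂ (Set.range b) = W := hbspan
  have hcj_W : ∀ x ∈ W, cj x ∈ W' := by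
    intro x hx
    refine Submodule.iSup_induction (motive := fun y => cj y ∈ W') _ hx
      (fun j y hy => ?_) (by show cj 0 ∈ W'; rw [hcj_zero]; exact Submodule.zero_mem W')
      (fun y z hy hz => ?_)
    · exact Submodule.mem_iSup_of_mem j (hcj_mem _ _ hy)
    · show cj (y + z) ∈ W'
      rw [hcj_add]; exact Submodule.add_mem _ hy hz
  have hcj_W' : ∀ x ∈ W', cj x ∈ W := by
    intro x hx
    refine Submodule.iSup_induction (motive := fun y => cj y ∈ W) _ hx
      (fun j y hy => ?_) (by show cj 0 ∈ W; rw [hcj_zero]; exact Submodule.zero_mem W)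
      (fun y z hy hz => ?_)
    · refine Submodule.mem_iSup_of_mem j ?_
      have := hcj_mem _ _ hy
      rwa [Complex.conj_conj] at this
    · show cj (y + z) ∈ W
      rw [hcj_add]; exact Submodule.add_mem _ hy hz
  have hcj_spanb : ∀ x ∈ Submodule.span ℂ (Set.range b),
      cj x ∈ Submodule.span ℂ (Set.range (fun j => cj (b j))) := by
    intro x hx
    induction hx using Submodule.span_induction with
    | mem y hy =>
      obtain ⟨j, rfl⟩ := hy
      exact Submodule.subset_span ⟨j, rfl⟩
    | zero => show cj 0 ∈ _; rw [hcj_zero]; exact Submodule.zero_mem _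
    | add y z hy hz ihy ihz => rw [hcj_add]; exact Submodule.add_mem _ ihy ihz
    | smul z y hy ihy => rw [hcj_smul]; exact Submodule.smul_mem _ _ ihy
  have hW'span : W' = Submodule.span ℂ (Set.range (fun j => cj (b j))) := by
    apply le_antisymm
    · intro x hx
      have h1 : cj x ∈ W := hcj_W' x hx
      rw [← hspan] at h1
      have h2 := hcj_spanb _ h1
      rwa [hcj_cj] at h2
    · rw [Submodule.span_le]
      rintro y ⟨j, rfl⟩
      exact hcj_W _ (by rw [← hspan]; exact Submodule.subset_span ⟨j, rfl⟩)
  have hcj_sum : ∀ (g : Fin n → (Fin (2*n+1) → ℂ)),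
      cj (∑ j, g j) = ∑ j, cj (g j) := by
    intro g
    funext i
    simp [hcj, Finset.sum_apply]
  have hbind' : LinearIndependent ℂ (fun j => cj (b j)) := by
    rw [Fintype.linearIndependent_iff]
    intro d hd j
    have h1 := congrArg cj hd
    rw [hcj_sum] at h1
    simp_rw [hcj_smul, hcj_cj] at h1
    have h2 : cj (0 : Fin (2*n+1) → ℂ) = 0 := by funext i; simp [hcj]
    rw [h2] at h1
    have := Fintype.linearIndependent_iff.mp hbind _ h1 j
    simpa using congrArg (starRingEnd ℂ) this
  have hfrW : Module.finrank ℂ W = n := by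
    rw [← hspan, finrank_span_eq_card hbind, Fintype.card_fin]
  have hfrW' : Module.finrank ℂ W' = n := by
    rw [hW'span, finrank_span_eq_card hbind', Fintype.card_fin]
  -- disjointness
  have hindep : iSupIndep t := Module.End.independent_maxGenEigenspace f
  set sβ : Finset ℂ := Finset.image β Finset.univ with hsβ
  set sβ' : Finset ℂ := Finset.image (fun j => starRingEnd ℂ (β j)) Finset.univ with hsβ'
  have hWle : W ≤ ⨆ μ ∈ sβ, t μ := by
    refine iSup_le fun j => ?_
    exact le_iSup₂ (f := fun μ (_ : μ ∈ sβ) => t μ) (β j)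
      (Finset.mem_image_of_mem β (Finset.mem_univ j))
  have hW'le : W' ≤ ⨆ μ ∈ sβ', t μ := by
    refine iSup_le fun j => ?_
    exact le_iSup₂ (f := fun μ (_ : μ ∈ sβ') => t μ) (starRingEnd ℂ (β j))
      (Finset.mem_image_of_mem _ (Finset.mem_univ j))
  have hdisjWW' : Disjoint W W' := by
    refine Disjoint.mono hWle hW'le ?_
    refine aux_disjoint_biSup t hindep sβ sβ' ?_
    intro μ hμ hμ'
    rw [hsβ, Finset.mem_image] at hμ
    rw [hsβ', Finset.mem_image] at hμ'
    obtain ⟨i, _, rfl⟩ := hμ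
    obtain ⟨j, _, hj⟩ := hμ'
    exact hββ' i j hj.symm
  have hdisjα : Disjoint (t (α : ℂ)) (W ⊔ W') := by
    have h1 : W ⊔ W' ≤ ⨆ μ ∈ (↑(sβ ∪ sβ') : Set ℂ), t μ := by
      refine sup_le (le_trans hWle ?_) (le_trans hW'le ?_) <;>
        refine iSup₂_le fun μ hμ => le_iSup₂ (f := fun μ (_ : μ ∈ (↑(sβ ∪ sβ') : Set ℂ)) => t μ) μ ?_
      · exact Finset.mem_coe.mpr (Finset.mem_union_left _ hμ)
      · exact Finset.mem_coe.mpr (Finset.mem_union_right _ hμ)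
    refine Disjoint.mono_right h1 ?_
    refine hindep.disjoint_biSup ?_
    intro hmem
    rw [Finset.mem_coe, Finset.mem_union] at hmem
    rcases hmem with h | h
    · rw [hsβ, Finset.mem_image] at h
      obtain ⟨j, _, hj⟩ := h
      exact hαβ j hj.symm
    · rw [hsβ', Finset.mem_image] at h
      obtain ⟨j, _, hj⟩ := h
      exact hαβ' j hj.symm
  -- the whole space decomposes
  have htop : t (α : ℂ) ⊔ (W ⊔ W') = ⊤ := by
    refine le_antisymm le_top ?_
    rw [← Module.End.iSup_maxGenEigenspace_eq_top f]
    refine iSup_le fun μ => ?_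
    by_cases hμ : t μ = ⊥
    · rw [show Module.End.maxGenEigenspace f μ = t μ from rfl, hμ]; exact bot_le
    · rcases hclass μ hμ with h | ⟨j, h⟩ | ⟨j, h⟩
      · rw [show Module.End.maxGenEigenspace f μ = t μ from rfl, h]
        exact le_sup_left
      · rw [show Module.End.maxGenEigenspace f μ = t μ from rfl, h]
        rw [hW]
        exact le_trans (le_iSup (fun j => t (β j)) j) (le_trans le_sup_left le_sup_right)
      · rw [show Module.End.maxGenEigenspace f μ = t μ from rfl, h]
        rw [hW']
        exact le_trans (le_iSup (fun j => t (starRingEnd ℂ (β j))) j)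
          (le_trans le_sup_right le_sup_right)
  -- finrank computations
  have hfrWW' : Module.finrank ℂ (W ⊔ W' : Submodule ℂ _) = 2*n := by
    have h1 := Submodule.finrank_sup_add_finrank_inf_eq W W'
    rw [hdisjWW'.eq_bot, finrank_bot, hfrW, hfrW'] at h1
    omega
  have hfrtop : Module.finrank ℂ (⊤ : Submodule ℂ (Fin (2*n+1) → ℂ)) = 2*n+1 := by
    rw [finrank_top, Module.finrank_pi, Fintype.card_fin]
  have hfrα : Module.finrank ℂ (t (α : ℂ)) = 1 := by
    have h1 := Submodule.finrank_sup_add_finrank_inf_eq (t (α : ℂ)) (W ⊔ W')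
    rw [hdisjα.eq_bot, finrank_bot, htop, hfrtop, hfrWW'] at h1
    omega
  have htα : t (α : ℂ) = Submodule.span ℂ {aC} := by
    have hle : Submodule.span ℂ {aC} ≤ t (α : ℂ) :=
      (Submodule.span_singleton_le_iff_mem _ _).mpr haCmem
    refine (Submodule.eq_of_le_of_finrank_le hle ?_).symm
    rw [hfrα, finrank_span_singleton haC0]
  -- components of the dependence relation
  have hca : ∑ i, c i * a i = 0 := by
    have h1 := congrArg Prod.fst hc
    simpa [Prod.fst_sum] using h1
  have hcb : ∀ j, ∑ i, (c i : ℂ) * b j i = 0 := by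
    intro j
    have h1 := congrFun (congrArg Prod.snd hc) j
    simpa [Prod.snd_sum, Finset.sum_apply, Complex.real_smul] using h1
  -- the linear functional
  set φ : (Fin (2*n+1) → ℂ) →ₗ[ℂ] ℂ :=
    { toFun := fun x => ∑ i, (c i : ℂ) * x i,
      map_add' := by intro x y; simp [mul_add, Finset.sum_add_distrib],
      map_smul' := by
        intro z x
        simp only [Pi.smul_apply, smul_eq_mul, RingHom.id_apply]
        rw [Finset.mul_sum]
        exact Finset.sum_congr rfl fun i _ => by ring } with hφ
  have hφapp : ∀ x, φ x = ∑ i, (c i : ℂ) * x i := fun x => rfl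
  have hφaC : φ aC = 0 := by
    rw [hφapp]
    simp only [haC]
    exact_mod_cast congrArg (fun r : ℝ => (r : ℂ)) hca
  have hφb : ∀ j, φ (b j) = 0 := fun j => hcb j
  have hφcj : ∀ x, φ x = starRingEnd ℂ (φ (cj x)) := by
    intro x
    rw [hφapp, hφapp, map_sum]
    refine Finset.sum_congr rfl fun i _ => ?_
    simp [hcj]
  have hWK : W ≤ LinearMap.ker φ := by
    rw [← hspan, Submodule.span_le]
    rintro y ⟨j, rfl⟩
    exact LinearMap.mem_ker.mpr (hφb j)
  have hKtop : (⊤ : Submodule ℂ (Fin (2*n+1) → ℂ)) ≤ LinearMap.ker φ := by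
    rw [← htop]
    refine sup_le ?_ (sup_le hWK ?_)
    · rw [htα, Submodule.span_singleton_le_iff_mem]
      exact LinearMap.mem_ker.mpr hφaC
    · rw [hW']
      refine iSup_le fun j => ?_
      intro x hx
      have h1 : cj x ∈ t (β j) := by
        have := hcj_mem _ _ hx
        rwa [Complex.conj_conj] at this
      have h2 : cj x ∈ W := by rw [hW]; exact Submodule.mem_iSup_of_mem j h1
      have h3 : φ (cj x) = 0 := LinearMap.mem_ker.mp (hWK h2)
      rw [LinearMap.mem_ker, hφcj x, h3]
      simp
  have hφ0 : ∀ x, φ x = 0 := fun x => LinearMap.mem_ker.mp (hKtop Submodule.mem_top)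
  intro i
  have h1 := hφ0 (Pi.single i 1)
  rw [hφapp] at h1
  simp only [Pi.single_apply, mul_ite, mul_one, mul_zero, Finset.sum_ite_eq',
    Finset.mem_univ, if_true] at h1
  exact_mod_cast h1
end

section
/- For every i ∈ {1, …, 2n+1} and every point p = (w, z) ∈ ℂ × ℂⁿ, one has g₀(p + u_i) = g₀(p) + Σ_{j=1}^{2n+1} m_{ij} u_j. Equivalently, g₀ g_i g₀^{-1} = g₁^{m_{i1}} ⋯ g_{2n+1}^{m_{i,2n+1}} as transformations; in particular H_M is a normal subgroup of G_M. -/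
open Matrix Polynomial

/-- The translation vectors `uᵢ = (a⁽ⁱ⁾, b₁⁽ⁱ⁾, …, bₙ⁽ⁱ⁾) ∈ ℂ × ℂⁿ`. -/
def inoueU (n : ℕ) (a : Fin (2*n+1) → ℝ) (b : Fin n → (Fin (2*n+1) → ℂ))
    (i : Fin (2*n+1)) : ℂ × (Fin n → ℂ) :=
  ((a i : ℂ), fun j => b j i)

/-- **Lemma C** (Endo–Pajitnov).  With `g₀(w, z) = (α w, Rᵀ z)` and `gᵢ = (translation by uᵢ)`,
for every `i` and every point `p ∈ ℂ × ℂⁿ` one has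
`g₀(p + uᵢ) = g₀(p) + ∑ⱼ m_{ij} uⱼ`; equivalently
`g₀ gᵢ g₀⁻¹ = g₁^{m_{i1}} ⋯ g_{2n+1}^{m_{i,2n+1}}`; in particular `H_M ⊴ G_M`. -/
theorem inoue_lemmaC
    (n : ℕ) (hn : 1 ≤ n)
    (M : Matrix (Fin (2*n+1)) (Fin (2*n+1)) ℤ) (hdet : M.det = 1)
    (α : ℝ) (hα0 : 0 < α) (hα1 : α ≠ 1) (hαirr : Irrational α)
    (β : Fin n → ℂ) (hβ : ∀ j, 0 < (β j).im)
    (hchar : (M.map (Int.cast : ℤ → ℂ)).charpoly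
      = (X - C (α : ℂ)) * ∏ j, ((X - C (β j)) * (X - C (starRingEnd ℂ (β j)))))
    (a : Fin (2*n+1) → ℝ) (ha0 : a ≠ 0)
    (ha : (M.map (Int.cast : ℤ → ℝ)).mulVec a = α • a)
    (b : Fin n → (Fin (2*n+1) → ℂ))
    (hbmem : ∀ j, b j ∈ ⨆ i, Module.End.maxGenEigenspace
        (Matrix.mulVecLin (M.map (Int.cast : ℤ → ℂ))) (β i))
    (hbind : LinearIndependent ℂ b)
    (hbspan : Submodule.span ℂ (Set.range b)
      = ⨆ i, Module.End.maxGenEigenspace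
        (Matrix.mulVecLin (M.map (Int.cast : ℤ → ℂ))) (β i))
    (R : Matrix (Fin n) (Fin n) ℂ)
    (hR : ∀ j, (M.map (Int.cast : ℤ → ℂ)).mulVec (b j) = ∑ ℓ, R ℓ j • b ℓ)
    (g₀ : Equiv.Perm (ℂ × (Fin n → ℂ)))
    (hg₀ : ∀ p : ℂ × (Fin n → ℂ), g₀ p = ((α : ℂ) * p.1, Rᵀ.mulVec p.2)) :
    (∀ (i : Fin (2*n+1)) (p : ℂ × (Fin n → ℂ)),
        g₀ (p + inoueU n a b i) = g₀ p + ∑ j, M i j • inoueU n a b j)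
      ∧ (∀ i : Fin (2*n+1),
          g₀ * Equiv.addRight (inoueU n a b i) * g₀⁻¹
            = Equiv.addRight (∑ j, M i j • inoueU n a b j))
      ∧ (∀ g ∈ Subgroup.closure
            ({g₀} ∪ Set.range fun i : Fin (2*n+1) => Equiv.addRight (inoueU n a b i)),
          ∀ h ∈ Subgroup.closure
            (Set.range fun i : Fin (2*n+1) => Equiv.addRight (inoueU n a b i)),
          g * h * g⁻¹ ∈ Subgroup.closure
            (Set.range fun i : Fin (2*n+1) => Equiv.addRight (inoueU n a b i))) := by

  classical
  set u : Fin (2*n+1) → ℂ × (Fin n → ℂ) := inoueU n a b with hu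
  set L : ℂ × (Fin n → ℂ) → ℂ × (Fin n → ℂ) := fun v => ((α : ℂ) * v.1, Rᵀ.mulVec v.2)
    with hLdef
  -- g₀ is affine with linear part L (in fact linear)
  have hadd : ∀ p v : ℂ × (Fin n → ℂ), g₀ (p + v) = g₀ p + L v := by
    intro p v
    rw [hg₀, hg₀]
    refine Prod.ext ?_ ?_
    · simp [mul_add, hLdef]
    · simp [Matrix.mulVec_add, hLdef]
  -- L is additive and ℤ-linear
  have hL0 : L 0 = 0 := by simp [hLdef]
  have hLadd : ∀ x y, L (x + y) = L x + L y := by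
    intro x y
    refine Prod.ext ?_ ?_
    · simp [hLdef, mul_add]
    · simp [hLdef, Matrix.mulVec_add]
  have hLsmul : ∀ (c : ℤ) x, L (c • x) = c • L x := by
    intro c x
    rw [← Int.cast_smul_eq_zsmul ℂ, ← Int.cast_smul_eq_zsmul ℂ]
    refine Prod.ext ?_ ?_
    · simp [hLdef, smul_eq_mul]; ring
    · simp [hLdef, Matrix.mulVec_smul]
  have hLsum : ∀ (c : Fin (2*n+1) → ℤ) (f : Fin (2*n+1) → ℂ × (Fin n → ℂ)),
      L (∑ j, c j • f j) = ∑ j, c j • L (f j) := by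
    intro c f
    induction (Finset.univ : Finset (Fin (2*n+1))) using Finset.induction with
    | empty => simpa using hL0
    | @insert x s hx ih =>
        rw [Finset.sum_insert hx, Finset.sum_insert hx, hLadd, hLsmul, ih]
  -- sums of integer multiples of the uᵢ, componentwise
  have hsumu : ∀ c : Fin (2*n+1) → ℤ,
      (∑ j, c j • u j)
        = ((∑ j, (c j : ℂ) * (a j : ℂ)), fun ℓ => ∑ j, (c j : ℂ) * b ℓ j) := by
    intro c
    refine Prod.ext ?_ ?_
    · rw [Prod.fst_sum]
      refine Finset.sum_congr rfl fun j _ => ?_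
      rw [← Int.cast_smul_eq_zsmul ℂ]
      simp [hu, inoueU, smul_eq_mul]
    · funext ℓ
      rw [Prod.snd_sum, Finset.sum_apply]
      refine Finset.sum_congr rfl fun j _ => ?_
      rw [← Int.cast_smul_eq_zsmul ℂ]
      simp [hu, inoueU, smul_eq_mul]
  -- key computation on generators
  have key0 : ∀ i, L (u i) = ∑ j, M i j • u j := by
    intro i
    rw [hsumu]
    have ha' : (∑ j, (M i j : ℝ) * a j) = α * a i := by
      have h1 := congrFun ha i
      simpa [Matrix.mulVec, Matrix.map_apply, dotProduct, Pi.smul_apply] using h1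
    refine Prod.ext ?_ ?_
    · show (α : ℂ) * (a i : ℂ) = ∑ j, (M i j : ℂ) * (a j : ℂ)
      have h3 : ((α * a i : ℝ) : ℂ) = ((∑ j, (M i j : ℝ) * a j : ℝ) : ℂ) := by rw [ha']
      push_cast at h3
      exact h3
    · funext ℓ
      show Rᵀ.mulVec (fun j => b j i) ℓ = ∑ j, (M i j : ℂ) * b ℓ j
      have h2 := congrFun (hR ℓ) i
      simp only [Matrix.mulVec, dotProduct, Matrix.map_apply, Finset.sum_apply,
        Pi.smul_apply, smul_eq_mul] at h2
      simp only [Matrix.mulVec, dotProduct, Matrix.transpose_apply]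
      exact h2.symm
  have part1 : ∀ (i : Fin (2*n+1)) (p : ℂ × (Fin n → ℂ)),
      g₀ (p + u i) = g₀ p + ∑ j, M i j • u j := by
    intro i p; rw [hadd, key0]
  -- conjugation of a general translation
  have key2 : ∀ v : ℂ × (Fin n → ℂ),
      g₀ * Equiv.addRight v * g₀⁻¹ = Equiv.addRight (L v) := by
    intro v
    refine Equiv.ext fun p => ?_
    simp only [Equiv.Perm.coe_mul, Function.comp_apply, Equiv.coe_addRight]
    rw [hadd, ← Equiv.Perm.mul_apply, mul_inv_cancel, Equiv.Perm.one_apply]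
  have part2 : ∀ i : Fin (2*n+1),
      g₀ * Equiv.addRight (u i) * g₀⁻¹ = Equiv.addRight (∑ j, M i j • u j) := by
    intro i; rw [key2, key0]
  -- translations coming from the lattice lie in H
  set S : Set (Equiv.Perm (ℂ × (Fin n → ℂ))) :=
    Set.range fun i : Fin (2*n+1) => Equiv.addRight (u i) with hS
  set H : Subgroup (Equiv.Perm (ℂ × (Fin n → ℂ))) := Subgroup.closure S with hH
  have tadd : ∀ x y : ℂ × (Fin n → ℂ),
      Equiv.addRight (x + y) = Equiv.addRight x * Equiv.addRight y := by
    intro x y; refine Equiv.ext fun p => ?_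
    simp only [Equiv.coe_addRight, Equiv.Perm.coe_mul, Function.comp_apply]
    abel
  have tzero : Equiv.addRight (0 : ℂ × (Fin n → ℂ)) = 1 := by
    refine Equiv.ext fun p => ?_; simp
  have tneg : ∀ x : ℂ × (Fin n → ℂ), Equiv.addRight (-x) = (Equiv.addRight x)⁻¹ := by
    intro x
    refine eq_inv_of_mul_eq_one_left ?_
    rw [← tadd, neg_add_cancel, tzero]
  have hT : ∀ v ∈ AddSubgroup.closure (Set.range u), Equiv.addRight v ∈ H := by
    intro v hv
    refine AddSubgroup.closure_induction ?_ ?_ ?_ ?_ hv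
    · rintro x ⟨i, rfl⟩
      exact Subgroup.subset_closure ⟨i, rfl⟩
    · rw [tzero]; exact one_mem H
    · intro x y _ _ hx hy
      rw [tadd]; exact mul_mem hx hy
    · intro x _ hx
      rw [tneg]; exact inv_mem hx
  have hsum : ∀ c : Fin (2*n+1) → ℤ,
      (∑ j, c j • u j) ∈ AddSubgroup.closure (Set.range u) := by
    intro c
    exact AddSubgroup.sum_mem _ fun j _ =>
      AddSubgroup.zsmul_mem _ (AddSubgroup.subset_closure (Set.mem_range_self j)) _
  have hconj : ∀ i, g₀ * Equiv.addRight (u i) * g₀⁻¹ ∈ H := by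
    intro i; rw [part2 i]; exact hT _ (hsum _)
  -- reverse conjugation via the adjugate matrix
  have hconj' : ∀ i, g₀⁻¹ * Equiv.addRight (u i) * g₀ ∈ H := by
    intro i
    have hNM : M.adjugate * M = 1 := by
      rw [Matrix.adjugate_mul, hdet, one_smul]
    have hw : L (∑ j, M.adjugate i j • u j) = u i := by
      rw [hLsum]
      have : ∀ j, L (u j) = ∑ k, M j k • u k := key0
      calc ∑ j, M.adjugate i j • L (u j)
          = ∑ j, ∑ k, (M.adjugate i j * M j k) • u k := by
            refine Finset.sum_congr rfl fun j _ => ?_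
            rw [this j, Finset.smul_sum]
            exact Finset.sum_congr rfl fun k _ => (smul_smul _ _ _)
        _ = ∑ k, (∑ j, M.adjugate i j * M j k) • u k := by
            rw [Finset.sum_comm]
            exact Finset.sum_congr rfl fun k _ => (Finset.sum_smul).symm
        _ = ∑ k, ((1 : Matrix (Fin (2*n+1)) (Fin (2*n+1)) ℤ) i k) • u k := by
            refine Finset.sum_congr rfl fun k _ => ?_
            rw [← Matrix.mul_apply, hNM]
        _ = u i := by
            simp [Matrix.one_apply, ite_smul]
    have heq : Equiv.addRight (u i)
        = g₀ * Equiv.addRight (∑ j, M.adjugate i j • u j) * g₀⁻¹ := by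
      rw [key2, hw]
    rw [heq]
    have hmem : Equiv.addRight (∑ j, M.adjugate i j • u j) ∈ H := hT _ (hsum _)
    have : g₀⁻¹ * (g₀ * Equiv.addRight (∑ j, M.adjugate i j • u j) * g₀⁻¹) * g₀
        = Equiv.addRight (∑ j, M.adjugate i j • u j) := by group
    rw [this]; exact hmem
  -- conjugation stability
  have normal : ∀ x : Equiv.Perm (ℂ × (Fin n → ℂ)),
      (∀ i, x * Equiv.addRight (u i) * x⁻¹ ∈ H) → ∀ h ∈ H, x * h * x⁻¹ ∈ H := by
    intro x hx h hh
    have hmap : Subgroup.map (MulAut.conj x).toMonoidHom H ≤ H := by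
      rw [hH, MonoidHom.map_closure]
      refine (Subgroup.closure_le _).2 ?_
      rintro _ ⟨_, ⟨i, rfl⟩, rfl⟩
      simpa [MulAut.conj_apply] using hx i
    have h4 := hmap (Subgroup.mem_map_of_mem (MulAut.conj x).toMonoidHom hh)
    simpa [MulAut.conj_apply] using h4
  refine ⟨part1, part2, ?_⟩
  -- g₀ is in the normalizer of H
  have hg₀norm : g₀ ∈ Subgroup.normalizer (H : Set (Equiv.Perm (ℂ × (Fin n → ℂ)))) := by
    rw [Subgroup.mem_normalizer_iff]
    intro h
    constructor
    · intro hh; exact normal g₀ hconj h hh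
    · intro hh
      have h2 := normal g₀⁻¹ (by intro i; simpa using hconj' i) _ hh
      simpa [mul_assoc] using h2
  have hsub : ({g₀} ∪ S : Set (Equiv.Perm (ℂ × (Fin n → ℂ)))) ⊆ Subgroup.normalizer (H : Set (Equiv.Perm (ℂ × (Fin n → ℂ)))) := by
    rintro x (rfl | hx)
    · exact hg₀norm
    · exact Subgroup.le_normalizer (Subgroup.subset_closure hx)
  intro g hg h hh
  have hgn : g ∈ Subgroup.normalizer (H : Set (Equiv.Perm (ℂ × (Fin n → ℂ)))) := (Subgroup.closure_le _).2 hsub hg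
  exact (Subgroup.mem_normalizer_iff.1 hgn h).1 hh
end

section
/- The group H_M is free abelian of rank 2n+1: the map ℤ^{2n+1} → H_M sending (m₁, …, m_{2n+1}) to the translation by Σ_i m_i u_i is a group isomorphism onto H_M. -/
open Matrix Polynomial

private lemma aux_killzero {V : Type*} [AddCommGroup V] [Module ℂ V]
    (f : Module.End ℂ V) {p q : ℂ[X]} (h : IsCoprime p q) {x : V}
    (hp : (aeval f p) x = 0) (hq : (aeval f q) x = 0) : x = 0 := by
  obtain ⟨s, t, hst⟩ := h
  have h2 := congrArg (fun r : ℂ[X] => (aeval f r) x) hst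
  simpa [_root_.map_add, _root_.map_mul, Module.End.mul_apply, LinearMap.add_apply, hp, hq] using h2.symm

private lemma aux_kill_iSup {V : Type*} [AddCommGroup V] [Module ℂ V] [FiniteDimensional ℂ V]
    (f : Module.End ℂ V) {N : ℕ} (μ : Fin N → ℂ) {x : V}
    (hx : x ∈ ⨆ i, f.maxGenEigenspace (μ i)) :
    (aeval f (∏ i, (X - C (μ i)) ^ (Module.finrank ℂ V))) x = 0 := by
  refine Submodule.iSup_induction _ (motive := fun y => (aeval f (∏ i, (X - C (μ i)) ^ (Module.finrank ℂ V))) y = 0) hx ?_ (by simp) ?_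
  · intro i y hy
    have h1 : ((f - μ i • 1) ^ (Module.finrank ℂ V)) y = 0 := by
      rw [Module.End.maxGenEigenspace_eq_genEigenspace_finrank] at hy
      exact Module.End.mem_genEigenspace_nat.mp hy
    have key : (aeval f ((X - C (μ i)) ^ (Module.finrank ℂ V))) = (f - μ i • 1) ^ (Module.finrank ℂ V) := by
      rw [map_pow, map_sub, aeval_X, aeval_C, Module.algebraMap_end_eq_smul_id]
      rfl
    rw [← Finset.prod_erase_mul Finset.univ _ (Finset.mem_univ i), _root_.map_mul,
      Module.End.mul_apply, key, h1, map_zero]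
  · intro y z hy hz
    rw [map_add, hy, hz, add_zero]

private lemma aux_conj_mulVec {d : ℕ} (A : Matrix (Fin d) (Fin d) ℤ) (x : Fin d → ℂ) :
    (A.map (Int.cast : ℤ → ℂ)).mulVecLin (fun i => (starRingEnd ℂ) (x i))
      = fun i => (starRingEnd ℂ) ((A.map (Int.cast : ℤ → ℂ)).mulVecLin x i) := by
  funext i
  simp [Matrix.mulVecLin_apply, Matrix.mulVec, dotProduct, Matrix.map_apply,
    map_sum, _root_.map_mul]

private lemma aux_conj_pow {d : ℕ} (A : Matrix (Fin d) (Fin d) ℤ) (k : ℕ) (x : Fin d → ℂ) :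
    ((A.map (Int.cast : ℤ → ℂ)).mulVecLin ^ k) (fun i => (starRingEnd ℂ) (x i))
      = fun i => (starRingEnd ℂ) (((A.map (Int.cast : ℤ → ℂ)).mulVecLin ^ k) x i) := by
  induction k generalizing x with
  | zero => simp
  | succ k ih =>
    rw [pow_succ, Module.End.mul_apply, Module.End.mul_apply, aux_conj_mulVec,
      ih ((A.map (Int.cast : ℤ → ℂ)).mulVecLin x)]

private lemma aux_conj_aeval {d : ℕ} (A : Matrix (Fin d) (Fin d) ℤ) (p : ℂ[X]) (x : Fin d → ℂ) :
    (aeval ((A.map (Int.cast : ℤ → ℂ)).mulVecLin) (p.map (starRingEnd ℂ)))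
        (fun i => (starRingEnd ℂ) (x i))
      = fun i => (starRingEnd ℂ) ((aeval ((A.map (Int.cast : ℤ → ℂ)).mulVecLin) p) x i) := by
  induction p using Polynomial.induction_on' with
  | add p q hp hq =>
    rw [Polynomial.map_add, _root_.map_add, _root_.map_add, LinearMap.add_apply,
      LinearMap.add_apply, hp, hq]
    funext i
    simp
  | monomial k c =>
    rw [Polynomial.map_monomial, aeval_monomial, aeval_monomial, Module.End.mul_apply,
      Module.End.mul_apply, Module.algebraMap_end_apply, Module.algebraMap_end_apply,
      aux_conj_pow]
    funext i
    simp [_root_.map_mul]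

private lemma aux_ker
    (n : ℕ)
    (M : Matrix (Fin (2*n+1)) (Fin (2*n+1)) ℤ)
    (α : ℝ)
    (β : Fin n → ℂ) (hβ : ∀ j, 0 < (β j).im)
    (a : Fin (2*n+1) → ℝ) (ha0 : a ≠ 0)
    (ha : (M.map (Int.cast : ℤ → ℝ)).mulVec a = α • a)
    (b : Fin n → (Fin (2*n+1) → ℂ))
    (hbmem : ∀ j, b j ∈ ⨆ i, Module.End.maxGenEigenspace
        (Matrix.mulVecLin (M.map (Int.cast : ℤ → ℂ))) (β i))
    (hbind : LinearIndependent ℂ b)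
    (m : Fin (2*n+1) → ℤ) (hm : (∑ i, m i • inoueU n a b i) = 0) : m = 0 := by
  classical
  set f : Module.End ℂ (Fin (2*n+1) → ℂ) := Matrix.mulVecLin (M.map (Int.cast : ℤ → ℂ)) with hf
  set aC : Fin (2*n+1) → ℂ := fun i => (a i : ℂ) with haC
  set bb : Fin n → (Fin (2*n+1) → ℂ) := fun j i => (starRingEnd ℂ) (b j i) with hbb
  have hfin : Module.finrank ℂ (Fin (2*n+1) → ℂ) = 2*n+1 := by
    simp [Module.finrank_pi]
  -- complexified eigen equation
  have hfa : f aC = (α : ℂ) • aC := by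
    funext i
    have h1 := congrFun ha i
    simp only [Matrix.mulVec, dotProduct, Matrix.map_apply, Pi.smul_apply,
      smul_eq_mul] at h1
    simp only [hf, haC, Matrix.mulVecLin_apply, Matrix.mulVec, dotProduct,
      Matrix.map_apply, Pi.smul_apply, smul_eq_mul]
    exact_mod_cast congrArg (Complex.ofReal) h1
  have haC0 : aC ≠ 0 := by
    intro h
    apply ha0
    funext i
    have := congrFun h i
    simpa [haC, Complex.ofReal_eq_zero] using this
  -- distinctness of eigenvalues
  have hαβ : ∀ j, (α : ℂ) ≠ β j := by
    intro j h
    have := congrArg Complex.im h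
    simp only [Complex.ofReal_im] at this
    exact absurd this.symm (ne_of_gt (hβ j))
  have hαβ' : ∀ j, (α : ℂ) ≠ (starRingEnd ℂ) (β j) := by
    intro j h
    have := congrArg Complex.im h
    simp only [Complex.ofReal_im, Complex.conj_im] at this
    have : (β j).im = 0 := by linarith
    exact absurd this (ne_of_gt (hβ j))
  have hββ' : ∀ j k, β j ≠ (starRingEnd ℂ) (β k) := by
    intro j k h
    have := congrArg Complex.im h
    simp only [Complex.conj_im] at this
    have h1 := hβ j
    have h2 := hβ k
    linarith
  have base : ∀ x y : ℂ, x ≠ y → IsCoprime ((X : ℂ[X]) - C x) (X - C y) := by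
    intro x y h
    exact isCoprime_X_sub_C_of_isUnit_sub (sub_ne_zero_of_ne h).isUnit
  -- the annihilating polynomials
  set P : ℂ[X] := ∏ j, (X - C (β j)) ^ (2*n+1) with hP
  set Q : ℂ[X] := ∏ j, (X - C ((starRingEnd ℂ) (β j))) ^ (2*n+1) with hQ
  have hcopPQ : IsCoprime P Q :=
    IsCoprime.prod_left fun j _ => IsCoprime.prod_right fun k _ =>
      ((base _ _ (hββ' j k)).pow)
  have hcopA : IsCoprime ((X : ℂ[X]) - C (α : ℂ)) (P * Q) :=
    (IsCoprime.prod_right fun j _ => (base _ _ (hαβ j)).pow_right).mul_right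
      (IsCoprime.prod_right fun j _ => (base _ _ (hαβ' j)).pow_right)
  -- vanishing
  have hPb : ∀ j, (aeval f P) (b j) = 0 := by
    intro j
    have := aux_kill_iSup f β (hbmem j)
    rwa [hfin] at this
  have hQP : Q = P.map (starRingEnd ℂ) := by
    simp [hP, hQ, Polynomial.map_prod, Polynomial.map_pow, Polynomial.map_sub]
  have hQbb : ∀ j, (aeval f Q) (bb j) = 0 := by
    intro j
    have h1 := aux_conj_aeval M P (b j)
    rw [hPb j] at h1
    rw [hQP]
    refine h1.trans ?_
    funext i
    simp
  have hpa : (aeval f) ((X : ℂ[X]) - C (α : ℂ)) aC = 0 := by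
    rw [_root_.map_sub, aeval_X, aeval_C, LinearMap.sub_apply,
      Module.algebraMap_end_apply, hfa, sub_self]
  -- kernel containments
  have hSb : Submodule.span ℂ (Set.range b) ≤ LinearMap.ker (aeval f P) := by
    rw [Submodule.span_le]
    rintro x ⟨j, rfl⟩
    exact LinearMap.mem_ker.mpr (hPb j)
  have hSbb : Submodule.span ℂ (Set.range bb) ≤ LinearMap.ker (aeval f Q) := by
    rw [Submodule.span_le]
    rintro x ⟨j, rfl⟩
    exact LinearMap.mem_ker.mpr (hQbb j)
  have hSa : Submodule.span ℂ {aC} ≤ LinearMap.ker (aeval f ((X : ℂ[X]) - C (α : ℂ))) := by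
    rw [Submodule.span_le, Set.singleton_subset_iff]
    exact LinearMap.mem_ker.mpr hpa
  have hkerP : LinearMap.ker (aeval f P) ≤ LinearMap.ker (aeval f (P * Q)) := by
    intro x hx
    rw [LinearMap.mem_ker] at hx ⊢
    have hcomm : aeval f (P * Q) = aeval f Q * aeval f P := by
      rw [mul_comm P Q, _root_.map_mul]
    rw [hcomm, Module.End.mul_apply, hx, map_zero]
  have hkerQ : LinearMap.ker (aeval f Q) ≤ LinearMap.ker (aeval f (P * Q)) := by
    intro x hx
    rw [LinearMap.mem_ker] at hx ⊢
    rw [_root_.map_mul, Module.End.mul_apply, hx, map_zero]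
  -- disjointness
  have hd1 : Disjoint (Submodule.span ℂ (Set.range b)) (Submodule.span ℂ (Set.range bb)) := by
    rw [Submodule.disjoint_def]
    intro x hx hx'
    exact aux_killzero f hcopPQ (LinearMap.mem_ker.mp (hSb hx)) (LinearMap.mem_ker.mp (hSbb hx'))
  have hd2 : Disjoint (Submodule.span ℂ {aC})
      (Submodule.span ℂ (Set.range b) ⊔ Submodule.span ℂ (Set.range bb)) := by
    rw [Submodule.disjoint_def]
    intro x hx hx'
    have h2 : x ∈ LinearMap.ker (aeval f (P * Q)) :=
      sup_le (le_trans hSb hkerP) (le_trans hSbb hkerQ) hx'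
    exact aux_killzero f hcopA (LinearMap.mem_ker.mp (hSa hx)) (LinearMap.mem_ker.mp h2)
  -- linear independence of the combined family
  have hlbb : LinearIndependent ℂ bb := by
    rw [Fintype.linearIndependent_iff]
    intro g hg j
    have h2 : ∑ jj, (starRingEnd ℂ) (g jj) • b jj = 0 := by
      funext i
      have h3 := congrFun hg i
      simp only [Finset.sum_apply, Pi.smul_apply, smul_eq_mul, Pi.zero_apply, hbb] at h3
      have h4 := congrArg (starRingEnd ℂ) h3
      simpa [map_sum, _root_.map_mul] using h4
    have := Fintype.linearIndependent_iff.mp hbind _ h2 j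
    simpa using this
  have hlaC : LinearIndependent ℂ (fun _ : Fin 1 => aC) :=
    linearIndependent_unique_iff.mpr haC0
  have hlBB : LinearIndependent ℂ (Sum.elim b bb) := hbind.sum_type hlbb hd1
  have hall : LinearIndependent ℂ (Sum.elim (fun _ : Fin 1 => aC) (Sum.elim b bb)) := by
    refine hlaC.sum_type hlBB ?_
    rw [Set.range_const, Set.Sum.elim_range, Submodule.span_union]
    exact hd2
  have htop : Submodule.span ℂ (Set.range (Sum.elim (fun _ : Fin 1 => aC) (Sum.elim b bb))) = ⊤ := by
    refine hall.span_eq_top_of_card_eq_finrank ?_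
    rw [hfin]
    simp
    ring
  -- the linear functional with coefficients m
  set φ : (Fin (2*n+1) → ℂ) →ₗ[ℂ] ℂ := ∑ i, ((m i : ℂ)) • LinearMap.proj i with hφ
  have hφapp : ∀ v : Fin (2*n+1) → ℂ, φ v = ∑ i, (m i : ℂ) * v i := by
    intro v
    simp [hφ, LinearMap.sum_apply, LinearMap.smul_apply, LinearMap.proj_apply, smul_eq_mul]
  -- extract the component equations from hm
  have h1 : ∑ i, (m i : ℂ) * (a i : ℂ) = 0 := by
    have := congrArg Prod.fst hm
    rw [Prod.fst_sum] at this
    simpa [inoueU, zsmul_eq_mul] using this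
  have h2 : ∀ j, ∑ i, (m i : ℂ) * b j i = 0 := by
    intro j
    have := congrFun (congrArg Prod.snd hm) j
    rw [Prod.snd_sum] at this
    simpa [inoueU, zsmul_eq_mul, Finset.sum_apply] using this
  -- φ kills all the generators
  have hφtop : LinearMap.ker φ = ⊤ := by
    rw [eq_top_iff, ← htop]
    rw [Submodule.span_le]
    rintro x ⟨(i | (j | j)), rfl⟩
    · rw [SetLike.mem_coe, LinearMap.mem_ker]
      rw [show Sum.elim (fun _ : Fin 1 => aC) (Sum.elim b bb) (Sum.inl i) = aC from rfl]
      rw [hφapp]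
      exact h1
    · rw [SetLike.mem_coe, LinearMap.mem_ker]
      rw [show Sum.elim (fun _ : Fin 1 => aC) (Sum.elim b bb) (Sum.inr (Sum.inl j)) = b j from rfl]
      rw [hφapp]
      exact h2 j
    · rw [SetLike.mem_coe, LinearMap.mem_ker]
      rw [show Sum.elim (fun _ : Fin 1 => aC) (Sum.elim b bb) (Sum.inr (Sum.inr j)) = bb j from rfl]
      rw [hφapp]
      have h4 := congrArg (starRingEnd ℂ) (h2 j)
      simpa [map_sum, _root_.map_mul, hbb] using h4
  have hφ0 : φ = 0 := LinearMap.ker_eq_top.mp hφtop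
  funext i
  have h5 : φ (Pi.single i 1) = 0 := by rw [hφ0]; rfl
  rw [hφapp] at h5
  have h6 : ((m i : ℂ)) = 0 := by
    rw [Finset.sum_eq_single i] at h5
    · simpa using h5
    · intro k _ hk
      simp [Pi.single_apply, hk]
    · intro h
      exact absurd (Finset.mem_univ i) h
  exact_mod_cast h6


/-- **(Endo–Pajitnov)**  The group `H_M` of transformations of `ℂ × ℂⁿ` generated by the
translations `gᵢ : p ↦ p + uᵢ` is free abelian of rank `2n+1`: the map
`ℤ^{2n+1} → H_M`, `(m₁, …, m_{2n+1}) ↦ (translation by ∑ᵢ mᵢ uᵢ)`, is a group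
isomorphism onto `H_M`. -/
theorem inoue_HM_free_abelian
    (n : ℕ) (hn : 1 ≤ n)
    (M : Matrix (Fin (2*n+1)) (Fin (2*n+1)) ℤ) (hdet : M.det = 1)
    (α : ℝ) (hα0 : 0 < α) (hα1 : α ≠ 1) (hαirr : Irrational α)
    (β : Fin n → ℂ) (hβ : ∀ j, 0 < (β j).im)
    (hchar : (M.map (Int.cast : ℤ → ℂ)).charpoly
      = (X - C (α : ℂ)) * ∏ j, ((X - C (β j)) * (X - C (starRingEnd ℂ (β j)))))
    (a : Fin (2*n+1) → ℝ) (ha0 : a ≠ 0)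
    (ha : (M.map (Int.cast : ℤ → ℝ)).mulVec a = α • a)
    (b : Fin n → (Fin (2*n+1) → ℂ))
    (hbmem : ∀ j, b j ∈ ⨆ i, Module.End.maxGenEigenspace
        (Matrix.mulVecLin (M.map (Int.cast : ℤ → ℂ))) (β i))
    (hbind : LinearIndependent ℂ b)
    (hbspan : Submodule.span ℂ (Set.range b)
      = ⨆ i, Module.End.maxGenEigenspace
        (Matrix.mulVecLin (M.map (Int.cast : ℤ → ℂ))) (β i)) :
    (∀ m m' : Fin (2*n+1) → ℤ,
        Equiv.addRight (∑ i, (m + m') i • inoueU n a b i)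
          = Equiv.addRight (∑ i, m i • inoueU n a b i)
            * Equiv.addRight (∑ i, m' i • inoueU n a b i))
      ∧ Function.Injective
          (fun m : Fin (2*n+1) → ℤ => Equiv.addRight (∑ i, m i • inoueU n a b i))
      ∧ Set.range (fun m : Fin (2*n+1) → ℤ => Equiv.addRight (∑ i, m i • inoueU n a b i))
          = (Subgroup.closure
              (Set.range fun i : Fin (2*n+1) => Equiv.addRight (inoueU n a b i)) :
                Subgroup (Equiv.Perm (ℂ × (Fin n → ℂ)))) := by
  classical
  -- basic additivity of addRight
  have haux : ∀ x y : ℂ × (Fin n → ℂ),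
      Equiv.addRight (x + y) = Equiv.addRight x * Equiv.addRight y := by
    intro x y
    apply Equiv.ext
    intro p
    simp only [Equiv.coe_addRight, Equiv.Perm.mul_apply]
    abel
  have h0 : Equiv.addRight (0 : ℂ × (Fin n → ℂ)) = 1 := by
    apply Equiv.ext
    intro p
    simp
  have hsplit : ∀ m m' : Fin (2*n+1) → ℤ,
      (∑ i, (m + m') i • inoueU n a b i)
        = (∑ i, m i • inoueU n a b i) + (∑ i, m' i • inoueU n a b i) := by
    intro m m'
    rw [← Finset.sum_add_distrib]
    refine Finset.sum_congr rfl fun i _ => ?_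
    rw [Pi.add_apply, add_smul]
  have part1 : ∀ m m' : Fin (2*n+1) → ℤ,
      Equiv.addRight (∑ i, (m + m') i • inoueU n a b i)
        = Equiv.addRight (∑ i, m i • inoueU n a b i)
          * Equiv.addRight (∑ i, m' i • inoueU n a b i) := by
    intro m m'
    rw [hsplit, haux]
  -- kernel property
  have hker : ∀ m : Fin (2*n+1) → ℤ, (∑ i, m i • inoueU n a b i) = 0 → m = 0 := by
    intro m hm
    exact aux_ker n M α β hβ a ha0 ha b hbmem hbind m hm
  have part2 : Function.Injective
      (fun m : Fin (2*n+1) → ℤ => Equiv.addRight (∑ i, m i • inoueU n a b i)) := by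
    intro m m' h
    have h1 : (∑ i, m i • inoueU n a b i) = ∑ i, m' i • inoueU n a b i := by
      have := congrArg (fun e : Equiv.Perm (ℂ × (Fin n → ℂ)) => e 0) h
      simpa using this
    have h2 : (∑ i, (m - m') i • inoueU n a b i) = 0 := by
      have : ∀ i : Fin (2*n+1), (m - m') i • inoueU n a b i
          = m i • inoueU n a b i - m' i • inoueU n a b i := by
        intro i
        rw [Pi.sub_apply, sub_smul]
      rw [Finset.sum_congr rfl fun i _ => this i, Finset.sum_sub_distrib, h1, sub_self]
    have := hker _ h2
    exact sub_eq_zero.mp (by funext i; exact congrFun this i)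
  refine ⟨part1, part2, ?_⟩
  -- part 3
  set F : (Fin (2*n+1) → ℤ) → Equiv.Perm (ℂ × (Fin n → ℂ)) :=
    fun m => Equiv.addRight (∑ i, m i • inoueU n a b i) with hF
  have hF0 : F 0 = 1 := by
    rw [hF]
    simp only [Pi.zero_apply, zero_smul, Finset.sum_const_zero]
    exact h0
  have hFadd : ∀ m m', F (m + m') = F m * F m' := part1
  have hFneg : ∀ m, F (-m) = (F m)⁻¹ := by
    intro m
    have : F (-m) * F m = 1 := by rw [← hFadd, neg_add_cancel, hF0]
    exact eq_inv_of_mul_eq_one_left this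
  set R : Subgroup (Equiv.Perm (ℂ × (Fin n → ℂ))) :=
    { carrier := Set.range F
      one_mem' := ⟨0, hF0⟩
      mul_mem' := by
        rintro _ _ ⟨m, rfl⟩ ⟨m', rfl⟩
        exact ⟨m + m', hFadd m m'⟩
      inv_mem' := by
        rintro _ ⟨m, rfl⟩
        exact ⟨-m, hFneg m⟩ } with hR
  -- zpow lemma
  have hinvx : ∀ x : ℂ × (Fin n → ℂ),
      Equiv.addRight (-x) = (Equiv.addRight x)⁻¹ := by
    intro x
    exact eq_inv_of_mul_eq_one_left (by rw [← haux, neg_add_cancel, h0])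
  have hz : ∀ (k : ℤ) (x : ℂ × (Fin n → ℂ)),
      Equiv.addRight (k • x) = (Equiv.addRight x) ^ k := by
    intro k x
    induction k using Int.induction_on with
    | zero => simpa using h0
    | succ k ih =>
      rw [add_smul, one_smul, haux, ih]
      exact (_root_.zpow_add_one _ _).symm
    | pred k ih =>
      rw [sub_smul, one_smul, sub_eq_add_neg, haux, ih, hinvx]
      exact (_root_.zpow_sub_one _ _).symm
  have hgen : ∀ i : Fin (2*n+1), Equiv.addRight (inoueU n a b i) = F (Pi.single i 1) := by
    intro i
    rw [hF]
    congr 1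
    rw [Finset.sum_eq_single i]
    · simp
    · intro k _ hk
      simp [Pi.single_apply, hk]
    · intro h
      exact absurd (Finset.mem_univ i) h
  have hRclos : (Subgroup.closure
      (Set.range fun i : Fin (2*n+1) => Equiv.addRight (inoueU n a b i)) :
        Subgroup (Equiv.Perm (ℂ × (Fin n → ℂ)))) = R := by
    apply le_antisymm
    · rw [Subgroup.closure_le]
      rintro _ ⟨i, rfl⟩
      exact (show Equiv.addRight (inoueU n a b i) ∈ Set.range F from ⟨Pi.single i 1, (hgen i).symm⟩)
    · intro x hx
      obtain ⟨m, rfl⟩ := hx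
      rw [hF]
      have claim : ∀ s : Finset (Fin (2*n+1)),
          Equiv.addRight (∑ i ∈ s, m i • inoueU n a b i) ∈ Subgroup.closure
            (Set.range fun i : Fin (2*n+1) => Equiv.addRight (inoueU n a b i)) := by
        intro s
        induction s using Finset.induction_on with
        | empty =>
          rw [Finset.sum_empty, h0]
          exact Subgroup.one_mem _
        | @insert i0 s hnotmem ih =>
          rw [Finset.sum_insert hnotmem, haux]
          refine Subgroup.mul_mem _ ?_ ih
          rw [hz]
          exact Subgroup.zpow_mem _ (Subgroup.subset_closure (Set.mem_range_self i0)) _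
      exact claim Finset.univ
  rw [hRclos]
  rfl
end

section
/- Let k ≥ 1 and A ∈ GL(k, ℤ). The abelianization of the semidirect product S_A is isomorphic to ℤ × (ℤ^k / (A − I)ℤ^k). -/
open Matrix

/-- The semidirect product `S_A = ℤ ⋉ ℤ^k` in which the generator `t` of `ℤ` acts on `ℤ^k`
by the automorphism `e` (in the intended situation, `e v = A v` for `A ∈ GL(k, ℤ)`). -/
def SemidirectZ (k : ℕ) (e : AddAut (Fin k → ℤ)) : Type :=
  SemidirectProduct (Multiplicative (Fin k → ℤ)) (Multiplicative ℤ)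
    (zpowersHom (MulAut (Multiplicative (Fin k → ℤ))) (AddEquiv.toMultiplicative e))

instance (k : ℕ) (e : AddAut (Fin k → ℤ)) : Group (SemidirectZ k e) :=
  inferInstanceAs (Group (SemidirectProduct _ _ _))

section Aux

variable {k : ℕ} (A : Matrix (Fin k) (Fin k) ℤ) (e : AddAut (Fin k → ℤ))

abbrev myφ : Multiplicative ℤ →* MulAut (Multiplicative (Fin k → ℤ)) :=
  zpowersHom (MulAut (Multiplicative (Fin k → ℤ))) (AddEquiv.toMultiplicative e)

abbrev myS := SemidirectProduct (Multiplicative (Fin k → ℤ)) (Multiplicative ℤ) (myφ e)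

abbrev myR : Submodule ℤ (Fin k → ℤ) := LinearMap.range (Matrix.mulVecLin (A - 1))

abbrev myQ := (Fin k → ℤ) ⧸ myR A

variable (he : ∀ v, e v = A.mulVec v)

lemma toMult_apply (v : Fin k → ℤ) :
    (AddEquiv.toMultiplicative e) (Multiplicative.ofAdd v) = Multiplicative.ofAdd (e v) := rfl

include he in
lemma base_key (v : Fin k → ℤ) :
    (Submodule.Quotient.mk (e v) : myQ A) = Submodule.Quotient.mk v := by
  rw [Submodule.Quotient.eq, he]
  exact ⟨v, by simp [Matrix.sub_mulVec]⟩

include he in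
lemma zpow_key (m : ℤ) (x : Multiplicative (Fin k → ℤ)) :
    (Submodule.Quotient.mk (((AddEquiv.toMultiplicative e ^ m) x).toAdd) : myQ A)
      = Submodule.Quotient.mk x.toAdd := by
  have hinv : ∀ y : Multiplicative (Fin k → ℤ),
      (Submodule.Quotient.mk (((AddEquiv.toMultiplicative e)⁻¹ y).toAdd) : myQ A)
        = Submodule.Quotient.mk y.toAdd := by
    intro y
    have := base_key A e he (((AddEquiv.toMultiplicative e)⁻¹ y).toAdd)
    have h2 : e (((AddEquiv.toMultiplicative e)⁻¹ y).toAdd) = y.toAdd := by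
      show e (e.symm y.toAdd) = y.toAdd
      simp
    rw [h2] at this
    exact this.symm
  induction m using Int.induction_on generalizing x with
  | zero => simp
  | succ n ih =>
      rw [_root_.zpow_add_one, MulAut.mul_apply, ih]
      exact base_key A e he x.toAdd
  | pred n ih =>
      rw [_root_.zpow_sub_one, MulAut.mul_apply, ih]
      exact hinv x


/-- forward: component on the normal subgroup -/
def f1 : Multiplicative (Fin k → ℤ) →* Multiplicative (ℤ × myQ A) :=
  MonoidHom.mk' (fun x => Multiplicative.ofAdd (0, Submodule.Quotient.mk x.toAdd))
    (by intro a b; simp [← ofAdd_add, Prod.ext_iff])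

def f2 : Multiplicative ℤ →* Multiplicative (ℤ × myQ A) :=
  MonoidHom.mk' (fun n => Multiplicative.ofAdd (n.toAdd, 0))
    (by intro a b; simp [← ofAdd_add, Prod.ext_iff])

include he in
lemma compat : ∀ g : Multiplicative ℤ, (f1 A).comp ((myφ e) g).toMonoidHom
    = (MulAut.conj ((f2 A) g)).toMonoidHom.comp (f1 A) := by
  intro g
  refine MonoidHom.ext fun x => ?_
  simp only [MonoidHom.comp_apply, MulEquiv.coe_toMonoidHom, MulAut.conj_apply]
  rw [mul_comm, inv_mul_cancel_left]
  show Multiplicative.ofAdd (0, (Submodule.Quotient.mk ((((AddEquiv.toMultiplicative e) ^ g.toAdd) x).toAdd) : myQ A)) = _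
  rw [zpow_key A e he]
  rfl

/-- forward hom on the semidirect product -/
noncomputable def fwd : myS e →* Multiplicative (ℤ × myQ A) :=
  SemidirectProduct.lift (f1 A) (f2 A) (compat A e he)

/-- the map `N →+ Additive (Abelianization (myS e))` -/
def g2 : (Fin k → ℤ) →+ Additive (Abelianization (myS e)) :=
  MonoidHom.toAdditiveRight ((Abelianization.of).comp (SemidirectProduct.inl))

omit he in
lemma inl_ab (v : Fin k → ℤ) :
    Abelianization.of (SemidirectProduct.inl (Multiplicative.ofAdd (e v)) : myS e)
      = Abelianization.of (SemidirectProduct.inl (Multiplicative.ofAdd v)) := by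
  have h3 : (SemidirectProduct.inl (Multiplicative.ofAdd (e v)) : myS e)
      = SemidirectProduct.inr (Multiplicative.ofAdd (1 : ℤ))
        * SemidirectProduct.inl (Multiplicative.ofAdd v)
        * SemidirectProduct.inr ((Multiplicative.ofAdd (1 : ℤ))⁻¹) := by
    have : (Multiplicative.ofAdd (e v) : Multiplicative (Fin k → ℤ))
        = (myφ e) (Multiplicative.ofAdd (1 : ℤ)) (Multiplicative.ofAdd v) := by
      show _ = (AddEquiv.toMultiplicative e ^ (1:ℤ)) (Multiplicative.ofAdd v)
      rw [zpow_one]; rfl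
    rw [this, SemidirectProduct.inl_aut, _root_.map_inv]
  rw [h3, _root_.map_inv, _root_.map_mul, _root_.map_mul, _root_.map_inv]
  rw [mul_comm (Abelianization.of (SemidirectProduct.inr (Multiplicative.ofAdd (1:ℤ))))]
  rw [mul_inv_cancel_right]

include he in
lemma g2_cond : myR A ≤ LinearMap.ker ((g2 e).toIntLinearMap) := by
  rintro _ ⟨v, rfl⟩
  show Additive.ofMul (Abelianization.of (SemidirectProduct.inl
      (Multiplicative.ofAdd (Matrix.mulVecLin (A - 1) v)) : myS e)) = 0
  have h1 : Matrix.mulVecLin (A - 1) v = e v - v := by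
    simp [Matrix.sub_mulVec, he]
  have h2 : (Multiplicative.ofAdd (e v - v) : Multiplicative (Fin k → ℤ))
      = Multiplicative.ofAdd (e v) * (Multiplicative.ofAdd v)⁻¹ := by
    simp [← ofAdd_neg, ← ofAdd_add, sub_eq_add_neg]
  have : Abelianization.of (SemidirectProduct.inl
      (Multiplicative.ofAdd (Matrix.mulVecLin (A - 1) v)) : myS e) = 1 := by
    rw [h1, h2, _root_.map_mul, _root_.map_inv, _root_.map_mul, _root_.map_inv,
      inl_ab e v, mul_inv_cancel]
  rw [this]; rfl

/-- backward: component on `Q` -/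
noncomputable def psi2 : Multiplicative (myQ A) →* Abelianization (myS e) :=
  AddMonoidHom.toMultiplicativeLeft
    ((Submodule.liftQ (myR A) (g2 e).toIntLinearMap (g2_cond A e he)).toAddMonoidHom)

lemma psi2_mk (v : Fin k → ℤ) :
    psi2 A e he (Multiplicative.ofAdd (Submodule.Quotient.mk v))
      = Abelianization.of (SemidirectProduct.inl (Multiplicative.ofAdd v)) := by
  rfl

/-- backward hom -/
noncomputable def bwd : Multiplicative (ℤ × myQ A) →* Abelianization (myS e) :=
  MonoidHom.mk'
    (fun p => Abelianization.of (SemidirectProduct.inr (Multiplicative.ofAdd p.toAdd.1))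
        * psi2 A e he (Multiplicative.ofAdd p.toAdd.2))
    (by
      intro a b
      show Abelianization.of (SemidirectProduct.inr (Multiplicative.ofAdd (a.toAdd.1 + b.toAdd.1)))
          * psi2 A e he (Multiplicative.ofAdd (a.toAdd.2 + b.toAdd.2))
        = Abelianization.of (SemidirectProduct.inr (Multiplicative.ofAdd a.toAdd.1))
            * psi2 A e he (Multiplicative.ofAdd a.toAdd.2)
          * (Abelianization.of (SemidirectProduct.inr (Multiplicative.ofAdd b.toAdd.1))
            * psi2 A e he (Multiplicative.ofAdd b.toAdd.2))
      rw [ofAdd_add, ofAdd_add, _root_.map_mul, _root_.map_mul, _root_.map_mul]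
      exact mul_mul_mul_comm _ _ _ _)

noncomputable def fwdAb : Abelianization (myS e) →* Multiplicative (ℤ × myQ A) :=
  Abelianization.lift (fwd A e he)

lemma left_inv : (bwd A e he).comp (fwdAb A e he) = MonoidHom.id _ := by
  apply Abelianization.hom_ext
  refine SemidirectProduct.hom_ext (MonoidHom.ext fun x => ?_) (MonoidHom.ext fun n => ?_)
  · show bwd A e he (fwdAb A e he (Abelianization.of (SemidirectProduct.inl x)))
        = Abelianization.of (SemidirectProduct.inl x)
    show bwd A e he (fwd A e he (SemidirectProduct.inl x))
        = Abelianization.of (SemidirectProduct.inl x)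
    rw [fwd, SemidirectProduct.lift_inl]
    show Abelianization.of (SemidirectProduct.inr (Multiplicative.ofAdd (0:ℤ)))
        * psi2 A e he (Multiplicative.ofAdd (Submodule.Quotient.mk x.toAdd)) = _
    rw [psi2_mk]
    simp
  · show bwd A e he (fwdAb A e he (Abelianization.of (SemidirectProduct.inr n)))
        = Abelianization.of (SemidirectProduct.inr n)
    show bwd A e he (fwd A e he (SemidirectProduct.inr n))
        = Abelianization.of (SemidirectProduct.inr n)
    rw [fwd, SemidirectProduct.lift_inr]
    show Abelianization.of (SemidirectProduct.inr (Multiplicative.ofAdd n.toAdd))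
        * psi2 A e he (Multiplicative.ofAdd (0 : myQ A)) = _
    simp

lemma right_inv : (fwdAb A e he).comp (bwd A e he) = MonoidHom.id _ := by
  refine MonoidHom.ext fun p => ?_
  obtain ⟨n, x⟩ := p
  obtain ⟨v, rfl⟩ := Submodule.Quotient.mk_surjective _ x
  show fwdAb A e he (Abelianization.of (SemidirectProduct.inr (Multiplicative.ofAdd n))
      * psi2 A e he (Multiplicative.ofAdd (Submodule.Quotient.mk v))) = _
  rw [psi2_mk, _root_.map_mul]
  show fwd A e he (SemidirectProduct.inr (Multiplicative.ofAdd n))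
      * fwd A e he (SemidirectProduct.inl (Multiplicative.ofAdd v)) = _
  rw [fwd, SemidirectProduct.lift_inr, SemidirectProduct.lift_inl]
  show Multiplicative.ofAdd ((n, 0) : ℤ × myQ A)
      * Multiplicative.ofAdd ((0, Submodule.Quotient.mk v) : ℤ × myQ A) = _
  rw [← ofAdd_add]
  show Multiplicative.ofAdd (n + 0, 0 + Submodule.Quotient.mk v) = _
  rw [add_zero, zero_add]
  rfl

end Aux

/-- For `A ∈ GL(k, ℤ)`, the abelianization of the semidirect product
`S_A = ℤ ⋉_A ℤ^k` is isomorphic to `ℤ × (ℤ^k / (A - I)ℤ^k)`. -/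
theorem abelianization_semidirect
    (k : ℕ) (hk : 1 ≤ k) (A : Matrix (Fin k) (Fin k) ℤ) (hA : IsUnit A.det)
    (e : AddAut (Fin k → ℤ)) (he : ∀ v, e v = A.mulVec v) :
    Nonempty (Abelianization (SemidirectZ k e)
      ≃* Multiplicative (ℤ × ((Fin k → ℤ) ⧸ LinearMap.range (Matrix.mulVecLin (A - 1))))) := by
  exact ⟨MonoidHom.toMulEquiv (fwdAb A e he) (bwd A e he) (left_inv A e he) (right_inv A e he)⟩
end

section
/- The action of G_M on ℍ × ℂⁿ is free: if g ∈ G_M and g(p) = p for some point p ∈ ℍ × ℂⁿ, then g is the identity. -/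
open Matrix Polynomial

/-- The upper half plane, as a subtype of `ℂ`. -/
def UpperHalf : Type := {w : ℂ // 0 < w.im}

/-- **Proposition G, first part** (Endo–Pajitnov).  The action of the group `G_M` of
transformations of `ℍ × ℂⁿ` generated by `g₀(w, z) = (α w, Rᵀ z)` and the translations
`gᵢ : p ↦ p + uᵢ` is free: if `g ∈ G_M` fixes some point, then `g` is the identity. -/
theorem inoue_action_free
    (n : ℕ) (hn : 1 ≤ n)
    (M : Matrix (Fin (2*n+1)) (Fin (2*n+1)) ℤ) (hdet : M.det = 1)
    (α : ℝ) (hα0 : 0 < α) (hα1 : α ≠ 1) (hαirr : Irrational α)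
    (β : Fin n → ℂ) (hβ : ∀ j, 0 < (β j).im)
    (hchar : (M.map (Int.cast : ℤ → ℂ)).charpoly
      = (X - C (α : ℂ)) * ∏ j, ((X - C (β j)) * (X - C (starRingEnd ℂ (β j)))))
    (a : Fin (2*n+1) → ℝ) (ha0 : a ≠ 0)
    (ha : (M.map (Int.cast : ℤ → ℝ)).mulVec a = α • a)
    (b : Fin n → (Fin (2*n+1) → ℂ))
    (hbmem : ∀ j, b j ∈ ⨆ i, Module.End.maxGenEigenspace
        (Matrix.mulVecLin (M.map (Int.cast : ℤ → ℂ))) (β i))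
    (hbind : LinearIndependent ℂ b)
    (hbspan : Submodule.span ℂ (Set.range b)
      = ⨆ i, Module.End.maxGenEigenspace
        (Matrix.mulVecLin (M.map (Int.cast : ℤ → ℂ))) (β i))
    (R : Matrix (Fin n) (Fin n) ℂ)
    (hR : ∀ j, (M.map (Int.cast : ℤ → ℂ)).mulVec (b j) = ∑ ℓ, R ℓ j • b ℓ)
    (g₀ : Equiv.Perm (UpperHalf × (Fin n → ℂ)))
    (hg₀ : ∀ p : UpperHalf × (Fin n → ℂ),
      ((g₀ p).1.val = (α : ℂ) * p.1.val) ∧ (g₀ p).2 = Rᵀ.mulVec p.2)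
    (g : Fin (2*n+1) → Equiv.Perm (UpperHalf × (Fin n → ℂ)))
    (hg : ∀ (i : Fin (2*n+1)) (p : UpperHalf × (Fin n → ℂ)),
      ((g i p).1.val = p.1.val + (a i : ℂ))
        ∧ (g i p).2 = p.2 + fun j => b j i) :
    ∀ γ ∈ Subgroup.closure ({g₀} ∪ Set.range g),
      (∃ p : UpperHalf × (Fin n → ℂ), γ p = p) → γ = 1 := by
  have hαC : (α : ℂ) ≠ 0 := by exact_mod_cast hα0.ne'
  -- `M` over `ℂ` is invertible
  set Mc : Matrix (Fin (2*n+1)) (Fin (2*n+1)) ℂ := M.map (Int.cast : ℤ → ℂ) with hMc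
  have hMcdet : Mc.det = 1 := by
    have := (Int.castRingHom ℂ).map_det M
    rw [hdet] at this
    simpa [hMc] using this.symm
  have hMcinj : Function.Injective Mc.mulVec :=
    Matrix.mulVec_injective_iff_isUnit.2
      ((Matrix.isUnit_iff_isUnit_det Mc).2 (by rw [hMcdet]; exact isUnit_one))
  -- `R` is invertible
  have hRinj : Function.Injective R.mulVec := by
    intro x y hxy
    have hz : R.mulVec (x - y) = 0 := by
      rw [Matrix.mulVec_sub, hxy, sub_self]
    set z := x - y with hzdef
    have hv : Mc.mulVec (∑ j, z j • b j) = 0 := by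
      have h1 : Mc.mulVec (∑ j, z j • b j) = ∑ j, z j • Mc.mulVec (b j) := by
        rw [← Matrix.coe_mulVecLin]
        simp [map_sum]
      rw [h1]
      have h2 : ∀ j, z j • Mc.mulVec (b j) = ∑ ℓ, (R ℓ j * z j) • b ℓ := by
        intro j
        rw [hR j, Finset.smul_sum]
        refine Finset.sum_congr rfl fun ℓ _ => ?_
        rw [smul_smul, mul_comm (z j)]
      simp_rw [h2]
      rw [Finset.sum_comm]
      have h3 : ∀ ℓ, ∑ j, (R ℓ j * z j) • b ℓ = (R.mulVec z ℓ) • b ℓ := by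
        intro ℓ
        rw [← Finset.sum_smul]
        rfl
      simp_rw [h3, hz]
      simp
    have hv0 : (∑ j, z j • b j) = 0 := by
      apply hMcinj
      rw [hv, Matrix.mulVec_zero]
    have := (Fintype.linearIndependent_iff.mp hbind) z hv0
    have : z = 0 := funext this
    exact sub_eq_zero.mp (by rwa [← hzdef])
  have hRu : IsUnit R := Matrix.mulVec_injective_iff_isUnit.mp hRinj
  -- the linear automorphism given by `Rᵀ`
  obtain ⟨T, hT⟩ : ∃ T : (Fin n → ℂ) ≃ₗ[ℂ] (Fin n → ℂ), ∀ z, T z = Rᵀ.mulVec z := by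
    have h2 : IsUnit Rᵀ.det := by
      rw [Matrix.det_transpose]; exact (Matrix.isUnit_iff_isUnit_det R).mp hRu
    have hi := Rᵀ.invertibleOfIsUnitDet h2
    refine ⟨Rᵀ.toLinearEquiv' hi, fun z => ?_⟩
    rw [← Matrix.toLin'_apply]
    exact congrFun (congrArg DFunLike.coe (Rᵀ.toLinearEquiv'_apply hi)) z
  -- the normal form of every element of the group
  set P : Equiv.Perm (UpperHalf × (Fin n → ℂ)) → Prop := fun γ =>
    ∃ (m : ℤ) (c : ℝ) (d : Fin n → ℂ), ∀ p,
      ((γ p).1.val = ((α ^ m : ℝ) : ℂ) * p.1.val + (c : ℂ)) ∧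
      ((γ p).2 = (T ^ m) p.2 + d) with hP
  have key : ∀ γ ∈ Subgroup.closure ({g₀} ∪ Set.range g), P γ := by
    intro γ hγ
    induction hγ using Subgroup.closure_induction with
    | mem x hx =>
      rcases hx with hx | ⟨i, rfl⟩
      · -- x = g₀
        rcases hx with rfl
        refine ⟨1, 0, 0, fun p => ⟨?_, ?_⟩⟩
        · rw [(hg₀ p).1]; push_cast [zpow_one]; ring
        · rw [(hg₀ p).2, zpow_one, hT, add_zero]
      · -- x = g i
        refine ⟨0, a i, (fun j => b j i), fun p => ⟨?_, ?_⟩⟩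
        · rw [(hg i p).1]; push_cast [zpow_zero]; ring
        · rw [(hg i p).2, zpow_zero]; rfl
    | one =>
      refine ⟨0, 0, 0, fun p => ⟨?_, ?_⟩⟩
      · simp
      · show p.2 = (T ^ (0:ℤ)) p.2 + 0
        rw [zpow_zero, add_zero]; rfl
    | mul x y hx hy hPx hPy =>
      obtain ⟨mx, cx, dx, hx'⟩ := hPx
      obtain ⟨my, cy, dy, hy'⟩ := hPy
      refine ⟨mx + my, α ^ mx * cy + cx, (T ^ mx) dy + dx, fun p => ⟨?_, ?_⟩⟩
      · have h1 := (hx' (y p)).1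
        rw [Equiv.Perm.mul_apply, h1, (hy' p).1]
        push_cast [zpow_add₀ hα0.ne']
        ring
      · have h1 := (hx' (y p)).2
        rw [Equiv.Perm.mul_apply, h1, (hy' p).2, map_add, _root_.zpow_add]
        rw [add_assoc]
        rfl
    | inv x hx hPx =>
      obtain ⟨m, c, d, hx'⟩ := hPx
      refine ⟨-m, -(α ^ (-m) * c), -((T ^ (-m)) d), fun p => ⟨?_, ?_⟩⟩
      · have h1 := (hx' (x⁻¹ p)).1
        rw [← Equiv.Perm.mul_apply, mul_inv_cancel, Equiv.Perm.one_apply] at h1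
        have hzm : ((α : ℂ)) ^ m ≠ 0 := zpow_ne_zero _ hαC
        push_cast at h1 ⊢
        rw [h1, _root_.zpow_neg]
        field_simp
        ring
      · have h1 := (hx' (x⁻¹ p)).2
        rw [← Equiv.Perm.mul_apply, mul_inv_cancel, Equiv.Perm.one_apply] at h1
        have h2 : (T ^ (-m)) p.2 = (T ^ (-m)) ((T ^ m) ((x⁻¹ p).2) + d) := by rw [← h1]
        rw [map_add] at h2
        have h3 : (T ^ (-m)) ((T ^ m) ((x⁻¹ p).2)) = (x⁻¹ p).2 := by
          have : (T ^ (-m)) ((T ^ m) ((x⁻¹ p).2)) = ((T ^ (-m)) * (T ^ m)) ((x⁻¹ p).2) := rfl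
          rw [this, ← _root_.zpow_add, neg_add_cancel, zpow_zero]
          rfl
        rw [h3] at h2
        rw [h2]
        abel
  intro γ hγ hfix
  obtain ⟨m, c, d, hγ'⟩ := key γ hγ
  obtain ⟨p, hp⟩ := hfix
  have h1 := (hγ' p).1
  have h2 := (hγ' p).2
  rw [hp] at h1 h2
  -- first: m = 0
  have him : p.1.val.im = α ^ m * p.1.val.im := by
    have := congrArg Complex.im h1
    simpa only [Complex.add_im, Complex.mul_im, Complex.ofReal_re, Complex.ofReal_im,
      zero_mul, add_zero] using this
  have him0 : p.1.val.im ≠ 0 := ne_of_gt p.1.property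
  have hαm : α ^ m = 1 := by
    have : α ^ m * p.1.val.im = 1 * p.1.val.im := by rw [one_mul, ← him]
    exact mul_right_cancel₀ him0 this
  have hm : m = 0 := by
    have hlog : (m : ℝ) * Real.log α = 0 := by
      rw [← Real.log_zpow, hαm, Real.log_one]
    have hlogα : Real.log α ≠ 0 := by
      intro h
      rcases Real.log_eq_zero.mp h with h' | h' | h' <;> [exact hα0.ne' h'; exact hα1 h'; linarith]
    have : (m : ℝ) = 0 := by
      rcases mul_eq_zero.mp hlog with h' | h'
      · exact h'
      · exact absurd h' hlogα
    exact_mod_cast this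
  subst hm
  have hc : c = 0 := by
    rw [zpow_zero, Complex.ofReal_one, one_mul] at h1
    have : (c : ℂ) = 0 := (left_eq_add).mp h1
    exact_mod_cast this
  have hd : d = 0 := by
    have h2' : p.2 = p.2 + d := h2
    exact (left_eq_add).mp h2'
  subst hc hd
  refine Equiv.ext fun q => ?_
  have e1 := (hγ' q).1
  have e2 := (hγ' q).2
  show γ q = q
  refine Prod.ext (Subtype.ext ?_) ?_
  · rw [e1, zpow_zero, Complex.ofReal_one, one_mul, Complex.ofReal_zero, add_zero]
  · rw [e2, add_zero]
    show (T ^ (0:ℤ)) q.2 = q.2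
    rw [zpow_zero]; rfl
end

section
/- Let k ≥ 1 and let A, B ∈ SL(k, ℤ) be such that 1 is not an eigenvalue of A nor of B (equivalently det(A − I) ≠ 0 and det(B − I) ≠ 0). If the groups S_A and S_B are isomorphic, then there exists an integer matrix C invertible over ℤ (C ∈ GL(k, ℤ)) such that C A C^{-1} = B or C A C^{-1} = B^{-1}. -/
open Matrix

namespace EPaux

open SemidirectProduct Multiplicative
open scoped commutatorElement

variable {k : ℕ}

abbrev actHom (e : AddAut (Fin k → ℤ)) : Multiplicative ℤ →* MulAut (Multiplicative (Fin k → ℤ)) :=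
  zpowersHom (MulAut (Multiplicative (Fin k → ℤ))) (AddEquiv.toMultiplicative e)

abbrev SP (k : ℕ) (e : AddAut (Fin k → ℤ)) : Type :=
  Multiplicative (Fin k → ℤ) ⋊[actHom e] Multiplicative ℤ

lemma actHom_ofAdd_one (e : AddAut (Fin k → ℤ)) (v : Fin k → ℤ) :
    actHom e (ofAdd 1) (ofAdd v) = ofAdd (e v) := by
  simp [actHom]

lemma actHom_ofAdd_neg_one (e : AddAut (Fin k → ℤ)) (u : Fin k → ℤ) :
    actHom e (ofAdd (-1)) (ofAdd u) = ofAdd (e.symm u) := by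
  set z := actHom e (ofAdd (-1)) (ofAdd u) with hz
  have h1 : actHom e (ofAdd 1) z = ofAdd u := by
    rw [hz]
    have : actHom e (ofAdd 1) (actHom e (ofAdd (-1)) (ofAdd u)) =
        (actHom e (ofAdd 1) * actHom e (ofAdd (-1))) (ofAdd u) := rfl
    rw [this, ← _root_.map_mul, ← ofAdd_add]
    norm_num
  have h2 : z = ofAdd z.toAdd := rfl
  rw [h2, actHom_ofAdd_one] at h1
  have h3 : e z.toAdd = u := ofAdd.injective.eq_iff.mp h1 ▸ rfl
  have h4 : z.toAdd = e.symm u := by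
    rw [← h3, AddEquiv.symm_apply_apply]
  rw [h2, h4]

lemma comm_elt (e : AddAut (Fin k → ℤ)) (w : Fin k → ℤ) :
    (inl (ofAdd (e w - w)) : SP k e) = ⁅(inr (ofAdd 1) : SP k e), inl (ofAdd w)⁆ := by
  rw [commutatorElement_def, ← map_inv (inr : Multiplicative ℤ →* SP k e),
    ← inl_aut (φ := actHom e) (ofAdd 1) (ofAdd w),
    actHom_ofAdd_one, ← _root_.map_inv, ← _root_.map_mul, ← ofAdd_neg, ← ofAdd_add,
    sub_eq_add_neg]

lemma mem_ker_iff (e : AddAut (Fin k → ℤ)) (M : Matrix (Fin k) (Fin k) ℤ)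
    (he : ∀ v, e v = M.mulVec v) (hM : (M - 1).det ≠ 0) (g : SP k e) :
    g ∈ (rightHom : SP k e →* Multiplicative ℤ).ker ↔
      ∃ n : ℤ, n ≠ 0 ∧ g ^ n ∈ commutator (SP k e) := by
  constructor
  · intro hg
    rw [← range_inl_eq_ker_rightHom] at hg
    obtain ⟨x, rfl⟩ := hg
    refine ⟨(M - 1).det, hM, ?_⟩
    set v := x.toAdd with hv
    have hx : x = ofAdd v := rfl
    set w := (M - 1).adjugate.mulVec v with hw
    have key : e w - w = (M - 1).det • v := by
      rw [he]
      calc M.mulVec w - w = (M - 1).mulVec w := by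
            rw [Matrix.sub_mulVec, Matrix.one_mulVec]
        _ = ((M - 1) * (M - 1).adjugate).mulVec v := by
            rw [← Matrix.mulVec_mulVec, hw]
        _ = (M - 1).det • v := by
            rw [Matrix.mul_adjugate, Matrix.smul_mulVec, Matrix.one_mulVec]
    have : (inl (ofAdd v) : SP k e) ^ ((M - 1).det) = inl (ofAdd ((M-1).det • v)) := by
      rw [← map_zpow, ← ofAdd_zsmul]
    rw [hx, this, ← key, comm_elt]
    exact Subgroup.commutator_mem_commutator (Subgroup.mem_top _) (Subgroup.mem_top _)
  · rintro ⟨n, hn, hgn⟩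
    have h1 : commutator (SP k e) ≤ (rightHom : SP k e →* Multiplicative ℤ).ker :=
      Abelianization.commutator_subset_ker _
    have := h1 hgn
    rw [MonoidHom.mem_ker, map_zpow] at this
    rw [MonoidHom.mem_ker]
    have h2 : (n • (rightHom g).toAdd) = 0 := by
      have := congrArg Multiplicative.toAdd this
      simpa [toAdd_zpow] using this
    rcases smul_eq_zero.mp h2 with h | h
    · exact absurd h hn
    · rw [← ofAdd_toAdd (rightHom g), h, ofAdd_zero]

lemma conj_inl (e : AddAut (Fin k → ℤ)) (g : SP k e) (x : Multiplicative (Fin k → ℤ)) :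
    g * inl x * g⁻¹ = inl (actHom e g.right x) := by
  ext <;>
    simp [mul_left, mul_right, inv_left, inv_right, left_inl, right_inl, mul_comm, mul_assoc,
      mul_left_comm]

lemma mat_ext {M N : Matrix (Fin k) (Fin k) ℤ} (h : ∀ v, M.mulVec v = N.mulVec v) : M = N := by
  ext i j
  have := congrFun (h (Pi.single j 1)) i
  simpa [Matrix.mulVec_single] using this

end EPaux


open EPaux SemidirectProduct Multiplicative in
/-- **Theorem (Endo–Pajitnov)**.  Let `A, B ∈ SL(k, ℤ)` such that `1` is not an eigenvalue
of `A` nor of `B` (equivalently, `det (A - I) ≠ 0` and `det (B - I) ≠ 0`).  If the groups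
`S_A` and `S_B` are isomorphic, then `A` is conjugate to `B` or to `B⁻¹` in `GL(k, ℤ)`:
there is an integer matrix `C`, invertible over `ℤ`, with `C A C⁻¹ = B` or `C A C⁻¹ = B⁻¹`. -/
theorem conjugate_of_semidirect_iso
    (k : ℕ) (hk : 1 ≤ k)
    (A B : Matrix (Fin k) (Fin k) ℤ) (hA : A.det = 1) (hB : B.det = 1)
    (hA1 : (A - 1).det ≠ 0) (hB1 : (B - 1).det ≠ 0)
    (eA : AddAut (Fin k → ℤ)) (heA : ∀ v, eA v = A.mulVec v)
    (eB : AddAut (Fin k → ℤ)) (heB : ∀ v, eB v = B.mulVec v)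
    (hiso : Nonempty (SemidirectZ k eA ≃* SemidirectZ k eB)) :
    ∃ C : Matrix (Fin k) (Fin k) ℤ, IsUnit C.det ∧
      (C * A = B * C ∨ C * A = B⁻¹ * C) := by
  obtain ⟨φ₀⟩ := hiso
  have ψ : SP k eA ≃* SP k eB := φ₀
  clear φ₀
  -- ψ maps the commutator subgroup into the commutator subgroup
  have hcomm : ∀ x ∈ commutator (SP k eA), ψ x ∈ commutator (SP k eB) := by
    intro x hx
    have h1 : Subgroup.map ψ.toMonoidHom (commutator (SP k eA)) =
        ⁅Subgroup.map ψ.toMonoidHom ⊤, Subgroup.map ψ.toMonoidHom ⊤⁆ :=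
      Subgroup.map_commutator ⊤ ⊤ ψ.toMonoidHom
    have h2 : (⁅Subgroup.map ψ.toMonoidHom ⊤, Subgroup.map ψ.toMonoidHom ⊤⁆ :
        Subgroup (SP k eB)) ≤ commutator (SP k eB) :=
      Subgroup.commutator_mono le_top le_top
    exact h2 (h1 ▸ Subgroup.mem_map_of_mem _ hx)
  -- ψ maps the kernel of rightHom into the kernel of rightHom
  have hmap : ∀ g : SP k eA, g ∈ (rightHom : SP k eA →* Multiplicative ℤ).ker →
      ψ g ∈ (rightHom : SP k eB →* Multiplicative ℤ).ker := by
    intro g hg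
    rw [mem_ker_iff eA A heA hA1] at hg
    obtain ⟨n, hn, hgn⟩ := hg
    rw [mem_ker_iff eB B heB hB1]
    exact ⟨n, hn, by rw [← map_zpow]; exact hcomm _ hgn⟩
  -- the induced map `c` on ℤ^k, and its inverse `c'`
  set c : (Fin k → ℤ) → (Fin k → ℤ) := fun v => ((ψ (inl (ofAdd v))).left).toAdd with hcdef
  have hc : ∀ v, ψ (inl (ofAdd v)) = inl (ofAdd (c v)) := by
    intro v
    have h1 : ψ (inl (ofAdd v)) ∈ (rightHom : SP k eB →* Multiplicative ℤ).ker :=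
      hmap _ (by rw [MonoidHom.mem_ker, rightHom_inl])
    rw [← range_inl_eq_ker_rightHom] at h1
    obtain ⟨x, hx⟩ := h1
    rw [← hx]
    congr 1
    simp only [hcdef]
    rw [← hx]
    simp
  set c' : (Fin k → ℤ) → (Fin k → ℤ) := fun v => ((ψ.symm (inl (ofAdd v))).left).toAdd with hc'def
  have hc' : ∀ v, ψ.symm (inl (ofAdd v)) = inl (ofAdd (c' v)) := by
    intro v
    have h1 : ψ.symm (inl (ofAdd v)) ∈ (rightHom : SP k eA →* Multiplicative ℤ).ker := by
      rw [mem_ker_iff eA A heA hA1]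
      have h2 : (inl (ofAdd v) : SP k eB) ∈ (rightHom : SP k eB →* Multiplicative ℤ).ker := by
        rw [MonoidHom.mem_ker, rightHom_inl]
      rw [mem_ker_iff eB B heB hB1] at h2
      obtain ⟨n, hn, h3⟩ := h2
      refine ⟨n, hn, ?_⟩
      -- pull back commutator membership through ψ.symm
      have h4 : ∀ y ∈ commutator (SP k eB), ψ.symm y ∈ commutator (SP k eA) := by
        intro y hy
        have h5 : Subgroup.map ψ.symm.toMonoidHom (commutator (SP k eB)) =
            ⁅Subgroup.map ψ.symm.toMonoidHom ⊤, Subgroup.map ψ.symm.toMonoidHom ⊤⁆ :=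
          Subgroup.map_commutator ⊤ ⊤ ψ.symm.toMonoidHom
        have h6 : (⁅Subgroup.map ψ.symm.toMonoidHom ⊤, Subgroup.map ψ.symm.toMonoidHom ⊤⁆ :
            Subgroup (SP k eA)) ≤ commutator (SP k eA) :=
          Subgroup.commutator_mono le_top le_top
        exact h6 (h5 ▸ Subgroup.mem_map_of_mem _ hy)
      have h7 := h4 _ h3
      rwa [map_zpow ψ.symm (inl (ofAdd v)) n] at h7
    rw [← range_inl_eq_ker_rightHom] at h1
    obtain ⟨x, hx⟩ := h1
    rw [← hx]
    congr 1
    simp only [hc'def]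
    rw [← hx]
    simp
  have hc'c : ∀ v, c' (c v) = v := by
    intro v
    have := congrArg ψ.symm (hc v)
    rw [ψ.symm_apply_apply, hc' (c v)] at this
    have := inl_injective this.symm
    exact ofAdd.injective this
  have hcc' : ∀ v, c (c' v) = v := by
    intro v
    have := congrArg ψ (hc' v)
    rw [ψ.apply_symm_apply, hc (c' v)] at this
    have := inl_injective this.symm
    exact ofAdd.injective this
  -- additivity of c and c'
  have hcadd : ∀ v w, c (v + w) = c v + c w := by
    intro v w
    have h1 : (inl (ofAdd (c (v + w))) : SP k eB) = inl (ofAdd (c v + c w)) := by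
      rw [← hc, ofAdd_add, _root_.map_mul, _root_.map_mul, hc, hc, ← _root_.map_mul,
        ← ofAdd_add]
    exact ofAdd.injective (inl_injective h1)
  have hc'add : ∀ v w, c' (v + w) = c' v + c' w := by
    intro v w
    have h1 : (inl (ofAdd (c' (v + w))) : SP k eA) = inl (ofAdd (c' v + c' w)) := by
      rw [← hc', ofAdd_add, _root_.map_mul, _root_.map_mul, hc', hc', ← _root_.map_mul,
        ← ofAdd_add]
    exact ofAdd.injective (inl_injective h1)
  set cadd : (Fin k → ℤ) →+ (Fin k → ℤ) := AddMonoidHom.mk' c hcadd with hcadddef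
  set c'add : (Fin k → ℤ) →+ (Fin k → ℤ) := AddMonoidHom.mk' c' hc'add with hc'adddef
  -- the matrices of c and c'
  set C : Matrix (Fin k) (Fin k) ℤ := Matrix.of fun i j => c (Pi.single j 1) i with hCdef
  set C' : Matrix (Fin k) (Fin k) ℤ := Matrix.of fun i j => c' (Pi.single j 1) i with hC'def
  have hmulVec : ∀ (d : (Fin k → ℤ) →+ (Fin k → ℤ)) (v : Fin k → ℤ),
      (Matrix.of fun i j => d (Pi.single j 1) i).mulVec v = d v := by
    intro d v
    have h1 : v = ∑ j : Fin k, v j • Pi.single j (1 : ℤ) := by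
      conv_lhs => rw [← Finset.univ_sum_single v]
      congr 1
      funext j
      rw [← Pi.single_smul, smul_eq_mul, mul_one]
    funext i
    rw [Matrix.mulVec, dotProduct]
    conv_rhs => rw [h1, map_sum]
    simp only [map_zsmul]
    rw [Finset.sum_apply]
    congr 1
    funext j
    simp [Matrix.of_apply, mul_comm]
  have hCmul : ∀ v, C.mulVec v = c v := fun v => hmulVec cadd v
  have hC'mul : ∀ v, C'.mulVec v = c' v := fun v => hmulVec c'add v
  have hCC' : C * C' = 1 := by
    apply mat_ext
    intro v
    rw [← Matrix.mulVec_mulVec, hC'mul, hCmul, hcc', Matrix.one_mulVec]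
  have hunit : IsUnit C.det :=
    isUnit_iff_exists_inv.mpr ⟨C'.det, by rw [← Matrix.det_mul, hCC', Matrix.det_one]⟩
  -- the image of the generator t
  set s : SP k eB := ψ (inr (ofAdd 1)) with hsdef
  set ε : ℤ := (rightHom s).toAdd with hεdef
  -- ε is a unit
  have hofAdd_pow : ∀ (e : AddAut (Fin k → ℤ)) (m : ℤ),
      (inr (ofAdd m) : SP k e) = (inr (ofAdd 1)) ^ m := by
    intro e m
    rw [← map_zpow]
    congr 1
    rw [← ofAdd_zsmul, smul_eq_mul, mul_one]
  have hεunit : IsUnit ε := by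
    set g : SP k eA := ψ.symm (inr (ofAdd 1)) with hgdef
    have h1 : (inr (ofAdd 1) : SP k eB) = ψ (inl g.left) * ψ (inr g.right) := by
      rw [← _root_.map_mul, inl_left_mul_inr_right, hgdef, ψ.apply_symm_apply]
    have h2 : rightHom (ψ (inl g.left)) = 1 := hmap _ (by rw [MonoidHom.mem_ker, rightHom_inl])
    have h3 : (ofAdd (1:ℤ)) = rightHom (ψ (inr g.right)) := by
      have h1' := congrArg (rightHom : SP k eB →* Multiplicative ℤ) h1
      rwa [_root_.map_mul, h2, one_mul, rightHom_inr] at h1'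
    have h4 : inr g.right = (inr (ofAdd 1) : SP k eA) ^ (g.right.toAdd) := by
      rw [← hofAdd_pow eA g.right.toAdd, ofAdd_toAdd]
    rw [h4, map_zpow, map_zpow] at h3
    have h5 : (1 : ℤ) = g.right.toAdd • ε := by
      have := congrArg Multiplicative.toAdd h3
      simpa [toAdd_zpow, hεdef, hsdef] using this
    exact isUnit_iff_exists_inv.mpr ⟨g.right.toAdd, by rw [mul_comm, ← smul_eq_mul]; exact h5.symm⟩
  -- the conjugation relation
  have hrel : ∀ v : Fin k → ℤ, ofAdd (c (eA v)) = actHom eB (ofAdd ε) (ofAdd (c v)) := by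
    intro v
    have h1 : (inl (ofAdd (eA v)) : SP k eA) = inr (ofAdd 1) * inl (ofAdd v) * (inr (ofAdd 1))⁻¹ := by
      rw [← map_inv (inr : Multiplicative ℤ →* SP k eA), ← inl_aut (φ := actHom eA) (ofAdd 1),
        actHom_ofAdd_one]
    have h2 := congrArg ψ h1
    rw [hc, _root_.map_mul, _root_.map_mul, _root_.map_inv, hc, ← hsdef] at h2
    rw [conj_inl eB s (ofAdd (c v))] at h2
    have hsr : s.right = ofAdd ε := by rw [hεdef, ofAdd_toAdd]; rfl
    rw [hsr] at h2
    exact inl_injective h2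
  rcases Int.isUnit_iff.mp hεunit with h | h
  · refine ⟨C, hunit, Or.inl (mat_ext fun v => ?_)⟩
    calc (C * A).mulVec v = C.mulVec (A.mulVec v) := by rw [← Matrix.mulVec_mulVec]
      _ = c (eA v) := by rw [hCmul, heA]
      _ = eB (c v) := ofAdd.injective (by rw [hrel v, h, actHom_ofAdd_one])
      _ = B.mulVec (C.mulVec v) := by rw [heB, hCmul]
      _ = (B * C).mulVec v := by rw [Matrix.mulVec_mulVec]
  · have hBunit : IsUnit B.det := by rw [hB]; exact isUnit_one
    have hBinv : ∀ u, eB.symm u = B⁻¹.mulVec u := by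
      intro u
      apply eB.injective
      rw [AddEquiv.apply_symm_apply, heB, Matrix.mulVec_mulVec,
        Matrix.mul_nonsing_inv _ hBunit, Matrix.one_mulVec]
    refine ⟨C, hunit, Or.inr (mat_ext fun v => ?_)⟩
    calc (C * A).mulVec v = C.mulVec (A.mulVec v) := by rw [← Matrix.mulVec_mulVec]
      _ = c (eA v) := by rw [hCmul, heA]
      _ = eB.symm (c v) := ofAdd.injective (by rw [hrel v, h, actHom_ofAdd_neg_one])
      _ = B⁻¹.mulVec (C.mulVec v) := by rw [hBinv, hCmul]
      _ = (B⁻¹ * C).mulVec v := by rw [Matrix.mulVec_mulVec]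
end

section
/- Let k ≥ 1 and let A, B ∈ SL(k, ℤ) be such that 1 is not an eigenvalue of A nor of B. If S_A and S_B are isomorphic groups and A is diagonalizable over ℂ, then B is diagonalizable over ℂ. -/
open Matrix

/-- A square complex matrix is diagonalizable if it is similar to a diagonal matrix. -/
def Matrix.Diagonalizable {k : ℕ} (A : Matrix (Fin k) (Fin k) ℂ) : Prop :=
  ∃ P D : Matrix (Fin k) (Fin k) ℂ, IsUnit P.det ∧ D.IsDiag ∧ A = P⁻¹ * D * P

/-- The inclusion of `ℤ^k` into `S_A`. -/
def inlZ (k : ℕ) (e : AddAut (Fin k → ℤ)) : Multiplicative (Fin k → ℤ) →* SemidirectZ k e :=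
  SemidirectProduct.inl

/-- The inclusion of `ℤ` into `S_A`. -/
def inrZ (k : ℕ) (e : AddAut (Fin k → ℤ)) : Multiplicative ℤ →* SemidirectZ k e :=
  SemidirectProduct.inr

lemma inl_conj (k : ℕ) (e : AddAut (Fin k → ℤ)) (w : Fin k → ℤ) :
    inlZ k e (Multiplicative.ofAdd (e w)) =
      inrZ k e (Multiplicative.ofAdd 1) * inlZ k e (Multiplicative.ofAdd w) *
        (inrZ k e (Multiplicative.ofAdd 1))⁻¹ := by
  have := SemidirectProduct.inl_aut (φ := (zpowersHom (MulAut (Multiplicative (Fin k → ℤ)))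
    (AddEquiv.toMultiplicative e))) (Multiplicative.ofAdd (1 : ℤ)) (Multiplicative.ofAdd w)
  simp [zpowersHom_apply, inlZ, inrZ] at this
  exact this

lemma aux_kill (k : ℕ) (A : Matrix (Fin k) (Fin k) ℤ) (hA1 : (A - 1).det ≠ 0)
    (eA : AddAut (Fin k → ℤ)) (heA : ∀ v, eA v = A.mulVec v)
    (f : SemidirectZ k eA →* Multiplicative ℤ) (v : Fin k → ℤ) :
    f (inlZ k eA (Multiplicative.ofAdd v)) = 1 := by
  have hinv : ∀ w : Fin k → ℤ,
      f (inlZ k eA (Multiplicative.ofAdd (A.mulVec w))) =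
      f (inlZ k eA (Multiplicative.ofAdd w)) := by
    intro w
    rw [← heA w, inl_conj, _root_.map_mul, _root_.map_mul, map_inv]
    exact mul_inv_eq_of_eq_mul (mul_comm _ _)
  have hadd : ∀ w u : Fin k → ℤ,
      f (inlZ k eA (Multiplicative.ofAdd (w + u))) =
      f (inlZ k eA (Multiplicative.ofAdd w)) * f (inlZ k eA (Multiplicative.ofAdd u)) := by
    intro w u
    rw [← _root_.map_mul, ← _root_.map_mul]
    rfl
  have hsub : ∀ w : Fin k → ℤ,
      f (inlZ k eA (Multiplicative.ofAdd ((A - 1).mulVec w))) = 1 := by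
    intro w
    have h2 : A.mulVec w = (A - 1).mulVec w + w := by
      rw [Matrix.sub_mulVec, Matrix.one_mulVec]; ring
    have := hinv w
    rw [h2, hadd] at this
    exact mul_eq_right.mp this
  set m : ℤ := (A - 1).det with hm
  have hmv : m • v = (A - 1).mulVec ((A - 1).adjugate.mulVec v) := by
    rw [Matrix.mulVec_mulVec, Matrix.mul_adjugate, Matrix.smul_mulVec, Matrix.one_mulVec]
  have hzpow : f (inlZ k eA (Multiplicative.ofAdd v)) ^ m = 1 := by
    rw [← map_zpow, ← map_zpow]
    have : (Multiplicative.ofAdd v) ^ m = Multiplicative.ofAdd (m • v) := rfl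
    rw [this, hmv, hsub]
  have : m * (Multiplicative.toAdd (f (inlZ k eA (Multiplicative.ofAdd v)))) = 0 := by
    have := congrArg Multiplicative.toAdd hzpow
    simpa [mul_comm] using this
  rcases mul_eq_zero.mp this with h | h
  · exact absurd h hA1
  · have h1 : Multiplicative.toAdd (f (inlZ k eA (Multiplicative.ofAdd v))) =
        Multiplicative.toAdd (1 : Multiplicative ℤ) := h
    exact Multiplicative.toAdd.injective h1

/-- The quotient map `S_A → ℤ`. -/
def rZ (k : ℕ) (e : AddAut (Fin k → ℤ)) : SemidirectZ k e →* Multiplicative ℤ :=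
  SemidirectProduct.rightHom

lemma decompZ (k : ℕ) (e : AddAut (Fin k → ℤ)) (x : SemidirectZ k e) :
    ∃ n m, x = inlZ k e n * inrZ k e m ∧ rZ k e x = m := by
  refine ⟨SemidirectProduct.left x, SemidirectProduct.right x,
    (SemidirectProduct.inl_left_mul_inr_right x).symm, rfl⟩

lemma eq_inl_of_right_eq_one (k : ℕ) (e : AddAut (Fin k → ℤ)) (x : SemidirectZ k e)
    (h : rZ k e x = 1) : ∃ n, x = inlZ k e n := by
  obtain ⟨n, m, hx, hm⟩ := decompZ k e x
  have hm1 : m = 1 := hm.symm.trans h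
  refine ⟨n, ?_⟩
  rw [hx, hm1, _root_.map_one, mul_one]

lemma inlZ_injective (k : ℕ) (e : AddAut (Fin k → ℤ)) :
    Function.Injective (inlZ k e) :=
  SemidirectProduct.inl_injective

lemma half (k : ℕ) (A : Matrix (Fin k) (Fin k) ℤ) (hA1 : (A - 1).det ≠ 0)
    (eA : AddAut (Fin k → ℤ)) (heA : ∀ v, eA v = A.mulVec v)
    (eB : AddAut (Fin k → ℤ)) (φ : SemidirectZ k eA ≃* SemidirectZ k eB) :
    ∃ g : (Fin k → ℤ) →+ (Fin k → ℤ),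
      ∀ v, φ (inlZ k eA (Multiplicative.ofAdd v)) = inlZ k eB (Multiplicative.ofAdd (g v)) := by
  have hkill : ∀ v : Fin k → ℤ, rZ k eB (φ (inlZ k eA (Multiplicative.ofAdd v))) = 1 := by
    intro v
    exact aux_kill k A hA1 eA heA ((rZ k eB).comp φ.toMonoidHom) v
  choose n hn using fun v => eq_inl_of_right_eq_one k eB _ (hkill v)
  have hadd : ∀ v w, n (v + w) = n v * n w := by
    intro v w
    apply inlZ_injective k eB
    have : φ (inlZ k eA (Multiplicative.ofAdd (v + w))) =
        φ (inlZ k eA (Multiplicative.ofAdd v)) * φ (inlZ k eA (Multiplicative.ofAdd w)) := by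
      rw [← _root_.map_mul, ← _root_.map_mul]; rfl
    rw [hn, hn, hn, ← _root_.map_mul] at this
    exact this
  refine ⟨AddMonoidHom.mk' (fun v => Multiplicative.toAdd (n v)) ?_, ?_⟩
  · intro v w; exact congrArg Multiplicative.toAdd (hadd v w)
  · intro v
    rw [hn v]
    rfl

lemma conj_formula (k : ℕ) (e : AddAut (Fin k → ℤ)) (x : SemidirectZ k e)
    (n : Multiplicative (Fin k → ℤ)) :
    x * inlZ k e n * x⁻¹ = inlZ k e
      ((zpowersHom (MulAut (Multiplicative (Fin k → ℤ))) (AddEquiv.toMultiplicative e))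
        (rZ k e x) n) := by
  obtain ⟨a, m, hx, hm⟩ := decompZ k e x
  rw [hm, hx]
  have key := SemidirectProduct.inl_aut (φ := (zpowersHom (MulAut (Multiplicative (Fin k → ℤ)))
    (AddEquiv.toMultiplicative e))) m n
  have key' : inrZ k e m * inlZ k e n * (inrZ k e m)⁻¹ = inlZ k e
      ((zpowersHom (MulAut (Multiplicative (Fin k → ℤ))) (AddEquiv.toMultiplicative e)) m n) := by
    rw [show ((inrZ k e) m)⁻¹ = inrZ k e m⁻¹ from (_root_.map_inv _ _).symm]
    exact key.symm
  calc inlZ k e a * inrZ k e m * inlZ k e n * (inlZ k e a * inrZ k e m)⁻¹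
      = inlZ k e a * (inrZ k e m * inlZ k e n * (inrZ k e m)⁻¹) * (inlZ k e a)⁻¹ := by
        rw [_root_.mul_inv_rev]; group
    _ = inlZ k e a * inlZ k e
          ((zpowersHom (MulAut (Multiplicative (Fin k → ℤ))) (AddEquiv.toMultiplicative e)) m n)
          * (inlZ k e a)⁻¹ := by rw [key']
    _ = inlZ k e (a * (zpowersHom (MulAut (Multiplicative (Fin k → ℤ)))
          (AddEquiv.toMultiplicative e)) m n * a⁻¹) := by
        rw [_root_.map_mul, _root_.map_mul, map_inv]
    _ = _ := by rw [mul_comm a, mul_assoc, mul_inv_cancel, mul_one]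

lemma action_one (k : ℕ) (e : AddAut (Fin k → ℤ)) (w : Fin k → ℤ) :
    (zpowersHom (MulAut (Multiplicative (Fin k → ℤ))) (AddEquiv.toMultiplicative e))
      (Multiplicative.ofAdd 1) (Multiplicative.ofAdd w) = Multiplicative.ofAdd (e w) := by
  simp [zpowersHom_apply]

lemma action_neg_one (k : ℕ) (e : AddAut (Fin k → ℤ)) (w : Fin k → ℤ) :
    (zpowersHom (MulAut (Multiplicative (Fin k → ℤ))) (AddEquiv.toMultiplicative e))
      (Multiplicative.ofAdd (-1)) (Multiplicative.ofAdd w) = Multiplicative.ofAdd (e.symm w) := by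
  simp [zpowersHom_apply, MulAut.inv_def]

lemma bridge (k : ℕ) (A B : Matrix (Fin k) (Fin k) ℤ)
    (hA1 : (A - 1).det ≠ 0) (hB1 : (B - 1).det ≠ 0)
    (eA : AddAut (Fin k → ℤ)) (heA : ∀ v, eA v = A.mulVec v)
    (eB : AddAut (Fin k → ℤ)) (heB : ∀ v, eB v = B.mulVec v)
    (φ : SemidirectZ k eA ≃* SemidirectZ k eB) :
    ∃ g g' : (Fin k → ℤ) →+ (Fin k → ℤ),
      (∀ v, g' (g v) = v) ∧ (∀ v, g (g' v) = v) ∧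
      ((∀ v, g (A.mulVec v) = B.mulVec (g v)) ∨ (∀ v, B.mulVec (g (A.mulVec v)) = g v)) := by
  obtain ⟨g, hg⟩ := half k A hA1 eA heA eB φ
  obtain ⟨g', hg'⟩ := half k B hB1 eB heB eA φ.symm
  have hgg' : ∀ v, g' (g v) = v := by
    intro v
    have h1 : φ.symm (φ (inlZ k eA (Multiplicative.ofAdd v))) = inlZ k eA (Multiplicative.ofAdd v) :=
      φ.symm_apply_apply _
    rw [hg v, hg' (g v)] at h1
    have := inlZ_injective k eA h1
    exact Multiplicative.ofAdd.injective this
  have hg'g : ∀ v, g (g' v) = v := by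
    intro v
    have h1 : φ (φ.symm (inlZ k eB (Multiplicative.ofAdd v))) = inlZ k eB (Multiplicative.ofAdd v) :=
      φ.apply_symm_apply _
    rw [hg' v, hg (g' v)] at h1
    have := inlZ_injective k eB h1
    exact Multiplicative.ofAdd.injective this
  refine ⟨g, g', hgg', hg'g, ?_⟩
  -- the image of the generator
  set τ : SemidirectZ k eB := φ (inrZ k eA (Multiplicative.ofAdd 1)) with hτ
  set c : Multiplicative ℤ := rZ k eB τ with hc
  -- key conjugation identity
  have hconj : ∀ v : Fin k → ℤ,
      Multiplicative.ofAdd (g (eA v)) =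
        (zpowersHom (MulAut (Multiplicative (Fin k → ℤ))) (AddEquiv.toMultiplicative eB)) c
          (Multiplicative.ofAdd (g v)) := by
    intro v
    have h1 := congrArg φ (inl_conj k eA v)
    rw [_root_.map_mul, _root_.map_mul, map_inv] at h1
    rw [hg, hg] at h1
    rw [← hτ, conj_formula k eB τ, ← hc] at h1
    exact Multiplicative.ofAdd.injective.eq_iff.mpr rfl ▸ inlZ_injective k eB h1
  -- c is ±1
  have hunit : IsUnit (Multiplicative.toAdd c) := by
    obtain ⟨a, m, hx, hm⟩ := decompZ k eA (φ.symm (inrZ k eB (Multiplicative.ofAdd 1)))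
    have h2 : φ (φ.symm (inrZ k eB (Multiplicative.ofAdd 1))) = inrZ k eB (Multiplicative.ofAdd 1) :=
      φ.apply_symm_apply _
    rw [hx, _root_.map_mul] at h2
    have h3 : rZ k eB (φ (inlZ k eA a) * φ (inrZ k eA m)) = Multiplicative.ofAdd 1 := by
      rw [h2]; exact SemidirectProduct.rightHom_inr _
    rw [_root_.map_mul] at h3
    have h4 : rZ k eB (φ (inlZ k eA a)) = 1 := by
      rw [show a = Multiplicative.ofAdd (Multiplicative.toAdd a) from rfl, hg]
      exact SemidirectProduct.rightHom_inl _
    have h5 : inrZ k eA m = (inrZ k eA (Multiplicative.ofAdd 1)) ^ (Multiplicative.toAdd m) := by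
      rw [← map_zpow]
      congr 1
      rw [← ofAdd_zsmul, smul_eq_mul, mul_one]
      rfl
    have h6 : rZ k eB (φ (inrZ k eA m)) = c ^ (Multiplicative.toAdd m) := by
      rw [h5, map_zpow, map_zpow]
    rw [h4, one_mul, h6] at h3
    have h7 : (Multiplicative.toAdd m) * (Multiplicative.toAdd c) = 1 := by
      have := congrArg Multiplicative.toAdd h3
      simpa [mul_comm] using this
    exact IsUnit.of_mul_eq_one _ ((mul_comm _ _).trans h7)
  rcases Int.isUnit_iff.mp hunit with h | h
  · left
    intro v
    have hc1 : c = Multiplicative.ofAdd 1 := Multiplicative.toAdd.injective h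
    have := hconj v
    rw [hc1, action_one] at this
    have h8 := Multiplicative.ofAdd.injective this
    rw [heA, heB] at h8
    exact h8
  · right
    intro v
    have hc1 : c = Multiplicative.ofAdd (-1) := Multiplicative.toAdd.injective h
    have := hconj v
    rw [hc1, action_neg_one] at this
    have h8 := Multiplicative.ofAdd.injective this
    rw [heA] at h8
    have h9 : eB (g (A.mulVec v)) = g v := by rw [h8]; exact eB.apply_symm_apply _
    rw [heB] at h9
    exact h9

lemma matrix_of_hom (k : ℕ) (g : (Fin k → ℤ) →+ (Fin k → ℤ)) :
    ∃ P : Matrix (Fin k) (Fin k) ℤ, ∀ v, P.mulVec v = g v := by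
  refine ⟨LinearMap.toMatrix' g.toIntLinearMap, fun v => ?_⟩
  rw [← Matrix.toLin'_apply, Matrix.toLin'_toMatrix']
  rfl

lemma matrix_ext_of_mulVec {k : ℕ} {M N : Matrix (Fin k) (Fin k) ℤ}
    (h : ∀ v, M.mulVec v = N.mulVec v) : M = N := by
  ext i j
  have := congrFun (h (Pi.single j 1)) i
  rwa [Matrix.mulVec_single_one, Matrix.mulVec_single_one] at this


/-- **Corollary (Endo–Pajitnov)**.  Let `A, B ∈ SL(k, ℤ)` such that `1` is not an
eigenvalue of `A` nor of `B`.  If `S_A ≅ S_B` and `A` is diagonalizable over `ℂ`, then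
`B` is diagonalizable over `ℂ`. -/
theorem diagonalizable_of_semidirect_iso
    (k : ℕ) (hk : 1 ≤ k)
    (A B : Matrix (Fin k) (Fin k) ℤ) (hA : A.det = 1) (hB : B.det = 1)
    (hA1 : (A - 1).det ≠ 0) (hB1 : (B - 1).det ≠ 0)
    (eA : AddAut (Fin k → ℤ)) (heA : ∀ v, eA v = A.mulVec v)
    (eB : AddAut (Fin k → ℤ)) (heB : ∀ v, eB v = B.mulVec v)
    (hiso : Nonempty (SemidirectZ k eA ≃* SemidirectZ k eB))
    (hdiag : (A.map (Int.cast : ℤ → ℂ)).Diagonalizable) :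
    (B.map (Int.cast : ℤ → ℂ)).Diagonalizable := by

  obtain ⟨φ⟩ := hiso
  obtain ⟨g, g', hgg', hg'g, hrel⟩ := bridge k A B hA1 hB1 eA heA eB heB φ
  obtain ⟨P, hP⟩ := matrix_of_hom k g
  obtain ⟨P', hP'⟩ := matrix_of_hom k g'
  have hPP' : P * P' = 1 := by
    apply matrix_ext_of_mulVec
    intro v
    rw [← Matrix.mulVec_mulVec, hP', hP, hg'g, Matrix.one_mulVec]
  have hP'P : P' * P = 1 := by
    apply matrix_ext_of_mulVec
    intro v
    rw [← Matrix.mulVec_mulVec, hP, hP', hgg', Matrix.one_mulVec]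
  -- pass to ℂ
  have hmul : ∀ M N : Matrix (Fin k) (Fin k) ℤ,
      ((M * N).map (Int.cast : ℤ → ℂ)) = M.map Int.cast * N.map Int.cast := by
    intro M N
    exact Matrix.map_mul (f := Int.castRingHom ℂ)
  have hone : ((1 : Matrix (Fin k) (Fin k) ℤ).map (Int.cast : ℤ → ℂ)) = 1 :=
    Matrix.map_one _ (by simp) (by simp)
  set Ac := A.map (Int.cast : ℤ → ℂ) with hAcdef
  set Bc := B.map (Int.cast : ℤ → ℂ) with hBcdef
  set Pc := P.map (Int.cast : ℤ → ℂ) with hPcdef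
  set P'c := P'.map (Int.cast : ℤ → ℂ) with hP'cdef
  have hPc : Pc * P'c = 1 := by rw [← hmul, hPP', hone]
  have hP'c : P'c * Pc = 1 := by rw [← hmul, hP'P, hone]
  obtain ⟨Q, D, hQ, hD, hAc⟩ := hdiag
  have hdetP' : IsUnit P'c.det := by
    apply IsUnit.of_mul_eq_one Pc.det
    rw [← Matrix.det_mul, hP'c, Matrix.det_one]
  have hR : IsUnit (Q * P'c).det := by
    rw [Matrix.det_mul]; exact hQ.mul hdetP'
  have hRinv : (Q * P'c)⁻¹ = Pc * Q⁻¹ := by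
    rw [Matrix.mul_inv_rev, Matrix.inv_eq_right_inv hP'c]
  have hdetAc : IsUnit Ac.det := by
    have hd : Ac.det = ((A.det : ℤ) : ℂ) := (RingHom.map_det (Int.castRingHom ℂ) A).symm
    rw [hd, hA]
    simp
  rcases hrel with h | h
  · -- relation P A = B P, so Bc = Pc Ac P'c
    have hPA : P * A = B * P := by
      apply matrix_ext_of_mulVec
      intro v
      rw [← Matrix.mulVec_mulVec, ← Matrix.mulVec_mulVec, hP, hP, h]
    have hPAc : Pc * Ac = Bc * Pc := by
      rw [← hmul, ← hmul, hPA]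
    have hBc : Bc = Pc * Ac * P'c := by
      calc Bc = Bc * (Pc * P'c) := by rw [hPc, mul_one]
        _ = (Bc * Pc) * P'c := by rw [← mul_assoc]
        _ = Pc * Ac * P'c := by rw [← hPAc]
    refine ⟨Q * P'c, D, hR, hD, ?_⟩
    rw [hRinv, hBc, hAc]
    simp only [mul_assoc]
  · -- relation B P A = P, so Bc = Pc Ac⁻¹ P'c
    have hBPA : B * P * A = P := by
      apply matrix_ext_of_mulVec
      intro v
      rw [← Matrix.mulVec_mulVec, ← Matrix.mulVec_mulVec, hP, hP, h]
    have h1 : Bc * Pc * Ac = Pc := by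
      rw [← hmul, ← hmul, hBPA]
    have h2 : Bc * Pc = Pc * Ac⁻¹ := by
      calc Bc * Pc = Bc * Pc * (Ac * Ac⁻¹) := by
            rw [Matrix.mul_nonsing_inv _ hdetAc, mul_one]
        _ = (Bc * Pc * Ac) * Ac⁻¹ := by rw [← mul_assoc]
        _ = Pc * Ac⁻¹ := by rw [h1]
    have hBc : Bc = Pc * Ac⁻¹ * P'c := by
      calc Bc = Bc * (Pc * P'c) := by rw [hPc, mul_one]
        _ = (Bc * Pc) * P'c := by rw [← mul_assoc]
        _ = Pc * Ac⁻¹ * P'c := by rw [h2]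
    have hdetD : IsUnit D.det := by
      rw [isUnit_iff_ne_zero]
      intro h0
      have : Ac.det = 0 := by
        rw [hAc, Matrix.det_mul, Matrix.det_mul, h0, mul_zero, zero_mul]
      rw [this] at hdetAc
      exact (isUnit_iff_ne_zero.mp hdetAc) rfl
    have hAinv : Ac⁻¹ = Q⁻¹ * D⁻¹ * Q := by
      rw [hAc, Matrix.mul_inv_rev, Matrix.mul_inv_rev,
        Matrix.nonsing_inv_nonsing_inv _ hQ, mul_assoc]
    have hDinv : (D⁻¹).IsDiag := by
      rw [← hD.diagonal_diag, Matrix.inv_diagonal]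
      exact Matrix.isDiag_diagonal _
    refine ⟨Q * P'c, D⁻¹, hR, hDinv, ?_⟩
    rw [hRinv, hBc, hAinv]
    simp only [mul_assoc]
end

section
/- Let k ≥ 1 and let A, B ∈ SL(k, ℤ). Suppose A is diagonalizable over ℂ with all eigenvalues different from 1, and B is not diagonalizable over ℂ and has all eigenvalues different from 1. Then the groups S_A and S_B are not isomorphic. -/
open SemidirectProduct Multiplicative Matrix

section EPAux

abbrev EPphi {k : ℕ} (e : AddAut (Fin k → ℤ)) :
    Multiplicative ℤ →* MulAut (Multiplicative (Fin k → ℤ)) :=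
  zpowersHom (MulAut (Multiplicative (Fin k → ℤ))) (AddEquiv.toMultiplicative e)

abbrev EPG {k : ℕ} (e : AddAut (Fin k → ℤ)) : Type :=
  SemidirectProduct (Multiplicative (Fin k → ℤ)) (Multiplicative ℤ) (EPphi e)

lemma ab_comm {G : Type*} [Group G] (a b : G) :
    Abelianization.of (a * b * a⁻¹ * b⁻¹) = 1 := by
  simp only [_root_.map_mul, _root_.map_inv]
  rw [mul_comm (Abelianization.of a) (Abelianization.of b)]
  group

lemma rightHom_eq_one_iff {k : ℕ} (e : AddAut (Fin k → ℤ)) (M : Matrix (Fin k) (Fin k) ℤ)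
    (he : ∀ v, e v = M.mulVec v) (hd : (1 - M).det ≠ 0)
    (g : EPG e) :
    SemidirectProduct.rightHom g = 1 ↔ ∃ n : ℤ, n ≠ 0 ∧ (Abelianization.of g) ^ n = 1 := by
  constructor
  · intro h
    have hgr : g.right = 1 := h
    set u : Fin k → ℤ := Multiplicative.toAdd g.left with hu
    have hg : g = SemidirectProduct.inl (Multiplicative.ofAdd u) := by
      rw [← SemidirectProduct.inl_left_mul_inr_right g, hgr]
      simp [hu]
    set d : ℤ := (1 - M).det with hdd
    set w : Fin k → ℤ := (1 - M).adjugate.mulVec u with hw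
    have hMw : (1 - M).mulVec w = d • u := by
      rw [hw, Matrix.mulVec_mulVec, Matrix.mul_adjugate, Matrix.smul_mulVec,
        Matrix.one_mulVec]
    have hdu : d • u = -(e w - w) := by
      have h5 : (1 - M).mulVec w = w - M.mulVec w := by
        rw [Matrix.sub_mulVec, Matrix.one_mulVec]
      rw [← hMw, h5, he w]
      abel
    refine ⟨d, hd, ?_⟩
    set t : EPG e := SemidirectProduct.inr (Multiplicative.ofAdd 1) with ht
    set x : EPG e := SemidirectProduct.inl (Multiplicative.ofAdd w) with hx
    have hc : (SemidirectProduct.inl (Multiplicative.ofAdd (e w - w)) : EPG e)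
        = t * x * t⁻¹ * x⁻¹ := by
      have h1 : (SemidirectProduct.inl
          ((EPphi e) (Multiplicative.ofAdd 1) (Multiplicative.ofAdd w)) : EPG e)
          = t * x * t⁻¹ := by
        rw [SemidirectProduct.inl_aut, ht, hx, _root_.map_inv]
      have h2 : ((EPphi e) (Multiplicative.ofAdd 1) (Multiplicative.ofAdd w))
          = Multiplicative.ofAdd (e w) := by simp
      rw [h2] at h1
      have h3 : (Multiplicative.ofAdd (e w - w))
          = Multiplicative.ofAdd (e w) * (Multiplicative.ofAdd w)⁻¹ := by
        simp [sub_eq_add_neg]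
      rw [h3, _root_.map_mul, _root_.map_inv, h1, ← hx]
    have h6 : (Abelianization.of g) ^ d = Abelianization.of (g ^ d) := (map_zpow _ _ _).symm
    rw [h6]
    have hgd : g ^ d = (SemidirectProduct.inl (Multiplicative.ofAdd (e w - w)) : EPG e)⁻¹ := by
      rw [hg, ← map_zpow, ← _root_.map_inv]
      congr 1
    rw [hgd, _root_.map_inv, hc, ab_comm, inv_one]
  · rintro ⟨n, hn, h1⟩
    have key : (SemidirectProduct.rightHom g) ^ n = 1 := by
      have h7 := congrArg (Abelianization.lift (SemidirectProduct.rightHom (φ := EPphi e))) h1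
      rw [map_zpow, Abelianization.lift_apply_of, _root_.map_one] at h7
      exact h7
    have h8 : n • Multiplicative.toAdd (SemidirectProduct.rightHom g) = 0 := by
      rw [← toAdd_zpow, key]
      rfl
    rw [zsmul_eq_mul] at h8
    have h0 : Multiplicative.toAdd (SemidirectProduct.rightHom g) = 0 :=
      (mul_eq_zero.1 h8).resolve_left hn
    have := congrArg Multiplicative.ofAdd h0
    simpa using this

lemma eval_one_charpoly {k : ℕ} (M : Matrix (Fin k) (Fin k) ℂ) :
    M.charpoly.eval 1 = (1 - M).det := by
  rw [Matrix.charpoly, eval_det, matPolyEquiv_charmatrix]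
  simp

lemma det_one_sub_ne_zero {k : ℕ} (A : Matrix (Fin k) (Fin k) ℤ)
    (hAeig : ∀ μ ∈ (A.map (Int.cast : ℤ → ℂ)).charpoly.roots, μ ≠ 1) :
    (1 - A).det ≠ 0 := by
  intro h
  set A' := A.map (Int.cast : ℤ → ℂ) with hA'
  have h1 : A'.charpoly.eval 1 = 0 := by
    rw [eval_one_charpoly]
    have h2 : ((1 : Matrix (Fin k) (Fin k) ℤ) - A).map ((Int.castRingHom ℂ) : ℤ → ℂ) = 1 - A' := by
      ext i j
      simp [Matrix.map_apply, Matrix.one_apply, Matrix.sub_apply, apply_ite, hA']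
    rw [← h2]
    have h3 := RingHom.map_det (Int.castRingHom ℂ) (1 - A)
    rw [RingHom.mapMatrix_apply] at h3
    rw [← h3, h]
    simp
  have hne : A'.charpoly ≠ 0 := (Matrix.charpoly_monic A').ne_zero
  have hm : (1 : ℂ) ∈ A'.charpoly.roots := by
    rw [Polynomial.mem_roots hne]
    exact Polynomial.IsRoot.def.2 h1
  exact hAeig 1 hm rfl

lemma matrix_eq_of_mulVec {k : ℕ} (M N : Matrix (Fin k) (Fin k) ℤ)
    (h : ∀ v, M.mulVec v = N.mulVec v) : M = N :=
  Matrix.toLin'.injective (LinearMap.ext fun v => by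
    rw [Matrix.toLin'_apply, Matrix.toLin'_apply, h])


end EPAux


open Matrix

lemma Matrix.Diagonalizable.similar {k : ℕ} {A' B' P Q : Matrix (Fin k) (Fin k) ℂ}
    (hPQ : P * Q = 1) (hPA : P * A' = B' * P) (h : A'.Diagonalizable) :
    B'.Diagonalizable := by
  obtain ⟨R, D, hR, hD, hAe⟩ := h
  have hQP : Q * P = 1 := mul_eq_one_comm.mp hPQ
  have hQdet : IsUnit Q.det := IsUnit.of_mul_eq_one P.det (by rw [← Matrix.det_mul, hQP, Matrix.det_one])
  refine ⟨R * Q, D, ?_, hD, ?_⟩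
  · rw [Matrix.det_mul]
    exact hR.mul hQdet
  · calc B' = B' * (P * Q) := by rw [hPQ, mul_one]
      _ = (B' * P) * Q := by rw [mul_assoc]
      _ = (P * A') * Q := by rw [hPA]
      _ = P * (R⁻¹ * D * R) * Q := by rw [hAe]
      _ = (R * Q)⁻¹ * D * (R * Q) := by
          rw [Matrix.mul_inv_rev, Matrix.inv_eq_right_inv hQP]
          simp only [mul_assoc]

lemma Matrix.Diagonalizable.inv {k : ℕ} {A' : Matrix (Fin k) (Fin k) ℂ}
    (h : A'.Diagonalizable) : A'⁻¹.Diagonalizable := by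
  obtain ⟨R, D, hR, hD, hAe⟩ := h
  refine ⟨R, D⁻¹, hR, ?_, ?_⟩
  · rw [← hD.diagonal_diag, Matrix.inv_diagonal]
    exact Matrix.isDiag_diagonal _
  · rw [hAe, Matrix.mul_inv_rev, Matrix.mul_inv_rev, Matrix.nonsing_inv_nonsing_inv _ hR]
    simp only [mul_assoc]

/-- **Corollary (Endo–Pajitnov)**.  Let `A, B ∈ SL(k, ℤ)`.  If `A` is diagonalizable over
`ℂ` with all eigenvalues different from `1`, and `B` is not diagonalizable over `ℂ` and has
all eigenvalues different from `1`, then the groups `S_A` and `S_B` are not isomorphic. -/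
theorem semidirect_diag_not_iso_nondiag
    (k : ℕ) (hk : 1 ≤ k)
    (A B : Matrix (Fin k) (Fin k) ℤ) (hA : A.det = 1) (hB : B.det = 1)
    (hAdiag : (A.map (Int.cast : ℤ → ℂ)).Diagonalizable)
    (hAeig : ∀ μ ∈ (A.map (Int.cast : ℤ → ℂ)).charpoly.roots, μ ≠ 1)
    (hBdiag : ¬ (B.map (Int.cast : ℤ → ℂ)).Diagonalizable)
    (hBeig : ∀ μ ∈ (B.map (Int.cast : ℤ → ℂ)).charpoly.roots, μ ≠ 1)
    (eA : AddAut (Fin k → ℤ)) (heA : ∀ v, eA v = A.mulVec v)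
    (eB : AddAut (Fin k → ℤ)) (heB : ∀ v, eB v = B.mulVec v) :
    ¬ Nonempty (SemidirectZ k eA ≃* SemidirectZ k eB) := by
  rintro ⟨f0⟩
  have f : EPG eA ≃* EPG eB := f0
  have hdA : (1 - A).det ≠ 0 := det_one_sub_ne_zero A hAeig
  have hdB : (1 - B).det ≠ 0 := det_one_sub_ne_zero B hBeig
  -- kernel preservation
  have hker : ∀ g : EPG eA, SemidirectProduct.rightHom g = 1 →
      SemidirectProduct.rightHom (f g) = 1 := by
    intro g hg
    rw [rightHom_eq_one_iff eB B heB hdB]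
    obtain ⟨n, hn, h1⟩ := (rightHom_eq_one_iff eA A heA hdA g).1 hg
    refine ⟨n, hn, ?_⟩
    have h2 := congrArg (Abelianization.map f.toMonoidHom) h1
    rw [map_zpow, Abelianization.map_of, _root_.map_one] at h2
    exact h2
  have hker' : ∀ g : EPG eB, SemidirectProduct.rightHom g = 1 →
      SemidirectProduct.rightHom (f.symm g) = 1 := by
    intro g hg
    rw [rightHom_eq_one_iff eA A heA hdA]
    obtain ⟨n, hn, h1⟩ := (rightHom_eq_one_iff eB B heB hdB g).1 hg
    refine ⟨n, hn, ?_⟩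
    have h2 := congrArg (Abelianization.map f.symm.toMonoidHom) h1
    rw [map_zpow, Abelianization.map_of, _root_.map_one] at h2
    exact h2
  -- the restricted maps
  set p : (Fin k → ℤ) → (Fin k → ℤ) :=
    fun u => Multiplicative.toAdd ((f (SemidirectProduct.inl (Multiplicative.ofAdd u))).left) with hp
  set q : (Fin k → ℤ) → (Fin k → ℤ) :=
    fun u => Multiplicative.toAdd ((f.symm (SemidirectProduct.inl (Multiplicative.ofAdd u))).left) with hq
  have keyp : ∀ u, f (SemidirectProduct.inl (Multiplicative.ofAdd u))
      = SemidirectProduct.inl (Multiplicative.ofAdd (p u)) := by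
    intro u
    have h := hker (SemidirectProduct.inl (Multiplicative.ofAdd u)) (SemidirectProduct.rightHom_inl _)
    rw [← SemidirectProduct.inl_left_mul_inr_right (f (SemidirectProduct.inl (Multiplicative.ofAdd u)))]
    have hr : (f (SemidirectProduct.inl (Multiplicative.ofAdd u))).right = 1 := h
    rw [hr]
    simp [hp]
  have keyq : ∀ u, f.symm (SemidirectProduct.inl (Multiplicative.ofAdd u))
      = SemidirectProduct.inl (Multiplicative.ofAdd (q u)) := by
    intro u
    have h := hker' (SemidirectProduct.inl (Multiplicative.ofAdd u)) (SemidirectProduct.rightHom_inl _)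
    rw [← SemidirectProduct.inl_left_mul_inr_right (f.symm (SemidirectProduct.inl (Multiplicative.ofAdd u)))]
    have hr : (f.symm (SemidirectProduct.inl (Multiplicative.ofAdd u))).right = 1 := h
    rw [hr]
    simp [hq]
  have hinj : Function.Injective
      (SemidirectProduct.inl : Multiplicative (Fin k → ℤ) →* EPG eB) :=
    SemidirectProduct.inl_injective
  have hinjA : Function.Injective
      (SemidirectProduct.inl : Multiplicative (Fin k → ℤ) →* EPG eA) :=
    SemidirectProduct.inl_injective
  have hp_add : ∀ u v, p (u + v) = p u + p v := by
    intro u v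
    have h1 : f (SemidirectProduct.inl (Multiplicative.ofAdd (u + v)))
        = SemidirectProduct.inl (Multiplicative.ofAdd (p u + p v)) := by
      have : (Multiplicative.ofAdd (u + v)) = Multiplicative.ofAdd u * Multiplicative.ofAdd v := rfl
      rw [this, _root_.map_mul, _root_.map_mul, keyp, keyp, ← _root_.map_mul]
      rfl
    have h2 := (keyp (u + v)).symm.trans h1
    have := hinj h2
    exact ofAdd.injective this
  have hqp : ∀ u, q (p u) = u := by
    intro u
    have h1 := congrArg f.symm (keyp u)
    rw [MulEquiv.symm_apply_apply, keyq] at h1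
    exact (ofAdd.injective (hinjA h1)).symm
  have hpq : ∀ u, p (q u) = u := by
    intro u
    have h1 := congrArg f (keyq u)
    rw [MulEquiv.apply_symm_apply, keyp] at h1
    exact (ofAdd.injective (hinj h1)).symm
  -- the degree m
  set tA : EPG eA := SemidirectProduct.inr (Multiplicative.ofAdd 1) with htA
  set m : ℤ := Multiplicative.toAdd (SemidirectProduct.rightHom (f tA)) with hm
  -- rightHom (f (inr (ofAdd s))) = ofAdd (s * m)
  have hpow : ∀ s : ℤ, SemidirectProduct.rightHom (f (SemidirectProduct.inr (Multiplicative.ofAdd s)))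
      = Multiplicative.ofAdd (s * m) := by
    intro s
    have h1 : (SemidirectProduct.inr (Multiplicative.ofAdd s) : EPG eA) = tA ^ s := by
      rw [htA, ← map_zpow]
      congr 1
      rw [← ofAdd_zsmul]
      norm_num
    rw [h1, map_zpow, map_zpow, ← ofAdd_toAdd (SemidirectProduct.rightHom (f tA)), ← hm,
      ← ofAdd_zsmul, smul_eq_mul]
  have hm_unit : m = 1 ∨ m = -1 := by
    obtain ⟨g, hg⟩ := (SemidirectProduct.rightHom_surjective (φ := EPphi eB)).comp
      f.surjective (Multiplicative.ofAdd (1 : ℤ))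
    have hdec : g = SemidirectProduct.inl g.left * SemidirectProduct.inr g.right :=
      (SemidirectProduct.inl_left_mul_inr_right g).symm
    have h2 : SemidirectProduct.rightHom (f g) = Multiplicative.ofAdd ((Multiplicative.toAdd g.right) * m) := by
      conv_lhs => rw [hdec]
      rw [_root_.map_mul, _root_.map_mul,
        hker (SemidirectProduct.inl g.left) (SemidirectProduct.rightHom_inl _), one_mul,
        show SemidirectProduct.inr g.right = (SemidirectProduct.inr (Multiplicative.ofAdd (Multiplicative.toAdd g.right)) : EPG eA) by rw [ofAdd_toAdd],
        hpow]
    rw [Function.comp_apply] at hg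
    rw [hg] at h2
    have h3 : (Multiplicative.toAdd g.right) * m = 1 := ofAdd.injective h2.symm
    rcases Int.isUnit_iff.1 (IsUnit.of_mul_eq_one (a := m) _ (by linarith [h3] )) with h | h
    · exact Or.inl h
    · exact Or.inr h
  -- conjugation relation
  have hconj : ∀ u, Multiplicative.ofAdd (p (eA u))
      = (EPphi eB) (SemidirectProduct.rightHom (f tA)) (Multiplicative.ofAdd (p u)) := by
    intro u
    have h1 : (SemidirectProduct.inl (Multiplicative.ofAdd (eA u)) : EPG eA)
        = tA * SemidirectProduct.inl (Multiplicative.ofAdd u) * tA⁻¹ := by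
      have h2 : ((EPphi eA) (Multiplicative.ofAdd 1) (Multiplicative.ofAdd u))
          = Multiplicative.ofAdd (eA u) := by simp
      rw [← h2, SemidirectProduct.inl_aut, htA, _root_.map_inv]
    have h3 := congrArg f h1
    rw [keyp, _root_.map_mul, _root_.map_mul, map_inv, keyp] at h3
    -- decompose f tA
    set L := (f tA).left with hL
    set R := SemidirectProduct.rightHom (f tA) with hR
    have hfdec : f tA = SemidirectProduct.inl L * SemidirectProduct.inr R :=
      (SemidirectProduct.inl_left_mul_inr_right (f tA)).symm
    have hmid : (SemidirectProduct.inr R : EPG eB) * SemidirectProduct.inl (Multiplicative.ofAdd (p u)) * (SemidirectProduct.inr R)⁻¹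
        = SemidirectProduct.inl ((EPphi eB) R (Multiplicative.ofAdd (p u))) := by
      rw [← _root_.map_inv]
      exact (SemidirectProduct.inl_aut R _).symm
    have h4 : f tA * SemidirectProduct.inl (Multiplicative.ofAdd (p u)) * (f tA)⁻¹
        = SemidirectProduct.inl ((EPphi eB) R (Multiplicative.ofAdd (p u))) := by
      rw [hfdec, _root_.mul_inv_rev]
      have hre : (SemidirectProduct.inl L : EPG eB) * SemidirectProduct.inr R * SemidirectProduct.inl (Multiplicative.ofAdd (p u)) * ((SemidirectProduct.inr R)⁻¹ * (SemidirectProduct.inl L)⁻¹)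
          = SemidirectProduct.inl L * (SemidirectProduct.inr R * SemidirectProduct.inl (Multiplicative.ofAdd (p u)) * (SemidirectProduct.inr R)⁻¹) * (SemidirectProduct.inl L)⁻¹ := by
        group
      rw [hre, hmid, ← _root_.map_inv, ← _root_.map_mul, ← _root_.map_mul, mul_comm L, mul_assoc,
        mul_inv_cancel, mul_one]
    rw [h4] at h3
    rw [hR] at h3
    exact hinj h3
  have hRm : SemidirectProduct.rightHom (f tA) = Multiplicative.ofAdd m := by
    rw [hm, ofAdd_toAdd]
  -- additivity of q
  have hq_add : ∀ u v, q (u + v) = q u + q v := by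
    intro u v
    have h1 : f.symm (SemidirectProduct.inl (Multiplicative.ofAdd (u + v)))
        = SemidirectProduct.inl (Multiplicative.ofAdd (q u + q v)) := by
      have h0 : (Multiplicative.ofAdd (u + v)) = Multiplicative.ofAdd u * Multiplicative.ofAdd v := rfl
      rw [h0, _root_.map_mul, _root_.map_mul, keyq, keyq, ← _root_.map_mul]
      rfl
    have h2 := (keyq (u + v)).symm.trans h1
    exact ofAdd.injective (hinjA h2)
  -- matrices for p and q
  set plin : (Fin k → ℤ) →ₗ[ℤ] (Fin k → ℤ) :=
    (AddMonoidHom.mk' p hp_add).toIntLinearMap with hplin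
  set qlin : (Fin k → ℤ) →ₗ[ℤ] (Fin k → ℤ) :=
    (AddMonoidHom.mk' q hq_add).toIntLinearMap with hqlin
  set Pm := LinearMap.toMatrix' plin with hPmdef
  set Qm := LinearMap.toMatrix' qlin with hQmdef
  have hPmv : ∀ v, Pm.mulVec v = p v := by
    intro v
    rw [← Matrix.toLin'_apply, hPmdef, Matrix.toLin'_toMatrix']
    rfl
  have hQmv : ∀ v, Qm.mulVec v = q v := by
    intro v
    rw [← Matrix.toLin'_apply, hQmdef, Matrix.toLin'_toMatrix']
    rfl
  have hPQ : Pm * Qm = 1 := by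
    apply matrix_eq_of_mulVec
    intro v
    rw [← Matrix.mulVec_mulVec, hQmv, hPmv, hpq, Matrix.one_mulVec]
  -- pass to ℂ
  set F : Matrix (Fin k) (Fin k) ℤ →+* Matrix (Fin k) (Fin k) ℂ := (Int.castRingHom ℂ).mapMatrix with hF
  have hFapp : ∀ M : Matrix (Fin k) (Fin k) ℤ, F M = M.map (Int.cast : ℤ → ℂ) := by
    intro M
    rw [hF, RingHom.mapMatrix_apply]
    rfl
  have hPQ' : (F Pm) * (F Qm) = 1 := by rw [← _root_.map_mul, hPQ, _root_.map_one]
  have hA'det : IsUnit (A.map (Int.cast : ℤ → ℂ)).det := by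
    rw [← hFapp]
    have h3 := RingHom.map_det (Int.castRingHom ℂ) A
    rw [hA] at h3
    rw [hF, ← h3]
    simp
  rcases hm_unit with h1 | h1
  · -- m = 1 : P A = B P
    have hAB : ∀ u, p (eA u) = eB (p u) := by
      intro u
      have h2 := hconj u
      rw [hRm, h1] at h2
      have h3 : (EPphi eB) (Multiplicative.ofAdd (1 : ℤ)) (Multiplicative.ofAdd (p u))
          = Multiplicative.ofAdd (eB (p u)) := by simp
      rw [h3] at h2
      exact ofAdd.injective h2
    have hPA : Pm * A = B * Pm := by
      apply matrix_eq_of_mulVec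
      intro v
      rw [← Matrix.mulVec_mulVec, ← Matrix.mulVec_mulVec, hPmv, hPmv, ← heA v, hAB, heB]
    have hPA' : (F Pm) * (A.map (Int.cast : ℤ → ℂ)) = (B.map (Int.cast : ℤ → ℂ)) * (F Pm) := by
      rw [← hFapp, ← hFapp, ← _root_.map_mul, ← _root_.map_mul, hPA]
    exact hBdiag (Matrix.Diagonalizable.similar hPQ' hPA' hAdiag)
  · -- m = -1 : B (P A) = P
    have hAB : ∀ u, eB (p (eA u)) = p u := by
      intro u
      have h2 := hconj u
      rw [hRm, h1] at h2
      have h3 : (EPphi eB) (Multiplicative.ofAdd (-1 : ℤ)) (Multiplicative.ofAdd (p u))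
          = Multiplicative.ofAdd (eB.symm (p u)) := by
        show (AddEquiv.toMultiplicative eB ^ (-1 : ℤ)) (Multiplicative.ofAdd (p u)) = _
        rw [_root_.zpow_neg, zpow_one, MulAut.inv_def]
        rfl
      rw [h3] at h2
      have h4 := congrArg eB (ofAdd.injective h2)
      rw [AddEquiv.apply_symm_apply] at h4
      exact h4
    have hPA : B * (Pm * A) = Pm := by
      apply matrix_eq_of_mulVec
      intro v
      rw [← Matrix.mulVec_mulVec, ← Matrix.mulVec_mulVec, hPmv, hPmv, ← heA v, ← heB, hAB]
    have hPA' : (B.map (Int.cast : ℤ → ℂ)) * ((F Pm) * (A.map (Int.cast : ℤ → ℂ))) = F Pm := by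
      rw [← hFapp, ← hFapp, ← _root_.map_mul, ← _root_.map_mul, hPA]
    -- hence P * A'⁻¹ = B' * P
    set A' := A.map (Int.cast : ℤ → ℂ)
    set B' := B.map (Int.cast : ℤ → ℂ)
    have hPAinv : (F Pm) * A'⁻¹ = B' * (F Pm) := by
      conv_lhs => rw [← hPA']
      rw [mul_assoc, mul_assoc, Matrix.mul_nonsing_inv _ hA'det, mul_one]
    exact hBdiag (Matrix.Diagonalizable.similar hPQ' hPAinv (Matrix.Diagonalizable.inv hAdiag))
end

section
/- Let k ≥ 1 and A ∈ SL(k, ℤ) with det(A − I) ≠ 0. Then every surjective group homomorphism φ : S_A → ℤ vanishes on the normal subgroup ℤ^k, and there are exactly two surjective homomorphisms S_A → ℤ: if φ and ψ are both surjective homomorphisms S_A → ℤ, then ψ = φ or ψ = −φ. -/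
open Matrix

/-- The normal subgroup `ℤ^k` of `S_A`. -/
def SemidirectZ.N (k : ℕ) (e : AddAut (Fin k → ℤ)) : Subgroup (SemidirectZ k e) :=
  MonoidHom.range
    (SemidirectProduct.inl :
      Multiplicative (Fin k → ℤ) →* SemidirectProduct (Multiplicative (Fin k → ℤ))
        (Multiplicative ℤ)
        (zpowersHom (MulAut (Multiplicative (Fin k → ℤ))) (AddEquiv.toMultiplicative e)))

lemma vanish_aux (k : ℕ)
    (A : Matrix (Fin k) (Fin k) ℤ) (hA1 : (A - 1).det ≠ 0)
    (e : AddAut (Fin k → ℤ)) (he : ∀ v, e v = A.mulVec v)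
    (φ : SemidirectZ k e →* Multiplicative ℤ) :
    ∀ n, φ (SemidirectProduct.inl n) = 1 := by
  set f : (Fin k → ℤ) →+ ℤ := AddMonoidHom.mk'
    (fun v => Multiplicative.toAdd (φ (SemidirectProduct.inl (Multiplicative.ofAdd v))))
    (by intro a b; simp [ofAdd_add]; exact congrArg Multiplicative.toAdd (φ.map_mul _ _)) with hf
  have h1 : ∀ v, f (e v) = f v := by
    intro v
    have := SemidirectProduct.inl_aut (φ := (zpowersHom (MulAut (Multiplicative (Fin k → ℤ)))
      (AddEquiv.toMultiplicative e))) (Multiplicative.ofAdd (1:ℤ)) (Multiplicative.ofAdd v)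
    have h2 := congrArg φ this
    simp only [_root_.map_mul, map_inv] at h2
    have key : ∀ a b : SemidirectZ k e, φ (a * b * a⁻¹) = φ b := by
      intro a b
      rw [_root_.map_mul, _root_.map_mul, map_inv, mul_comm (φ a), mul_assoc, mul_inv_cancel, mul_one]
    have : Multiplicative.toAdd (φ (SemidirectProduct.inl
        ((zpowersHom (MulAut (Multiplicative (Fin k → ℤ)))
          (AddEquiv.toMultiplicative e)) (Multiplicative.ofAdd (1:ℤ)) (Multiplicative.ofAdd v))))
        = f v := by
      rw [h2]; simp [hf, mul_comm]; exact key (SemidirectProduct.inr (Multiplicative.ofAdd 1)) (SemidirectProduct.inl (Multiplicative.ofAdd v))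
    simpa [hf, zpowersHom_apply] using this
  have h2 : ∀ v, f ((A - 1).mulVec v) = 0 := by
    intro v
    have : (A - 1).mulVec v = A.mulVec v - v := by
      rw [Matrix.sub_mulVec, Matrix.one_mulVec]
    rw [this, map_sub, ← he, h1, sub_self]
  have h3 : ∀ w, f w = 0 := by
    intro w
    have h4 : (A - 1).mulVec ((A - 1).adjugate.mulVec w) = (A - 1).det • w := by
      rw [Matrix.mulVec_mulVec, Matrix.mul_adjugate, Matrix.smul_mulVec,
        Matrix.one_mulVec]
    have := h2 ((A - 1).adjugate.mulVec w)
    rw [h4, map_zsmul, smul_eq_mul] at this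
    rcases mul_eq_zero.1 this with h | h
    · exact absurd h hA1
    · exact h
  intro n
  have := h3 (Multiplicative.toAdd n)
  simpa [hf] using congrArg Multiplicative.ofAdd this

/-- **(Endo–Pajitnov)**  Let `A ∈ SL(k, ℤ)` with `det (A - I) ≠ 0`.  Then every surjective
group homomorphism `φ : S_A → ℤ` vanishes on the normal subgroup `ℤ^k`, and there are
exactly two surjective homomorphisms `S_A → ℤ`: any two of them agree or differ by a sign. -/
theorem surjective_hom_to_int
    (k : ℕ) (hk : 1 ≤ k)
    (A : Matrix (Fin k) (Fin k) ℤ) (hA : A.det = 1) (hA1 : (A - 1).det ≠ 0)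
    (e : AddAut (Fin k → ℤ)) (he : ∀ v, e v = A.mulVec v) :
    ∀ φ : SemidirectZ k e →* Multiplicative ℤ, Function.Surjective φ →
      (∀ x ∈ SemidirectZ.N k e, φ x = 1)
        ∧ ∀ ψ : SemidirectZ k e →* Multiplicative ℤ, Function.Surjective ψ →
            (ψ = φ ∨ ∀ g, ψ g = (φ g)⁻¹) := by
  -- decomposition lemma for any hom
  have decomp : ∀ χ : SemidirectZ k e →* Multiplicative ℤ, ∀ g : SemidirectZ k e,
      χ g = (χ (SemidirectProduct.inr (Multiplicative.ofAdd 1))) ^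
        (Multiplicative.toAdd g.right) := by
    intro χ g
    have hg : SemidirectProduct.inl g.left * SemidirectProduct.inr g.right = g :=
      SemidirectProduct.inl_left_mul_inr_right g
    have h1 : χ g = χ (SemidirectProduct.inr g.right) := by
      conv_lhs => rw [← hg]
      exact (χ.map_mul _ _).trans (by rw [vanish_aux k A hA1 e he χ, one_mul])
    have h2 : (SemidirectProduct.inr g.right : SemidirectZ k e) =
        (SemidirectProduct.inr (Multiplicative.ofAdd (1:ℤ))) ^ (Multiplicative.toAdd g.right) := by
      rw [← map_zpow]
      congr 1
      rw [← ofAdd_zsmul, smul_eq_mul, mul_one]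
      rfl
    rw [h1, h2]; exact map_zpow χ _ _
  -- a surjective hom has generator value ±1
  have gen : ∀ χ : SemidirectZ k e →* Multiplicative ℤ, Function.Surjective χ →
      Multiplicative.toAdd (χ (SemidirectProduct.inr (Multiplicative.ofAdd 1))) = 1 ∨
      Multiplicative.toAdd (χ (SemidirectProduct.inr (Multiplicative.ofAdd 1))) = -1 := by
    intro χ hχ
    obtain ⟨g, hg⟩ := hχ (Multiplicative.ofAdd 1)
    rw [decomp χ g] at hg
    have := congrArg Multiplicative.toAdd hg
    simp only [toAdd_zpow, toAdd_ofAdd, smul_eq_mul] at this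
    exact Int.isUnit_iff.1 (IsUnit.of_mul_eq_one _ (by rw [mul_comm]; exact this))
  intro φ hφ
  refine ⟨?_, ?_⟩
  · rintro x ⟨n, rfl⟩
    exact vanish_aux k A hA1 e he φ n
  · intro ψ hψ
    rcases gen φ hφ with hcφ | hcφ <;> rcases gen ψ hψ with hcψ | hcψ
    · left
      ext g
      rw [decomp φ g, decomp ψ g]
      congr 1
      rw [Multiplicative.toAdd.injective (hcψ.trans hcφ.symm)]
    · right
      intro g
      have hb : ψ (SemidirectProduct.inr (Multiplicative.ofAdd 1)) =
          (φ (SemidirectProduct.inr (Multiplicative.ofAdd 1)))⁻¹ :=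
        Multiplicative.toAdd.injective (by rw [toAdd_inv, hcψ, hcφ])
      rw [decomp φ g, decomp ψ g, hb, _root_.inv_zpow]
    · right
      intro g
      have hb : ψ (SemidirectProduct.inr (Multiplicative.ofAdd 1)) =
          (φ (SemidirectProduct.inr (Multiplicative.ofAdd 1)))⁻¹ :=
        Multiplicative.toAdd.injective (by rw [toAdd_inv, hcψ, hcφ]; norm_num)
      rw [decomp φ g, decomp ψ g, hb, _root_.inv_zpow]
    · left
      ext g
      rw [decomp φ g, decomp ψ g]
      congr 1
      rw [Multiplicative.toAdd.injective (hcψ.trans hcφ.symm)]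
end

section
/- Every H_M-invariant holomorphic function on ℍ × ℂⁿ is constant: if f : ℍ × ℂⁿ → ℂ is holomorphic and satisfies f(p + u_i) = f(p) for all p ∈ ℍ × ℂⁿ and all i ∈ {1, …, 2n+1}, then f is constant. -/
open Matrix Polynomial

noncomputable section
namespace InoueAux
open Module Submodule

variable {n : ℕ}

abbrev N (n : ℕ) := 2*n+1

-- the complex matrix endomorphism
abbrev phi (M : Matrix (Fin (2*n+1)) (Fin (2*n+1)) ℤ) : Module.End ℂ (Fin (2*n+1) → ℂ) :=
  Matrix.mulVecLin (M.map (Int.cast : ℤ → ℂ))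

-- conjugation commutes with phi
lemma conj_phi (M : Matrix (Fin (2*n+1)) (Fin (2*n+1)) ℤ) (v : Fin (2*n+1) → ℂ) :
    (fun i => starRingEnd ℂ ((phi M v) i)) = phi M (fun i => starRingEnd ℂ (v i)) := by
  funext i
  simp only [phi, Matrix.mulVecLin_apply, Matrix.mulVec, dotProduct, Matrix.map_apply]
  rw [map_sum]
  congr 1
  funext j
  rw [RingHom.map_mul]
  simp

lemma conj_pow_phi (M : Matrix (Fin (2*n+1)) (Fin (2*n+1)) ℤ) (μ : ℂ) (k : ℕ)
    (v : Fin (2*n+1) → ℂ) :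
    (fun i => starRingEnd ℂ ((((phi M - μ • 1) ^ k) v) i))
      = ((phi M - (starRingEnd ℂ μ) • 1) ^ k) (fun i => starRingEnd ℂ (v i)) := by
  induction k generalizing v with
  | zero => simp
  | succ k ih =>
    rw [pow_succ, pow_succ]
    have : ∀ w : Fin (2*n+1) → ℂ,
        (fun i => starRingEnd ℂ (((phi M - μ • 1) w) i))
          = (phi M - (starRingEnd ℂ μ) • 1) (fun i => starRingEnd ℂ (w i)) := by
      intro w
      funext i
      simp only [LinearMap.sub_apply, LinearMap.smul_apply, Module.End.one_apply, Pi.sub_apply,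
        Pi.smul_apply, smul_eq_mul, map_sub, RingHom.map_mul]
      have := congrFun (conj_phi M w) i
      rw [this]
    rw [Module.End.mul_apply, Module.End.mul_apply, ih ((phi M - μ • 1) v), this v]

lemma conj_mem_maxGen (M : Matrix (Fin (2*n+1)) (Fin (2*n+1)) ℤ) (μ : ℂ)
    (v : Fin (2*n+1) → ℂ) (hv : v ∈ (phi M).maxGenEigenspace μ) :
    (fun i => starRingEnd ℂ (v i)) ∈ (phi M).maxGenEigenspace (starRingEnd ℂ μ) := by
  rw [Module.End.mem_maxGenEigenspace] at hv ⊢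
  obtain ⟨k, hk⟩ := hv
  exact ⟨k, by rw [← conj_pow_phi, hk]; funext i; simp⟩


lemma charpoly_phi (M : Matrix (Fin (2*n+1)) (Fin (2*n+1)) ℤ) :
    LinearMap.charpoly (phi M : Module.End ℂ (Fin (2*n+1) → ℂ))
      = (M.map (Int.cast : ℤ → ℂ)).charpoly := by
  rw [← LinearMap.charpoly_toMatrix (phi M) (Pi.basisFun ℂ (Fin (2*n+1)))]
  congr 1
  rw [LinearMap.toMatrix_eq_toMatrix']
  show LinearMap.toMatrix' ((M.map (Int.cast : ℤ → ℂ)).mulVecLin) = _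
  rw [← Matrix.toLin'_apply' (M.map (Int.cast : ℤ → ℂ)), LinearMap.toMatrix'_toLin']

lemma span_top
    (M : Matrix (Fin (2*n+1)) (Fin (2*n+1)) ℤ)
    (α : ℝ) (β : Fin n → ℂ) (hβ : ∀ j, 0 < (β j).im)
    (hchar : (M.map (Int.cast : ℤ → ℂ)).charpoly
      = (X - C (α:ℂ)) * ∏ j, ((X - C (β j)) * (X - C (starRingEnd ℂ (β j)))))
    (a : Fin (2*n+1) → ℝ) (ha0 : a ≠ 0)
    (ha : (M.map (Int.cast : ℤ → ℝ)).mulVec a = α • a)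
    (b : Fin n → (Fin (2*n+1) → ℂ))
    (hbmem : ∀ j, b j ∈ ⨆ i, (phi M).maxGenEigenspace (β i))
    (hbind : LinearIndependent ℂ b)
    (hbspan : span ℂ (Set.range b) = ⨆ i, (phi M).maxGenEigenspace (β i)) :
    span ℂ ({fun i => ((a i : ℂ))} ∪ Set.range b
      ∪ Set.range (fun j => fun i => starRingEnd ℂ (b j i))) = ⊤ := by
  classical
  set A : Fin (2*n+1) → ℂ := fun i => ((a i : ℂ)) with hA
  set bb : Fin n → (Fin (2*n+1) → ℂ) := fun j => fun i => starRingEnd ℂ (b j i) with hbb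
  set φ : Module.End ℂ (Fin (2*n+1) → ℂ) := phi M with hφ
  set W : Submodule ℂ (Fin (2*n+1) → ℂ) := ⨆ j, φ.maxGenEigenspace (β j) with hW
  set Wb : Submodule ℂ (Fin (2*n+1) → ℂ) :=
    ⨆ j, φ.maxGenEigenspace (starRingEnd ℂ (β j)) with hWb
  -- A is an eigenvector for α
  have hAmem : A ∈ φ.maxGenEigenspace ((α:ℂ)) := by
    rw [Module.End.mem_maxGenEigenspace]
    refine ⟨1, ?_⟩
    rw [pow_one]
    funext i
    have h1 := congrFun ha i
    simp only [Matrix.mulVec, dotProduct, Pi.smul_apply, smul_eq_mul,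
      Matrix.map_apply] at h1
    simp only [LinearMap.sub_apply, LinearMap.smul_apply, Module.End.one_apply, Pi.sub_apply,
      Pi.smul_apply, smul_eq_mul, Pi.zero_apply, hφ, phi, Matrix.mulVecLin_apply,
      Matrix.mulVec, dotProduct, Matrix.map_apply, hA]
    rw [sub_eq_zero]
    push_cast
    exact_mod_cast congrArg (Complex.ofReal) h1
  -- conjugation swaps the generalized eigenspaces
  have hconjW : ∀ (μs : Fin n → ℂ) (v : Fin (2*n+1) → ℂ),
      v ∈ (⨆ j, φ.maxGenEigenspace (μs j)) →
      (fun i => starRingEnd ℂ (v i)) ∈ ⨆ j, φ.maxGenEigenspace (starRingEnd ℂ (μs j)) := by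
    intro μs v hv
    refine Submodule.iSup_induction' (fun j => φ.maxGenEigenspace (μs j))
      (motive := fun (x : Fin (2*n+1) → ℂ) _ => (fun i => starRingEnd ℂ (x i)) ∈
      ⨆ j, φ.maxGenEigenspace (starRingEnd ℂ (μs j))) ?_ ?_ ?_ hv
    · intro j x hx
      exact Submodule.mem_iSup_of_mem j (conj_mem_maxGen M _ x hx)
    · have h0 : (fun i => starRingEnd ℂ ((0 : Fin (2*n+1) → ℂ) i)) = 0 := by
        funext i; simp
      show (fun i => starRingEnd ℂ ((0 : Fin (2*n+1) → ℂ) i)) ∈ _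
      rw [h0]
      exact Submodule.zero_mem _
    · intro x y hx' hy' hx hy
      have hxy : (fun i => starRingEnd ℂ ((x+y) i)) =
          (fun i => starRingEnd ℂ (x i)) + (fun i => starRingEnd ℂ (y i)) := by
        funext i; simp
      show (fun i => starRingEnd ℂ ((x+y) i)) ∈ _
      rw [hxy]
      exact Submodule.add_mem _ hx hy
  -- span of the conjugates
  have hspanbb : span ℂ (Set.range bb) = Wb := by
    apply le_antisymm
    · rw [span_le]
      rintro - ⟨j, rfl⟩
      exact hconjW β (b j) (hbmem j)
    · intro v hv
      have h1 : (fun i => starRingEnd ℂ (v i)) ∈ W := by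
        have h2 := hconjW (fun j => starRingEnd ℂ (β j)) v hv
        simpa using h2
      rw [← hbspan] at h1
      have h2 : ∀ w ∈ span ℂ (Set.range b),
          (fun i => starRingEnd ℂ (w i)) ∈ span ℂ (Set.range bb) := by
        intro w hw
        refine Submodule.span_induction ?_ ?_ ?_ ?_ hw
        · rintro - ⟨j, rfl⟩
          exact subset_span ⟨j, rfl⟩
        · have h0 : (fun i => starRingEnd ℂ ((0 : Fin (2*n+1) → ℂ) i)) = 0 := by
            funext i; simp
          rw [h0]
          exact Submodule.zero_mem _
        · intro x y hx' hy' hx hy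
          have : (fun i => starRingEnd ℂ ((x+y) i)) =
              (fun i => starRingEnd ℂ (x i)) + (fun i => starRingEnd ℂ (y i)) := by
            funext i; simp
          rw [this]
          exact Submodule.add_mem _ hx hy
        · intro c x hx' hx
          have : (fun i => starRingEnd ℂ ((c • x) i)) =
              (starRingEnd ℂ c) • (fun i => starRingEnd ℂ (x i)) := by
            funext i; simp
          rw [this]
          exact Submodule.smul_mem _ _ hx
      have h3 := h2 _ h1
      have h4 : (fun i => starRingEnd ℂ (starRingEnd ℂ (v i))) = v := by
        funext i; simp
      rwa [h4] at h3
  -- conjugates are independent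
  have hbbind : LinearIndependent ℂ bb := by
    rw [Fintype.linearIndependent_iff] at hbind ⊢
    intro g hg j
    have h5 : ∑ k, (starRingEnd ℂ (g k)) • b k = 0 := by
      funext i
      have h6 := congrFun hg i
      simp only [Finset.sum_apply, Pi.smul_apply, smul_eq_mul, Pi.zero_apply, hbb] at h6
      have h7 := congrArg (starRingEnd ℂ) h6
      rw [map_sum] at h7
      simpa using h7
    have := hbind (fun k => starRingEnd ℂ (g k)) h5 j
    simpa using this
  have hA0 : A ≠ 0 := by
    intro h
    apply ha0
    funext i
    rw [Pi.zero_apply]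
    have h' := congrFun h i
    simp only [hA, Pi.zero_apply] at h'
    exact_mod_cast h'
  -- dimension bookkeeping
  have hfW : finrank ℂ W = n := by
    rw [← hbspan, finrank_span_eq_card hbind, Fintype.card_fin]
  have hfWb : finrank ℂ Wb = n := by
    rw [← hspanbb, finrank_span_eq_card hbbind, Fintype.card_fin]
  -- kernels of polynomials
  set K : ℕ := finrank ℂ (Fin (2*n+1) → ℂ) with hK
  have haev : ∀ μ : ℂ, aeval φ (X - C μ) = φ - μ • 1 := by
    intro μ
    rw [map_sub, aeval_X, aeval_C, Module.algebraMap_end_eq_smul_id]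
    rfl
  have hker : ∀ μ : ℂ, φ.maxGenEigenspace μ = LinearMap.ker (aeval φ ((X - C μ)^K)) := by
    intro μ
    rw [Module.End.maxGenEigenspace_eq_genEigenspace_finrank, ← hK]
    ext x
    rw [Module.End.mem_genEigenspace_nat, LinearMap.mem_ker, map_pow, haev]
    exact Iff.symm LinearMap.mem_ker
  have hdvd : ∀ p q : ℂ[X], p ∣ q →
      LinearMap.ker (aeval φ p) ≤ LinearMap.ker (aeval φ q) := by
    rintro p q ⟨r, rfl⟩
    intro x hx
    rw [LinearMap.mem_ker] at hx ⊢
    have h7 : aeval φ (p * r) = aeval φ r * aeval φ p := by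
      rw [mul_comm p r, _root_.map_mul]
    rw [h7, Module.End.mul_apply, hx, LinearMap.map_zero]
  have hcopr : ∀ p q : ℂ[X], IsCoprime p q →
      Disjoint (LinearMap.ker (aeval φ p)) (LinearMap.ker (aeval φ q)) := by
    rintro p q ⟨u, v, huv⟩
    rw [Submodule.disjoint_def]
    intro x hxp hxq
    rw [LinearMap.mem_ker] at hxp hxq
    have h8 : aeval φ (u*p+v*q) x = x := by
      rw [huv]; simp
    rw [map_add, _root_.map_mul, _root_.map_mul, LinearMap.add_apply, Module.End.mul_apply,
      Module.End.mul_apply, hxp, hxq, LinearMap.map_zero, LinearMap.map_zero, add_zero] at h8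
    exact h8.symm
  have hXsub : ∀ (c d : ℂ), c ≠ d → IsCoprime ((X - C c)^K) ((X - C d)^K) := by
    intro c d hcd
    exact (Polynomial.isCoprime_X_sub_C_of_isUnit_sub (by
      simpa [sub_eq_zero] using hcd : IsUnit (c - d))).pow
  set p0 : ℂ[X] := (X - C ((α:ℂ)))^K with hp0
  set P1 : ℂ[X] := ∏ j, (X - C (β j))^K with hP1
  set P2 : ℂ[X] := ∏ j, (X - C (starRingEnd ℂ (β j)))^K with hP2
  have hαβ : ∀ j, ((α:ℂ)) ≠ β j := by
    intro j h
    have := hβ j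
    rw [← h] at this
    simp at this
  have hαβb : ∀ j, ((α:ℂ)) ≠ starRingEnd ℂ (β j) := by
    intro j h
    have h9 := hβ j
    have h10 : ((α:ℂ)).im = (starRingEnd ℂ (β j)).im := by rw [h]
    simp only [Complex.ofReal_im, Complex.conj_im] at h10
    linarith
  have hββb : ∀ j k, β j ≠ starRingEnd ℂ (β k) := by
    intro j k h
    have h1 := hβ j
    have h2 := hβ k
    have h3 : (β j).im = (starRingEnd ℂ (β k)).im := by rw [h]
    simp only [Complex.conj_im] at h3
    linarith
  -- coprimality of the three blocks
  have hc01 : IsCoprime p0 P1 := IsCoprime.prod_right fun j _ => hXsub _ _ (hαβ j)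
  have hc02 : IsCoprime p0 P2 := IsCoprime.prod_right fun j _ => hXsub _ _ (hαβb j)
  have hc12 : IsCoprime P1 P2 := IsCoprime.prod_left fun j _ =>
    IsCoprime.prod_right fun k _ => hXsub _ _ (hββb j k)
  -- inclusions into kernels
  have hWker : W ≤ LinearMap.ker (aeval φ P1) := by
    rw [hW]
    apply iSup_le
    intro j
    rw [hker (β j)]
    exact hdvd _ _ (Finset.dvd_prod_of_mem _ (Finset.mem_univ j))
  have hWbker : Wb ≤ LinearMap.ker (aeval φ P2) := by
    rw [hWb]
    apply iSup_le
    intro j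
    rw [hker (starRingEnd ℂ (β j))]
    exact hdvd _ _ (Finset.dvd_prod_of_mem _ (Finset.mem_univ j))
  have hαker : φ.maxGenEigenspace ((α:ℂ)) ≤ LinearMap.ker (aeval φ p0) :=
    le_of_eq (hker _)
  -- disjointness
  have d2 : Disjoint W Wb := Disjoint.mono hWker hWbker (hcopr _ _ hc12)
  have d1 : Disjoint (φ.maxGenEigenspace ((α:ℂ))) (W ⊔ Wb) := by
    refine Disjoint.mono hαker ?_ (hcopr _ _ (hc01.mul_right hc02))
    apply sup_le
    · exact le_trans hWker (hdvd _ _ (dvd_mul_right P1 P2))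
    · exact le_trans hWbker (hdvd _ _ (dvd_mul_left P2 P1))
  -- the whole space decomposes
  have hdecomp : (⊤ : Submodule ℂ (Fin (2*n+1) → ℂ)) ≤
      φ.maxGenEigenspace ((α:ℂ)) ⊔ (W ⊔ Wb) := by
    rw [← Module.End.iSup_maxGenEigenspace_eq_top φ]
    apply iSup_le
    intro μ
    by_cases hμ : φ.maxGenEigenspace μ = ⊥
    · rw [hμ]; exact bot_le
    · have hev : φ.HasEigenvalue μ := by
        apply Module.End.hasEigenvalue_of_hasGenEigenvalue
          (k := Module.End.maxGenEigenspaceIndex φ μ)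
        rw [Module.End.hasGenEigenvalue_iff, ← Module.End.maxGenEigenspace_eq]
        exact hμ
      have hroot : ((M.map (Int.cast : ℤ → ℂ)).charpoly).IsRoot μ := by
        have h1 : (minpoly ℂ φ).IsRoot μ := Module.End.hasEigenvalue_iff_isRoot.mp hev
        have h2 : minpoly ℂ φ ∣ LinearMap.charpoly φ := LinearMap.minpoly_dvd_charpoly φ
        rw [charpoly_phi M] at h2
        exact h1.dvd h2
      rw [hchar] at hroot
      simp only [IsRoot.def, eval_mul, eval_sub, eval_X, eval_C, eval_prod,
        mul_eq_zero, Finset.prod_eq_zero_iff, sub_eq_zero] at hroot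
      rcases hroot with h | ⟨j, -, h | h⟩
      · rw [h]
        exact le_sup_left
      · rw [h]
        exact le_trans (le_iSup (fun j => φ.maxGenEigenspace (β j)) j)
          (le_trans le_sup_left le_sup_right)
      · rw [h]
        exact le_trans (le_iSup (fun j => φ.maxGenEigenspace (starRingEnd ℂ (β j))) j)
          (le_trans le_sup_right le_sup_right)
  have htop : φ.maxGenEigenspace ((α:ℂ)) ⊔ (W ⊔ Wb) = ⊤ := le_antisymm le_top hdecomp
  -- dimension count
  have hfin : finrank ℂ (Fin (2*n+1) → ℂ) = 2*n+1 := by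
    rw [Module.finrank_pi]
    simp
  have hfsup : finrank ℂ ↥(W ⊔ Wb) = 2*n := by
    have h1 := Submodule.finrank_sup_add_finrank_inf_eq W Wb
    rw [d2.eq_bot, hfW, hfWb, finrank_bot, add_zero] at h1
    omega
  have hfα : finrank ℂ ↥(φ.maxGenEigenspace ((α:ℂ))) = 1 := by
    have h1 := Submodule.finrank_sup_add_finrank_inf_eq
      (φ.maxGenEigenspace ((α:ℂ))) (W ⊔ Wb)
    rw [d1.eq_bot, htop, finrank_bot, add_zero, finrank_top, hfin, hfsup] at h1
    omega
  have hspanα : span ℂ {A} = φ.maxGenEigenspace ((α:ℂ)) := by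
    apply Submodule.eq_of_le_of_finrank_le
    · rw [Submodule.span_singleton_le_iff_mem]
      exact hAmem
    · rw [hfα, finrank_span_singleton hA0]
  -- conclusion
  rw [eq_top_iff]
  refine le_trans hdecomp (sup_le ?_ (sup_le ?_ ?_))
  · rw [← hspanα]
    apply Submodule.span_mono
    intro x hx
    rcases hx with rfl
    · left; left; rfl
  · rw [← hbspan]
    apply Submodule.span_mono
    intro x hx
    left; right; exact hx
  · rw [← hspanbb]
    apply Submodule.span_mono
    intro x hx
    right; exact hx

-- the real-linear parametrization of the translation lattice
def Lmap (n : ℕ) (a : Fin (2*n+1) → ℝ) (b : Fin n → (Fin (2*n+1) → ℂ)) :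
    (Fin (2*n+1) → ℝ) →ₗ[ℝ] ℂ × (Fin n → ℂ) :=
  Fintype.linearCombination ℝ (inoueU n a b)

lemma Lmap_apply (a : Fin (2*n+1) → ℝ) (b : Fin n → (Fin (2*n+1) → ℂ)) (x : Fin (2*n+1) → ℝ) :
    Lmap n a b x = ∑ i, x i • inoueU n a b i := by
  simp [Lmap, Fintype.linearCombination_apply]

lemma Lmap_fst (a : Fin (2*n+1) → ℝ) (b : Fin n → (Fin (2*n+1) → ℂ)) (x : Fin (2*n+1) → ℝ) :
    (Lmap n a b x).1 = ((∑ i, x i * a i : ℝ) : ℂ) := by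
  rw [Lmap_apply, Prod.fst_sum]
  push_cast
  exact Finset.sum_congr rfl fun i _ => by simp [inoueU, Complex.real_smul]

lemma Lmap_snd (a : Fin (2*n+1) → ℝ) (b : Fin n → (Fin (2*n+1) → ℂ)) (x : Fin (2*n+1) → ℝ)
    (j : Fin n) : (Lmap n a b x).2 j = ∑ i, ((x i : ℂ)) * b j i := by
  rw [Lmap_apply, Prod.snd_sum]
  rw [Finset.sum_apply]
  exact Finset.sum_congr rfl fun i _ => by simp [inoueU, Complex.real_smul]

lemma Lmap_inj (a : Fin (2*n+1) → ℝ) (b : Fin n → (Fin (2*n+1) → ℂ))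
    (hspan : span ℂ ({fun i => ((a i : ℂ))} ∪ Set.range b
      ∪ Set.range (fun j => fun i => starRingEnd ℂ (b j i))) = ⊤) :
    Function.Injective (Lmap n a b) := by
  rw [← LinearMap.ker_eq_bot]
  rw [Submodule.eq_bot_iff]
  intro x hx
  rw [LinearMap.mem_ker] at hx
  set Φ : (Fin (2*n+1) → ℂ) →ₗ[ℂ] ℂ :=
    Fintype.linearCombination ℂ (fun i => ((x i : ℂ))) with hΦ
  have hΦapp : ∀ v : Fin (2*n+1) → ℂ, Φ v = ∑ i, v i * ((x i : ℂ)) := by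
    intro v
    simp [hΦ, Fintype.linearCombination_apply, mul_comm]
  have hkerΦ : ∀ v : Fin (2*n+1) → ℂ, v ∈ ({fun i => ((a i : ℂ))} ∪ Set.range b
      ∪ Set.range (fun j => fun i => starRingEnd ℂ (b j i)) : Set (Fin (2*n+1) → ℂ)) →
      Φ v = 0 := by
    rintro v (h | ⟨j, rfl⟩)
    · rcases h with rfl | ⟨j, rfl⟩
      · rw [hΦapp]
        have h1 : (Lmap n a b x).1 = 0 := by rw [hx]; rfl
        rw [Lmap_fst] at h1
        push_cast at h1 ⊢
        rw [← h1]
        congr 1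
        funext i
        ring
      · rw [hΦapp]
        have h1 : (Lmap n a b x).2 j = 0 := by rw [hx]; rfl
        rw [Lmap_snd] at h1
        rw [← h1]
        congr 1
        funext i
        ring
    · rw [hΦapp]
      have h1 : (Lmap n a b x).2 j = 0 := by rw [hx]; rfl
      rw [Lmap_snd] at h1
      have h2 := congrArg (starRingEnd ℂ) h1
      rw [map_sum, map_zero] at h2
      rw [← h2]
      congr 1
      funext i
      rw [RingHom.map_mul]
      simp [mul_comm]
  have hΦ0 : ∀ v, Φ v = 0 := by
    intro v
    have hv : v ∈ (⊤ : Submodule ℂ (Fin (2*n+1) → ℂ)) := trivial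
    rw [← hspan] at hv
    refine Submodule.span_induction ?_ ?_ ?_ ?_ hv
    · intro w hw; exact hkerΦ w hw
    · exact map_zero Φ
    · intro w₁ w₂ h1' h2' h1 h2
      rw [map_add, h1, h2, add_zero]
    · intro c w hw' hw
      rw [LinearMap.map_smul, hw, smul_zero]
  funext i
  have h3 := hΦ0 (Pi.single i 1)
  rw [hΦapp] at h3
  rw [Finset.sum_eq_single i] at h3
  · simp only [Pi.single_eq_same, one_mul] at h3
    exact_mod_cast h3
  · intro k _ hk
    simp [Pi.single_eq_of_ne hk]
  · intro h
    exact absurd (Finset.mem_univ i) h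

lemma Lmap_range (a : Fin (2*n+1) → ℝ) (b : Fin n → (Fin (2*n+1) → ℂ))
    (hinj : Function.Injective (Lmap n a b)) (p : ℂ × (Fin n → ℂ)) (hp : p.1.im = 0) :
    ∃ x, Lmap n a b x = p := by
  classical
  set ψ : (ℂ × (Fin n → ℂ)) →ₗ[ℝ] ℝ :=
    Complex.imLm.comp (LinearMap.fst ℝ ℂ (Fin n → ℂ)) with hψ
  have hψsurj : LinearMap.range ψ = ⊤ := by
    rw [LinearMap.range_eq_top]
    intro r
    exact ⟨(r • Complex.I, 0), by simp [hψ]⟩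
  have hEfin : finrank ℝ (ℂ × (Fin n → ℂ)) = 2*n+2 := by
    rw [Module.finrank_prod, Complex.finrank_real_complex, Module.finrank_pi_fintype]
    simp [Complex.finrank_real_complex]
    ring
  have hkerψ : finrank ℝ (LinearMap.ker ψ) = 2*n+1 := by
    have h1 := LinearMap.finrank_range_add_finrank_ker ψ
    rw [hψsurj, hEfin] at h1
    simp only [finrank_top] at h1
    have : finrank ℝ ℝ = 1 := Module.finrank_self ℝ
    omega
  have hrange : finrank ℝ (LinearMap.range (Lmap n a b)) = 2*n+1 := by
    rw [LinearMap.finrank_range_of_inj hinj, Module.finrank_pi]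
    simp
  have hle : LinearMap.range (Lmap n a b) ≤ LinearMap.ker ψ := by
    rintro - ⟨x, rfl⟩
    rw [LinearMap.mem_ker]
    simp only [hψ, LinearMap.comp_apply, LinearMap.fst_apply]
    rw [show Complex.imLm (Lmap n a b x).1 = (Lmap n a b x).1.im from rfl, Lmap_fst]
    simp
  have heq : LinearMap.range (Lmap n a b) = LinearMap.ker ψ := by
    apply Submodule.eq_of_le_of_finrank_le hle
    rw [hrange, hkerψ]
  have hpmem : p ∈ LinearMap.ker ψ := by
    rw [LinearMap.mem_ker]
    simpa [hψ] using hp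
  rw [← heq] at hpmem
  exact hpmem

lemma invariance_closure (a : Fin (2*n+1) → ℝ) (b : Fin n → (Fin (2*n+1) → ℂ))
    (f : ℂ × (Fin n → ℂ) → ℂ)
    (hinv : ∀ p ∈ {p : ℂ × (Fin n → ℂ) | 0 < p.1.im}, ∀ i : Fin (2*n+1),
      f (p + inoueU n a b i) = f p) :
    ∀ v ∈ AddSubgroup.closure (Set.range (inoueU n a b)),
      v.1.im = 0 ∧ ∀ p ∈ {p : ℂ × (Fin n → ℂ) | 0 < p.1.im}, f (p + v) = f p := by
  intro v hv
  refine AddSubgroup.closure_induction ?_ ?_ ?_ ?_ hv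
  · rintro - ⟨i, rfl⟩
    constructor
    · simp [inoueU]
    · intro p hp
      exact hinv p hp i
  · constructor
    · simp
    · intro p hp
      rw [add_zero]
  · rintro v w hv' hw' ⟨hv1, hv2⟩ ⟨hw1, hw2⟩
    constructor
    · simp only [Prod.fst_add, Complex.add_im, hv1, hw1, add_zero]
    · intro p hp
      have hpv : (p + v) ∈ {p : ℂ × (Fin n → ℂ) | 0 < p.1.im} := by
        simp only [Set.mem_setOf_eq, Prod.fst_add, Complex.add_im, hv1, add_zero]
        exact hp
      rw [← add_assoc]
      rw [hw2 (p + v) hpv, hv2 p hp]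
  · rintro v hv' ⟨hv1, hv2⟩
    constructor
    · simp only [Prod.fst_neg, Complex.neg_im, hv1, neg_zero]
    · intro p hp
      have hpv : (p + -v) ∈ {p : ℂ × (Fin n → ℂ) | 0 < p.1.im} := by
        simp only [Set.mem_setOf_eq, Prod.fst_add, Prod.fst_neg, Complex.add_im,
          Complex.neg_im, hv1, neg_zero, add_zero]
        exact hp
      have := hv2 (p + -v) hpv
      rw [add_assoc, neg_add_cancel, add_zero] at this
      rw [this]

lemma z_const (a : Fin (2*n+1) → ℝ) (b : Fin n → (Fin (2*n+1) → ℂ))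
    (hinj : Function.Injective (Lmap n a b))
    (f : ℂ × (Fin n → ℂ) → ℂ)
    (hf : DifferentiableOn ℂ f {p : ℂ × (Fin n → ℂ) | 0 < p.1.im})
    (hG : ∀ v ∈ AddSubgroup.closure (Set.range (inoueU n a b)),
      v.1.im = 0 ∧ ∀ p ∈ {p : ℂ × (Fin n → ℂ) | 0 < p.1.im}, f (p + v) = f p)
    (w : ℂ) (hw : 0 < w.im) (z : Fin n → ℂ) : f (w, z) = f (w, 0) := by
  classical
  have hD : IsOpen {p : ℂ × (Fin n → ℂ) | 0 < p.1.im} :=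
    isOpen_lt continuous_const (Complex.continuous_im.comp continuous_fst)
  set T : (Fin (2*n+1) → ℝ) → ℂ × (Fin n → ℂ) :=
    fun t => ((Lmap n a b t).1 + (w.im : ℂ) * Complex.I, (Lmap n a b t).2) with hT
  have hTcont : Continuous T := by
    have h1 : Continuous (Lmap n a b) := (Lmap n a b).continuous_of_finiteDimensional
    exact ((continuous_fst.comp h1).add continuous_const).prodMk (continuous_snd.comp h1)
  have hKcomp : IsCompact (T '' (Set.Icc 0 1)) := isCompact_Icc.image hTcont
  have hKsub : T '' (Set.Icc 0 1) ⊆ {p : ℂ × (Fin n → ℂ) | 0 < p.1.im} := by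
    rintro - ⟨t, -, rfl⟩
    simp only [Set.mem_setOf_eq, hT, Complex.add_im, Complex.mul_im, Complex.I_im,
      Complex.I_re, Complex.ofReal_re, Complex.ofReal_im]
    rw [Lmap_fst]
    simpa using hw
  have hbdd : Bornology.IsBounded (f '' (T '' (Set.Icc 0 1))) :=
    (hKcomp.image_of_continuousOn (hf.continuousOn.mono hKsub)).isBounded
  have hdiff : Differentiable ℂ (fun z : Fin n → ℂ => f (w, z)) := by
    intro z'
    have h1 : DifferentiableAt ℂ f (w, z') :=
      hf.differentiableAt (hD.mem_nhds (by exact hw))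
    exact h1.comp z' ((differentiableAt_const w).prodMk differentiableAt_id)
  have hsub : Set.range (fun z : Fin n → ℂ => f (w, z)) ⊆ f '' (T '' (Set.Icc 0 1)) := by
    rintro - ⟨z', rfl⟩
    obtain ⟨x, hx⟩ := Lmap_range a b hinj ((w.re : ℂ), z') (by simp)
    set m : Fin (2*n+1) → ℝ := fun i => ((⌊x i⌋ : ℤ) : ℝ) with hm
    have hγ : Lmap n a b m ∈ AddSubgroup.closure (Set.range (inoueU n a b)) := by
      rw [Lmap_apply]
      apply AddSubgroup.sum_mem
      intro i _
      have h2 : m i • inoueU n a b i = (⌊x i⌋ : ℤ) • inoueU n a b i := by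
        rw [hm]
        rw [Int.cast_smul_eq_zsmul]
      rw [h2]
      exact AddSubgroup.zsmul_mem _ (AddSubgroup.subset_closure (Set.mem_range_self i)) _
    obtain ⟨him, hfeq⟩ := hG _ (AddSubgroup.neg_mem _ hγ)
    have h3 : f (w, z') = f ((w, z') + -(Lmap n a b m)) :=
      (hfeq (w, z') (by exact hw)).symm
    have h4 : (w, z') + -(Lmap n a b m) = T (x - m) := by
      have h5 : Lmap n a b (x - m) = Lmap n a b x - Lmap n a b m := map_sub _ _ _
      apply Prod.ext
      · show w + -(Lmap n a b m).1 = (Lmap n a b (x - m)).1 + (w.im : ℂ) * Complex.I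
        rw [h5]
        have h6 : (Lmap n a b x).1 = (w.re : ℂ) := by rw [hx]
        show w + -(Lmap n a b m).1
          = ((Lmap n a b x) - Lmap n a b m).1 + (w.im : ℂ) * Complex.I
        rw [Prod.fst_sub, h6]
        conv_lhs => rw [← Complex.re_add_im w]
        ring
      · show z' + -(Lmap n a b m).2 = (Lmap n a b (x - m)).2
        rw [h5]
        have h6 : (Lmap n a b x).2 = z' := by rw [hx]
        show z' + -(Lmap n a b m).2 = ((Lmap n a b x) - Lmap n a b m).2
        rw [Prod.snd_sub, h6]
        funext j
        simp [sub_eq_add_neg]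
      
    show f (w, z') ∈ f '' (T '' Set.Icc 0 1)
    rw [h3, h4]
    apply Set.mem_image_of_mem
    apply Set.mem_image_of_mem
    rw [Set.mem_Icc]
    constructor
    · intro i
      simp only [Pi.le_def, Pi.zero_apply, Pi.sub_apply, hm]
      exact sub_nonneg.2 (Int.floor_le (x i))
    · intro i
      simp only [Pi.le_def, Pi.one_apply, Pi.sub_apply, hm]
      have := Int.fract_lt_one (x i)
      rw [Int.fract] at this
      linarith
  have hb2 : Bornology.IsBounded (Set.range (fun z : Fin n → ℂ => f (w, z))) :=
    hbdd.subset hsub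
  exact hdiff.apply_eq_apply_of_bounded hb2 z 0

lemma dense_aux (α : ℝ) (hαirr : Irrational α)
    (M : Matrix (Fin (2*n+1)) (Fin (2*n+1)) ℤ)
    (a : Fin (2*n+1) → ℝ) (ha0 : a ≠ 0)
    (ha : (M.map (Int.cast : ℤ → ℝ)).mulVec a = α • a) :
    Dense ((AddSubgroup.closure (Set.range a) : Set ℝ)) := by
  rcases AddSubgroup.dense_or_cyclic (AddSubgroup.closure (Set.range a)) with h | ⟨a0, h⟩
  · exact h
  · exfalso
    have hmem : ∀ i, ∃ m : ℤ, m • a0 = a i := by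
      intro i
      have : a i ∈ AddSubgroup.closure (Set.range a) := AddSubgroup.subset_closure ⟨i, rfl⟩
      rw [h, AddSubgroup.mem_closure_singleton] at this
      exact this
    choose m hmm using hmem
    have ha00 : a0 ≠ 0 := by
      intro h0
      apply ha0
      funext i
      rw [← hmm i, h0, smul_zero, Pi.zero_apply]
    obtain ⟨i0, hi0⟩ : ∃ i, a i ≠ 0 := by
      by_contra h0
      push_neg at h0
      exact ha0 (funext h0)
    have hm0 : m i0 ≠ 0 := by
      intro h0
      apply hi0
      rw [← hmm i0, h0, zero_smul]
    -- α * a i0 is an integer combination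
    have hrel : α * a i0 = ∑ j, (M i0 j : ℝ) * a j := by
      have := congrFun ha i0
      simp only [Matrix.mulVec, dotProduct, Matrix.map_apply, Pi.smul_apply,
        smul_eq_mul] at this
      rw [this]
    have hint : α * ((m i0 : ℝ) * a0) = ((∑ j, M i0 j * m j : ℤ) : ℝ) * a0 := by
      rw [show ((m i0 : ℝ)) * a0 = a i0 by rw [← hmm i0]; simp [zsmul_eq_mul], hrel]
      push_cast
      rw [Finset.sum_mul]
      congr 1
      funext j
      rw [← hmm j]
      simp [zsmul_eq_mul]
      ring
    have hval : α * (m i0 : ℝ) = ((∑ j, M i0 j * m j : ℤ) : ℝ) := by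
      have h2 : (α * (m i0 : ℝ)) * a0 = (((∑ j, M i0 j * m j : ℤ) : ℝ)) * a0 := by
        rw [← hint]; ring
      exact mul_right_cancel₀ ha00 h2
    have hmR : ((m i0 : ℝ)) ≠ 0 := by exact_mod_cast hm0
    apply hαirr
    refine ⟨((∑ j, M i0 j * m j : ℤ) : ℚ) / ((m i0 : ℤ) : ℚ), ?_⟩
    push_cast
    push_cast at hval
    rw [div_eq_iff hmR, ← hval]

end InoueAux

end

/-- **Proposition (Endo–Pajitnov)**.  Every `H_M`-invariant holomorphic function on
`ℍ × ℂⁿ` is constant: if `f` is holomorphic on `ℍ × ℂⁿ` and `f(p + uᵢ) = f(p)` for every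
`p ∈ ℍ × ℂⁿ` and every `i`, then `f` is constant on `ℍ × ℂⁿ`. -/
theorem inoue_invariant_holomorphic_constant
    (n : ℕ) (hn : 1 ≤ n)
    (M : Matrix (Fin (2*n+1)) (Fin (2*n+1)) ℤ) (hdet : M.det = 1)
    (α : ℝ) (hα0 : 0 < α) (hα1 : α ≠ 1) (hαirr : Irrational α)
    (β : Fin n → ℂ) (hβ : ∀ j, 0 < (β j).im)
    (hchar : (M.map (Int.cast : ℤ → ℂ)).charpoly
      = (X - C (α : ℂ)) * ∏ j, ((X - C (β j)) * (X - C (starRingEnd ℂ (β j)))))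
    (a : Fin (2*n+1) → ℝ) (ha0 : a ≠ 0)
    (ha : (M.map (Int.cast : ℤ → ℝ)).mulVec a = α • a)
    (b : Fin n → (Fin (2*n+1) → ℂ))
    (hbmem : ∀ j, b j ∈ ⨆ i, Module.End.maxGenEigenspace
        (Matrix.mulVecLin (M.map (Int.cast : ℤ → ℂ))) (β i))
    (hbind : LinearIndependent ℂ b)
    (hbspan : Submodule.span ℂ (Set.range b)
      = ⨆ i, Module.End.maxGenEigenspace
        (Matrix.mulVecLin (M.map (Int.cast : ℤ → ℂ))) (β i))
    (f : ℂ × (Fin n → ℂ) → ℂ)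
    (hf : DifferentiableOn ℂ f {p : ℂ × (Fin n → ℂ) | 0 < p.1.im})
    (hinv : ∀ p ∈ {p : ℂ × (Fin n → ℂ) | 0 < p.1.im}, ∀ i : Fin (2*n+1),
      f (p + inoueU n a b i) = f p) :
    ∀ p ∈ {p : ℂ × (Fin n → ℂ) | 0 < p.1.im},
      ∀ q ∈ {p : ℂ × (Fin n → ℂ) | 0 < p.1.im}, f p = f q := by
  intro p hp q hq
  have hspan := InoueAux.span_top M α β hβ hchar a ha0 ha b hbmem hbind hbspan
  have hinj := InoueAux.Lmap_inj a b hspan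
  have hG := InoueAux.invariance_closure a b f hinv
  have hz : ∀ w : ℂ, 0 < w.im → ∀ z, f (w, z) = f (w, 0) :=
    fun w hw z => InoueAux.z_const a b hinj f hf hG w hw z
  set g : ℂ → ℂ := fun w => f (w, 0) with hg
  have hopen : IsOpen {w : ℂ | 0 < w.im} := isOpen_lt continuous_const Complex.continuous_im
  have hDopen : IsOpen {p : ℂ × (Fin n → ℂ) | 0 < p.1.im} :=
    isOpen_lt continuous_const (Complex.continuous_im.comp continuous_fst)
  have hgd : DifferentiableOn ℂ g {w : ℂ | 0 < w.im} := by
    intro w hw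
    have h1 : DifferentiableAt ℂ f (w, (0 : Fin n → ℂ)) :=
      hf.differentiableAt (hDopen.mem_nhds hw)
    exact (h1.comp w (differentiableAt_id.prodMk (differentiableAt_const _))).differentiableWithinAt
  have hgen : ∀ s ∈ AddSubgroup.closure (Set.range a),
      ∀ w : ℂ, 0 < w.im → g (w + (s : ℂ)) = g w := by
    intro s hs
    refine AddSubgroup.closure_induction ?_ ?_ ?_ ?_ hs
    · rintro - ⟨i, rfl⟩ w hw
      have him : 0 < (w + ((a i : ℝ) : ℂ)).im := by simpa using hw
      calc g (w + ((a i : ℝ) : ℂ)) = f (w + ((a i : ℝ) : ℂ), 0) := rfl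
        _ = f (w + ((a i : ℝ) : ℂ), fun j => b j i) := (hz _ him (fun j => b j i)).symm
        _ = f ((w, 0) + inoueU n a b i) := by
            congr 1
            apply Prod.ext
            · rfl
            · funext j
              show b j i = 0 + b j i
              rw [zero_add]
        _ = f (w, 0) := hinv (w, 0) (by exact hw) i
        _ = g w := rfl
    · intro w hw
      norm_num
    · intro s t hs' ht' ihs iht w hw
      have him : 0 < (w + (s : ℂ)).im := by simpa using hw
      have h1 : ((s + t : ℝ) : ℂ) = (s : ℂ) + (t : ℂ) := by push_cast; ring
      rw [h1, ← add_assoc, iht (w + (s:ℂ)) him, ihs w hw]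
    · intro s hs' ihs w hw
      have him : 0 < (w + ((-s : ℝ) : ℂ)).im := by simpa using hw
      have h1 := ihs (w + ((-s : ℝ) : ℂ)) him
      have h2 : w + ((-s : ℝ) : ℂ) + (s : ℂ) = w := by push_cast; ring
      rw [h2] at h1
      rw [← h1]
  have hdense := InoueAux.dense_aux α hαirr M a ha0 ha
  have htrans : ∀ (w : ℂ), 0 < w.im → ∀ t : ℝ, g (w + (t : ℂ)) = g w := by
    intro w hw
    have hgc : ContinuousOn g {w : ℂ | 0 < w.im} := hgd.continuousOn
    have hFc : Continuous (fun t : ℝ => g (w + (t : ℂ))) := by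
      apply hgc.comp_continuous
      · exact continuous_const.add Complex.continuous_ofReal
      · intro t
        show 0 < (w + (t:ℂ)).im
        simpa using hw
    have heq : (fun t : ℝ => g (w + (t:ℂ))) = fun _ => g w := by
      apply Continuous.ext_on hdense hFc continuous_const
      intro s hs
      exact hgen s hs w hw
    intro t
    exact congrFun heq t
  have hfd0 : ∀ w ∈ {w : ℂ | 0 < w.im}, fderivWithin ℂ g {w : ℂ | 0 < w.im} w = 0 := by
    intro w hw
    have hdw : DifferentiableAt ℂ g w := (hgd w hw).differentiableAt (hopen.mem_nhds hw)
    have hder := hdw.hasDerivAt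
    have hofreal : HasDerivAt (fun t : ℝ => w + (t : ℂ)) (Complex.ofRealCLM 1) 0 :=
      (Complex.ofRealCLM.hasDerivAt).const_add w
    have h1 : HasDerivAt g (deriv g w) ((fun t : ℝ => w + (t:ℂ)) 0) := by
      simpa using hder
    have hcomp := HasDerivAt.scomp (𝕜 := ℝ) (0:ℝ) h1 hofreal
    have hconst2 : (g ∘ fun t : ℝ => w + (t:ℂ)) = fun _ => g w :=
      funext fun t => htrans w hw t
    rw [hconst2] at hcomp
    have h3 : (Complex.ofRealCLM 1 : ℂ) • deriv g w = 0 :=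
      hcomp.unique (hasDerivAt_const 0 (g w))
    have hder0 : deriv g w = 0 := by simpa using h3
    rw [fderivWithin_of_isOpen hopen hw]
    have h4 : HasDerivAt g 0 w := hder0 ▸ hder
    have h5 := hasDerivAt_iff_hasFDerivAt.mp h4
    have h6 : ContinuousLinearMap.toSpanSingleton ℂ (0 : ℂ) = 0 := by
      ext x
      simp
    rw [h6] at h5
    exact h5.fderiv
  have hkey : g p.1 = g q.1 := by
    refine (convex_halfSpace_im_gt (0:ℝ)).is_const_of_fderivWithin_eq_zero hgd hfd0 hp hq
  have h1 : f p = g p.1 := by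
    conv_lhs => rw [← Prod.mk.eta (p := p)]
    exact hz p.1 hp p.2
  have h2 : f q = g q.1 := by
    conv_lhs => rw [← Prod.mk.eta (p := q)]
    exact hz q.1 hq q.2
  rw [h1, h2, hkey]
end
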